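/- arXiv:1710.09493 — 7 statements merged into one kernel-verified Lean document; each statement's English description precedes it below -/
import Mathlib

section
/- Let 2 ≤ k ≤ m and n ≥ m be integers, and let F : Fin n → Set ℝ be a family of n nonempty closed bounded intervals in ℝ such that for every m-element subset M of the indices there exist k indices in M whose intervals have a common point. Then there exists a point x ∈ ℝ such that the number of indices i with x ∈ F i is at least ((k-1)/(m-1)) · n. -/
open Finset

open scoped Classical

lemma exists_not_mem_finset (s : Finset ℕ) : ∃ x, x ∉ s := by
  refine ⟨s.sup id + 1, fun h => ?_⟩
  have := Finset.le_sup (f := id) h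
  simp only [id_eq] at this
  omega

/-- smallest natural number not in `s` -/
noncomputable def mexF (s : Finset ℕ) : ℕ := Nat.find (exists_not_mem_finset s)

lemma mexF_not_mem (s : Finset ℕ) : mexF s ∉ s := Nat.find_spec (exists_not_mem_finset s)

lemma mexF_le_card (s : Finset ℕ) : mexF s ≤ s.card := by
  by_contra h
  push_neg at h
  have hsub : Finset.range (s.card + 1) ⊆ s := by
    intro x hx
    rw [Finset.mem_range] at hx
    by_contra hxs
    have := Nat.find_min' (exists_not_mem_finset s) hxs
    change mexF s ≤ x at this
    omega
  have := Finset.card_le_card hsub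
  simp at this

/-- greedy coloring of `ℕ` along relation `P` -/
noncomputable def greedy (P : ℕ → ℕ → Prop) : ℕ → ℕ
  | j => mexF ((((Finset.range j).filter (fun j' => P j' j)).attach).image
      (fun j' => greedy P j'.1))
  termination_by j => j
  decreasing_by
    have h := j'.2
    simp only [Finset.mem_filter, Finset.mem_range] at h
    exact h.1

lemma greedy_ne {P : ℕ → ℕ → Prop} {j' j : ℕ} (h : j' < j) (hP : P j' j) :
    greedy P j' ≠ greedy P j := by
  have hmem : greedy P j' ∈ (((Finset.range j).filter (fun x => P x j)).attach).image
      (fun x => greedy P x.1) :=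
    Finset.mem_image.mpr ⟨⟨j', Finset.mem_filter.mpr ⟨Finset.mem_range.mpr h, hP⟩⟩,
      Finset.mem_attach _ _, rfl⟩
  intro he
  rw [he] at hmem
  rw [greedy] at hmem
  exact mexF_not_mem _ hmem

lemma greedy_le_card (P : ℕ → ℕ → Prop) (j : ℕ) :
    greedy P j ≤ ((Finset.range j).filter (fun j' => P j' j)).card := by
  rw [greedy]
  refine (mexF_le_card _).trans ?_
  refine (Finset.card_image_le).trans ?_
  simp [Finset.card_attach]

/-- top-`r` selection: some `r`-subset captures at least an `r/|s|` fraction of the sum. -/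
lemma select_top (f : ℕ → ℕ) : ∀ (r : ℕ) (s : Finset ℕ), r ≤ s.card →
    ∃ T ⊆ s, T.card = r ∧ r * (∑ x ∈ s, f x) ≤ s.card * (∑ x ∈ T, f x) := by
  intro r
  induction r with
  | zero => intro s _; exact ⟨∅, Finset.empty_subset s, Finset.card_empty, by simp⟩
  | succ r ih =>
    intro s hr
    have hs : s.Nonempty := Finset.card_pos.mp (by omega)
    obtain ⟨x₀, hx₀, hx₀max⟩ := Finset.exists_max_image s f hs
    have hcard : (s.erase x₀).card = s.card - 1 := Finset.card_erase_of_mem hx₀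
    obtain ⟨T', hT'sub, hT'card, hT'⟩ := ih (s.erase x₀) (by omega)
    have hx₀T' : x₀ ∉ T' := fun h => Finset.notMem_erase x₀ s (hT'sub h)
    refine ⟨insert x₀ T', ?_, ?_, ?_⟩
    · exact Finset.insert_subset hx₀ (hT'sub.trans (Finset.erase_subset x₀ s))
    · rw [Finset.card_insert_of_notMem hx₀T', hT'card]
    · have hsum : ∑ x ∈ s, f x = f x₀ + ∑ x ∈ s.erase x₀, f x :=
        (Finset.add_sum_erase s f hx₀).symm
      rw [Finset.sum_insert hx₀T', hsum]
      set S' := ∑ x ∈ s.erase x₀, f x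
      set T₁ := ∑ x ∈ T', f x
      have hS'le : S' ≤ (s.card - 1) * f x₀ := by
        rw [← hcard]
        calc S' ≤ (s.erase x₀).card • f x₀ :=
              Finset.sum_le_card_nsmul _ _ _ (fun x hx => hx₀max x (Finset.mem_erase.mp hx).2)
          _ = (s.erase x₀).card * f x₀ := by rw [smul_eq_mul]
      rw [hcard] at hT'
      obtain ⟨d, hd⟩ : ∃ d, s.card = d + 1 := ⟨s.card - 1, by omega⟩
      rw [hd] at hS'le hT' ⊢
      have hS'le2 : S' ≤ d * f x₀ := by rwa [Nat.add_sub_cancel] at hS'le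
      have hT'2 : r * S' ≤ d * T₁ := by rwa [Nat.add_sub_cancel] at hT'
      clear hS'le hT'
      have hrd : r ≤ d := by omega
      obtain ⟨e, he⟩ : ∃ e, d = r + e := ⟨d - r, by omega⟩
      subst he
      rcases Nat.eq_zero_or_pos (r + e) with h0 | hpos
      · obtain ⟨hr0, he0⟩ : r = 0 ∧ e = 0 := by omega
        subst hr0; subst he0
        have hS0 : S' ≤ 0 := le_trans hS'le2 (by simp)
        omega
      · have key : (r + e) * ((r + 1) * (f x₀ + S')) ≤ (r + e) * ((r + e + 1) * (f x₀ + T₁)) := by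
          nlinarith [hT'2, hS'le2]
        exact Nat.le_of_mul_le_mul_left key hpos

/-- Theorem 1.1 (Berg et al.): a `(k,m)`-agreeable linear society with `n` voters has
agreement proportion at least `(k-1)/(m-1)`. -/
theorem agreeable_linear_society {k m n : ℕ} (hk : 2 ≤ k) (hkm : k ≤ m) (hmn : m ≤ n)
    (F : Fin n → Set ℝ)
    (hint : ∀ i : Fin n, ∃ a b : ℝ, a ≤ b ∧ F i = Set.Icc a b)
    (hagree : ∀ M : Finset (Fin n), M.card = m →
      ∃ K ⊆ M, K.card = k ∧ (⋂ i ∈ K, F i).Nonempty) :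
    ∃ x : ℝ, ((k : ℝ) - 1) / ((m : ℝ) - 1) * (n : ℝ) ≤
      (Set.ncard {i : Fin n | x ∈ F i} : ℝ) := by
  classical
  choose a b hab hF using hint
  have hn : 0 < n := by omega
  haveI : NeZero n := ⟨by omega⟩
  -- coverage finset
  set cov : ℝ → Finset (Fin n) := fun x => Finset.univ.filter (fun i => x ∈ F i) with hcov
  have hne : (Finset.univ.image (fun i : Fin n => (cov (b i)).card)).Nonempty :=
    (Finset.univ_nonempty).image _
  set A := (Finset.univ.image (fun i : Fin n => (cov (b i)).card)).max' hne with hA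
  obtain ⟨i₀, -, hi₀⟩ := Finset.mem_image.mp ((Finset.univ.image
    (fun i : Fin n => (cov (b i)).card)).max'_mem hne)
  -- every point's coverage is at most A
  have covle : ∀ x : ℝ, (cov x).card ≤ A := by
    intro x
    rcases (cov x).eq_empty_or_nonempty with h | h
    · simp [h]
    · obtain ⟨j, hj, hjmin⟩ := Finset.exists_min_image (cov x) (fun i => b i) h
      have hjx : x ∈ F j := (Finset.mem_filter.mp hj).2
      have hsub : cov x ⊆ cov (b j) := by
        intro l hl
        have hlx : x ∈ F l := (Finset.mem_filter.mp hl).2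
        rw [hF l] at hlx
        rw [hF j] at hjx
        refine Finset.mem_filter.mpr ⟨Finset.mem_univ l, ?_⟩
        rw [hF l]
        exact ⟨le_trans hlx.1 hjx.2, hjmin l hl⟩
      calc (cov x).card ≤ (cov (b j)).card := Finset.card_le_card hsub
        _ ≤ A := by
          rw [hA]
          exact Finset.le_max' _ ((cov (b j)).card)
            (Finset.mem_image_of_mem (fun i => (cov (b i)).card) (Finset.mem_univ j))
  -- A ≥ k
  have hAk : k ≤ A := by
    obtain ⟨M, -, hMcard⟩ := Finset.exists_subset_card_eq
      (s := (Finset.univ : Finset (Fin n))) (n := m) (by simp [hmn])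
    obtain ⟨K, -, hKcard, ⟨x, hx⟩⟩ := hagree M hMcard
    simp only [Set.mem_iInter] at hx
    have hKsub : K ⊆ cov x := fun i hi => Finset.mem_filter.mpr ⟨Finset.mem_univ i, hx i hi⟩
    calc k = K.card := hKcard.symm
      _ ≤ (cov x).card := Finset.card_le_card hKsub
      _ ≤ A := covle x
  -- the greedy coloring
  set σ := Tuple.sort a with hσ
  have hmono : Monotone (a ∘ σ) := Tuple.monotone_sort a
  set P : ℕ → ℕ → Prop := fun x y => ∃ (hx : x < n) (hy : y < n),
      (F (σ ⟨x, hx⟩) ∩ F (σ ⟨y, hy⟩)).Nonempty with hP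
  set c : Fin n → ℕ := fun i => greedy P ((σ.symm i : Fin n) : ℕ) with hc
  -- proper coloring
  have hproper : ∀ i i' : Fin n, i ≠ i' → (F i ∩ F i').Nonempty → c i ≠ c i' := by
    have key : ∀ i i' : Fin n, σ.symm i < σ.symm i' → (F i ∩ F i').Nonempty → c i ≠ c i' := by
      intro i i' hlt hint
      have hPii : P ((σ.symm i : Fin n) : ℕ) ((σ.symm i' : Fin n) : ℕ) := by
        refine ⟨(σ.symm i).isLt, (σ.symm i').isLt, ?_⟩
        simpa using hint
      exact greedy_ne (by exact_mod_cast hlt) hPii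
    intro i i' hne' hint'
    rcases lt_trichotomy (σ.symm i) (σ.symm i') with h | h | h
    · exact key i i' h hint'
    · exact absurd (σ.symm.injective h) hne'
    · exact (key i' i h (by rwa [Set.inter_comm])).symm
  -- color bound
  have hbound : ∀ i : Fin n, c i < A := by
    intro i
    have hceq : c i = greedy P ((σ.symm i : Fin n) : ℕ) := rfl
    rw [hceq]
    set j : Fin n := σ.symm i with hj
    have hji : σ j = i := σ.apply_symm_apply i
    refine lt_of_le_of_lt ((greedy_le_card P (j : ℕ)).trans
      (?_ : _ ≤ ((cov (a i)).erase i).card)) ?_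
    · apply Finset.card_le_card_of_injOn (fun x => if hx : x < n then σ ⟨x, hx⟩ else i)
      · intro x hxmem
        simp only [Finset.coe_filter, Finset.mem_coe, Finset.mem_filter, Finset.mem_range, Set.mem_setOf_eq] at hxmem
        obtain ⟨hxj, hxn, hyn, hintr⟩ := hxmem
        rw [Finset.mem_coe]; beta_reduce; rw [dif_pos hxn]
        obtain ⟨y, hy1, hy2⟩ := hintr
        have hy2' : y ∈ F (σ j) := hy2
        rw [hji, hF i] at hy2'
        rw [hF (σ ⟨x, hxn⟩)] at hy1
        refine Finset.mem_erase.mpr ⟨?_, ?_⟩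
        · intro heq
          have hxeq : (⟨x, hxn⟩ : Fin n) = j := σ.injective (heq.trans hji.symm)
          have : x = (j : ℕ) := congrArg Fin.val hxeq
          omega
        · refine Finset.mem_filter.mpr ⟨Finset.mem_univ _, ?_⟩
          rw [hF (σ ⟨x, hxn⟩)]
          constructor
          · have hle : (⟨x, hxn⟩ : Fin n) ≤ j := by
              apply le_of_lt
              rw [Fin.lt_def]
              exact hxj
            have := hmono hle
            simp only [Function.comp_apply, hji] at this
            exact this
          · exact le_trans hy2'.1 hy1.2
      · intro x hx y hy hxy
        simp only [Finset.coe_filter, Set.mem_setOf_eq, Finset.mem_range] at hx hy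
        have hxn : x < n := lt_trans hx.1 j.isLt
        have hyn : y < n := lt_trans hy.1 j.isLt
        dsimp only at hxy
        rw [dif_pos hxn, dif_pos hyn] at hxy
        have hmk : (⟨x, hxn⟩ : Fin n) = ⟨y, hyn⟩ := σ.injective hxy
        exact congrArg Fin.val hmk
    · have hicov : i ∈ cov (a i) := by
        refine Finset.mem_filter.mpr ⟨Finset.mem_univ i, ?_⟩
        rw [hF i]
        exact ⟨le_refl _, hab i⟩
      have h1 : 1 ≤ (cov (a i)).card := Finset.card_pos.mpr ⟨i, hicov⟩
      have h2 : ((cov (a i)).erase i).card = (cov (a i)).card - 1 :=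
        Finset.card_erase_of_mem hicov
      have h3 := covle (a i)
      omega
  -- partition n into color classes
  have hpart : n = ∑ t ∈ Finset.range A, (Finset.univ.filter (fun i => c i = t)).card := by
    have := Finset.card_eq_sum_card_fiberwise
      (s := (Finset.univ : Finset (Fin n))) (t := Finset.range A) (f := c)
      (fun x _ => Finset.mem_range.mpr (hbound x))
    simpa using this
  -- select top k-1 color classes
  obtain ⟨T, hTsub, hTcard, hsel⟩ := select_top
    (fun t => (Finset.univ.filter (fun i => c i = t)).card) (k - 1) (Finset.range A)
    (by rw [Finset.card_range]; omega)
  rw [Finset.card_range] at hsel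
  set U := Finset.univ.filter (fun i : Fin n => c i ∈ T) with hU
  have hUcard : U.card = ∑ t ∈ T, (Finset.univ.filter (fun i => c i = t)).card := by
    rw [Finset.card_eq_sum_card_fiberwise (s := U) (t := T)
      (fun x hx => (Finset.mem_filter.mp hx).2)]
    refine Finset.sum_congr rfl (fun t ht => ?_)
    congr 1
    ext i
    simp only [hU, Finset.mem_filter, Finset.mem_univ, true_and]
    exact ⟨fun h => h.2, fun h => ⟨by rw [h]; exact ht, h⟩⟩
  have hUle : U.card ≤ m - 1 := by
    by_contra h
    push_neg at h
    obtain ⟨M, hMU, hMcard⟩ := Finset.exists_subset_card_eq (show m ≤ U.card by omega)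
    obtain ⟨K, hKM, hKcard, ⟨x, hx⟩⟩ := hagree M hMcard
    simp only [Set.mem_iInter] at hx
    have hmapsto : ∀ i ∈ K, c i ∈ T := fun i hi => (Finset.mem_filter.mp (hMU (hKM hi))).2
    have hlt : T.card < K.card := by rw [hKcard, hTcard]; omega
    obtain ⟨i, hi, i', hi', hne2, heq⟩ :=
      Finset.exists_ne_map_eq_of_card_lt_of_maps_to hlt hmapsto
    exact hproper i i' hne2 ⟨x, hx i hi, hx i' hi'⟩ heq
  -- the key counting inequality
  have hmain : (k - 1) * n ≤ A * (m - 1) := by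
    calc (k - 1) * n = (k - 1) * ∑ t ∈ Finset.range A,
          (Finset.univ.filter (fun i => c i = t)).card := by rw [← hpart]
      _ ≤ A * ∑ t ∈ T, (Finset.univ.filter (fun i => c i = t)).card := hsel
      _ = A * U.card := by rw [hUcard]
      _ ≤ A * (m - 1) := Nat.mul_le_mul_left A hUle
  -- conclude
  refine ⟨b i₀, ?_⟩
  have hset : {i : Fin n | b i₀ ∈ F i} = ↑(cov (b i₀)) := by
    ext i; simp [hcov]
  rw [hset, Set.ncard_coe_finset]
  have hcovA : (cov (b i₀)).card = A := by rw [hA]; exact hi₀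
  rw [hcovA]
  have hm1 : (0 : ℝ) < (m : ℝ) - 1 := by
    have : (2 : ℝ) ≤ (m : ℝ) := by exact_mod_cast hk.trans hkm
    linarith
  rw [div_mul_eq_mul_div, div_le_iff₀ hm1]
  have hcast : (((k - 1) * n : ℕ) : ℝ) ≤ ((A * (m - 1) : ℕ) : ℝ) := by exact_mod_cast hmain
  rw [Nat.cast_mul, Nat.cast_mul, Nat.cast_sub (by omega : 1 ≤ k),
    Nat.cast_sub (by omega : 1 ≤ m), Nat.cast_one] at hcast
  linarith
end

section
/- Let d ≥ 1 and p ≥ q ≥ 2 be integers with (d-1)·p < d·(q-1). Let F be a finite family of at least p convex sets in ℝ^d satisfying the (p,q)-property. Then F has a piercing set of at most p - q + 1 points. -/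
open Set

private noncomputable def hdf {d : ℕ} (x : Fin d → ℝ) : ℝ := ∑ i, (x i)^2

private lemma hdf_cont {d : ℕ} : Continuous (hdf (d := d)) := by
  unfold hdf; fun_prop

private lemma hdf_convex_sublevel {d : ℕ} (r : ℝ) : Convex ℝ {x : Fin d → ℝ | hdf x ≤ r} := by
  intro x hx y hy α β hα hβ hαβ
  have key : hdf (α • x + β • y) ≤ α * hdf x + β * hdf y := by
    unfold hdf
    rw [Finset.mul_sum, Finset.mul_sum, ← Finset.sum_add_distrib]
    apply Finset.sum_le_sum
    intro i _
    simp only [Pi.add_apply, Pi.smul_apply, smul_eq_mul]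
    nlinarith [sq_nonneg (x i - y i), mul_nonneg hα hβ]
  have hx' : hdf x ≤ r := hx
  have hy' : hdf y ≤ r := hy
  simp only [mem_setOf_eq]
  have hr : α * r + β * r = r := by rw [← add_mul, hαβ, one_mul]
  nlinarith [mul_le_mul_of_nonneg_left hx' hα, mul_le_mul_of_nonneg_left hy' hβ]

private lemma hdf_min_unique {d : ℕ} {K : Set (Fin d → ℝ)} (hK : Convex ℝ K)
    {x y : Fin d → ℝ} (hx : x ∈ K) (hy : y ∈ K)
    (hxm : ∀ z ∈ K, hdf x ≤ hdf z) (hym : ∀ z ∈ K, hdf y ≤ hdf z) : x = y := by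
  have hm : (1/2 : ℝ) • x + (1/2 : ℝ) • y ∈ K := hK hx hy (by norm_num) (by norm_num) (by norm_num)
  set m := (1/2 : ℝ) • x + (1/2 : ℝ) • y with hmdef
  have key : (∑ i, (x i - y i)^2) = 2 * hdf x + 2 * hdf y - 4 * hdf m := by
    unfold hdf
    rw [Finset.mul_sum, Finset.mul_sum, Finset.mul_sum]
    rw [← Finset.sum_add_distrib, ← Finset.sum_sub_distrib]
    apply Finset.sum_congr rfl
    intro i _
    simp only [hmdef, Pi.add_apply, Pi.smul_apply, smul_eq_mul]
    ring
  have h1 : hdf x ≤ hdf m := hxm _ hm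
  have h2 : hdf y ≤ hdf m := hym _ hm
  have hsum : (∑ i, (x i - y i)^2) ≤ 0 := by rw [key]; linarith
  have hzero : ∀ i ∈ Finset.univ, (x i - y i)^2 = 0 := by
    intro i _
    have hnn := Finset.sum_nonneg (fun j (_ : j ∈ Finset.univ) => sq_nonneg (x j - y j))
    have hsz : (∑ i, (x i - y i)^2) = 0 := le_antisymm hsum hnn
    exact (Finset.sum_eq_zero_iff_of_nonneg
      (fun j (_ : j ∈ Finset.univ) => sq_nonneg (x j - y j))).mp hsz i (Finset.mem_univ i)
  funext i
  have h0 := pow_eq_zero_iff (n := 2) (by norm_num) |>.mp (hzero i (Finset.mem_univ i))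
  linarith [sub_eq_zero.mp h0]

universe u

private theorem hd_main : ∀ (n d p q : ℕ), 1 ≤ d → 2 ≤ q → q ≤ p → p - q = n →
    (d-1)*p < d*(q-1) →
    ∀ {ι : Type u} [Fintype ι] (P : ι → Set (Fin d → ℝ)),
    (∀ i, IsCompact (P i)) → (∀ i, Convex ℝ (P i)) → (∀ i, (P i).Nonempty) →
    (∀ G : Finset ι, G.card ≤ p →
      ∃ Q ⊆ G, Q.card = q - (p - G.card) ∧ (⋂ i ∈ Q, P i).Nonempty) →
    ∃ C : Finset (Fin d → ℝ), C.card ≤ p - q + 1 ∧ ∀ i, ∃ x ∈ C, x ∈ P i := by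
  intro n
  induction n with
  | zero =>
    intro d p q hd hq hqp hpqn hcond ι _ P hcomp hconv hne hSH
    have hpq' : p = q := by omega
    have hdq : d + 1 ≤ q := by
      by_contra h
      have h1 : q ≤ d := by omega
      have h2 : (d-1)*q ≤ (d-1)*p := Nat.mul_le_mul_left _ hqp
      zify [hd, (by omega : 1 ≤ q)] at hcond h2
      nlinarith
    have hfr : Module.finrank ℝ (Fin d → ℝ) = d := by simp
    have hall : (⋂ i ∈ (Finset.univ : Finset ι), P i).Nonempty := by
      apply Convex.helly_theorem' (𝕜 := ℝ) (fun i _ => hconv i)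
      intro I _ hIcard
      rw [hfr] at hIcard
      obtain ⟨Q, hQI, hQcard, hQne⟩ := hSH I (by omega)
      have hIq : I.card ≤ q := by omega
      rw [hpq'] at hQcard
      have hQI' : Q = I := Finset.eq_of_subset_of_card_le hQI (by omega)
      rwa [hQI'] at hQne
    obtain ⟨x, hx⟩ := hall
    refine ⟨{x}, by simp, fun i => ⟨x, Finset.mem_singleton_self x, ?_⟩⟩
    exact Set.mem_iInter₂.mp hx i (Finset.mem_univ i)
  | succ n ih =>
    intro d p q hd hq hqp hpqn hcond ι _ P hcomp hconv hne hSH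
    classical
    have hdq : d + 1 ≤ q := by
      by_contra h
      have h1 : q ≤ d := by omega
      have h2 : (d-1)*q ≤ (d-1)*p := Nat.mul_le_mul_left _ hqp
      zify [hd, (by omega : 1 ≤ q)] at hcond h2
      nlinarith
    have hpq1 : q + 1 ≤ p := by omega
    rcases isEmpty_or_nonempty ι with hι | hι
    · exact ⟨∅, by simp, fun i => (IsEmpty.false i).elim⟩
    obtain ⟨i0⟩ := hι
    -- basic facts about intersections
    have hKconv : ∀ s : Finset ι, Convex ℝ (⋂ i ∈ s, P i) :=
      fun s => convex_iInter (fun i => convex_iInter (fun _ => hconv i))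
    have hmono : ∀ {s t : Finset ι}, s ⊆ t → (⋂ i ∈ t, P i) ⊆ ⋂ i ∈ s, P i := by
      intro s t hst x hx
      exact Set.mem_iInter₂.mpr fun i hi => Set.mem_iInter₂.mp hx i (hst hi)
    have hminex : ∀ s : Finset ι, s.Nonempty → (⋂ i ∈ s, P i).Nonempty →
        ∃ x ∈ ⋂ i ∈ s, P i, ∀ y ∈ ⋂ i ∈ s, P i, hdf x ≤ hdf y := by
      intro s hs hKs
      have hcl : IsClosed (⋂ i ∈ s, P i) :=
        isClosed_biInter fun i _ => (hcomp i).isClosed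
      obtain ⟨j0, hj0⟩ := hs
      have hcs : IsCompact (⋂ i ∈ s, P i) :=
        (hcomp j0).of_isClosed_subset hcl (Set.biInter_subset_of_mem hj0)
      obtain ⟨x, hx, hmin⟩ := hcs.exists_isMinOn hKs hdf_cont.continuousOn
      exact ⟨x, hx, fun y hy => hmin hy⟩
    set m : Finset ι → (Fin d → ℝ) := fun s =>
      if h : s.Nonempty ∧ (⋂ i ∈ s, P i).Nonempty then (hminex s h.1 h.2).choose else 0
      with hmdef
    have hm : ∀ s : Finset ι, s.Nonempty → (⋂ i ∈ s, P i).Nonempty →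
        m s ∈ (⋂ i ∈ s, P i) ∧ ∀ y ∈ ⋂ i ∈ s, P i, hdf (m s) ≤ hdf y := by
      intro s h1 h2
      have : m s = (hminex s h1 h2).choose := by
        rw [hmdef]; simp only [dif_pos (And.intro h1 h2)]
      rw [this]
      obtain ⟨ha, hb⟩ := (hminex s h1 h2).choose_spec
      exact ⟨ha, hb⟩
    -- the finite collection of candidate index sets
    set 𝒬 : Finset (Finset ι) := Finset.univ.filter
      (fun s : Finset ι => s.Nonempty ∧ s.card ≤ q ∧ (⋂ i ∈ s, P i).Nonempty) with h𝒬
    have h𝒬ne : 𝒬.Nonempty := by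
      refine ⟨{i0}, Finset.mem_filter.mpr ⟨Finset.mem_univ _, Finset.singleton_nonempty _, ?_, ?_⟩⟩
      · simp; omega
      · simpa using hne i0
    obtain ⟨Q0, hQ0mem, hQ0max⟩ := Finset.exists_max_image 𝒬 (fun s => hdf (m s)) h𝒬ne
    rw [h𝒬, Finset.mem_filter] at hQ0mem
    obtain ⟨-, hQ0ne, hQ0card, hQ0K⟩ := hQ0mem
    have hQ0pos : 1 ≤ Q0.card := Finset.card_pos.mpr hQ0ne
    -- basis step: find S ⊆ Q0 with |S| = min d |Q0| and same min value
    obtain ⟨S, hSQ0, hSne, hScard1, hScardd, hSK, hSval⟩ :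
        ∃ S : Finset ι, S ⊆ Q0 ∧ S.Nonempty ∧ 1 ≤ S.card ∧ S.card ≤ d ∧
          (⋂ i ∈ S, P i).Nonempty ∧ hdf (m S) = hdf (m Q0) := by
      rcases le_or_gt Q0.card d with hcase | hcase
      · exact ⟨Q0, Finset.Subset.refl _, hQ0ne, hQ0pos, hcase, hQ0K, rfl⟩
      · -- Helly argument
        set 𝒮 : Finset (Finset ι) := Finset.univ.filter
          (fun S : Finset ι => S ⊆ Q0 ∧ S.card = d) with h𝒮
        have h𝒮ne : 𝒮.Nonempty := by
          obtain ⟨T, hT1, hT2⟩ := Finset.exists_subset_card_eq hcase.le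
          exact ⟨T, Finset.mem_filter.mpr ⟨Finset.mem_univ _, hT1, hT2⟩⟩
        obtain ⟨Smax, hSmaxmem, hSmaxmax⟩ :=
          Finset.exists_max_image 𝒮 (fun s => hdf (m s)) h𝒮ne
        rw [h𝒮, Finset.mem_filter] at hSmaxmem
        obtain ⟨-, hSmaxQ0, hSmaxcard⟩ := hSmaxmem
        set M := hdf (m Smax) with hM
        -- auxiliary: every d-subset of Q0 is nonempty w/ nonempty intersection
        have hdsub : ∀ S' : Finset ι, S' ⊆ Q0 → S'.card = d →
            S'.Nonempty ∧ (⋂ i ∈ S', P i).Nonempty := by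
          intro S' h1 h2
          exact ⟨Finset.card_pos.mp (by omega), hQ0K.mono (hmono h1)⟩
        have hSmaxne := hdsub Smax hSmaxQ0 hSmaxcard
        -- Helly with extra sublevel set
        set P' : Option ι → Set (Fin d → ℝ) := fun o => o.elim {x | hdf x ≤ M} P with hP'
        set s' : Finset (Option ι) := insert none (Q0.image some) with hs'
        have hfr : Module.finrank ℝ (Fin d → ℝ) = d := by simp
        have hhelly : (⋂ o ∈ s', P' o).Nonempty := by
          apply Convex.helly_theorem' (𝕜 := ℝ)
          · intro o _
            match o with
            | none => exact hdf_convex_sublevel M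
            | some i => exact hconv i
          · intro I hIs hIcard
            rw [hfr] at hIcard
            by_cases hnI : none ∈ I
            · set I' := I.erase none with hI'
              have hI'sub : I' ⊆ Q0.image some := by
                intro o ho
                have h1 := hIs (Finset.mem_of_mem_erase ho)
                rw [hs', Finset.mem_insert] at h1
                rcases h1 with h1 | h1
                · exact absurd h1 (Finset.ne_of_mem_erase ho)
                · exact h1
              set S0 : Finset ι := Q0.filter (fun i => some i ∈ I') with hS0
              have hS0img : S0.image some = I' := by
                apply Finset.Subset.antisymm
                · intro o ho
                  obtain ⟨i, hi, rfl⟩ := Finset.mem_image.mp ho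
                  exact (Finset.mem_filter.mp hi).2
                · intro o ho
                  obtain ⟨i, hiQ0, rfl⟩ := Finset.mem_image.mp (hI'sub ho)
                  exact Finset.mem_image.mpr ⟨i, Finset.mem_filter.mpr ⟨hiQ0, ho⟩, rfl⟩
              have hS0card : S0.card ≤ d := by
                have h1 : S0.card = I'.card := by
                  rw [← hS0img]; exact (Finset.card_image_of_injective _ (Option.some_injective ι)).symm
                have h2 : I'.card ≤ I.card - 1 := by
                  rw [hI', Finset.card_erase_of_mem hnI]
                omega
              obtain ⟨S1, hS01, hS1Q0, hS1card⟩ :=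
                Finset.exists_subsuperset_card_eq (Finset.filter_subset _ _) hS0card hcase.le
              have hS1ne := hdsub S1 hS1Q0 hS1card
              have hmS1 := hm S1 hS1ne.1 hS1ne.2
              have hS1M : hdf (m S1) ≤ M :=
                hSmaxmax S1 (Finset.mem_filter.mpr ⟨Finset.mem_univ _, hS1Q0, hS1card⟩)
              refine ⟨m S1, Set.mem_iInter₂.mpr fun o ho => ?_⟩
              match o with
              | none => exact hS1M
              | some i =>
                have hiI' : some i ∈ I' := Finset.mem_erase.mpr ⟨by simp, ho⟩
                have hiQ0 : i ∈ Q0 := by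
                  obtain ⟨j, hj, hji⟩ := Finset.mem_image.mp (hI'sub hiI')
                  exact (Option.some_injective ι hji) ▸ hj
                have hiS0 : i ∈ S0 := Finset.mem_filter.mpr ⟨hiQ0, hiI'⟩
                exact Set.mem_iInter₂.mp hmS1.1 i (hS01 hiS0)
            · obtain ⟨z, hz⟩ := hQ0K
              refine ⟨z, Set.mem_iInter₂.mpr fun o ho => ?_⟩
              have h1 := hIs ho
              rw [hs', Finset.mem_insert] at h1
              rcases h1 with h1 | h1
              · exact absurd (h1 ▸ ho) hnI
              · obtain ⟨i, hi, rfl⟩ := Finset.mem_image.mp h1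
                exact Set.mem_iInter₂.mp hz i hi
        obtain ⟨y, hy⟩ := hhelly
        have hynone : hdf y ≤ M :=
          Set.mem_iInter₂.mp hy none (Finset.mem_insert_self _ _)
        have hyQ0 : y ∈ ⋂ i ∈ Q0, P i := by
          refine Set.mem_iInter₂.mpr fun i hi => ?_
          exact Set.mem_iInter₂.mp hy (some i)
            (Finset.mem_insert_of_mem (Finset.mem_image_of_mem some hi))
        have hmQ0 := hm Q0 hQ0ne hQ0K
        have hSmaxK := hSmaxne.2
        have hmSmax := hm Smax hSmaxne.1 hSmaxK
        have hvM : hdf (m Q0) ≤ M := le_trans (hmQ0.2 y hyQ0) hynone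
        have hMv : M ≤ hdf (m Q0) := hmSmax.2 _ (hmono hSmaxQ0 hmQ0.1)
        exact ⟨Smax, hSmaxQ0, hSmaxne.1, by omega, by omega, hSmaxK,
          le_antisymm hMv hvM⟩
    have ham := hm S hSne hSK
    set a := m S with hadef
    -- the subfamily of sets not containing a
    have hSH' : ∀ G' : Finset {i : ι // a ∉ P i}, G'.card ≤ p - d →
        ∃ Q' ⊆ G', Q'.card = (q - d + 1) - ((p - d) - G'.card) ∧
          (⋂ i ∈ Q', P i.1).Nonempty := by
      intro G' hG'card
      set t := (q - d + 1) - ((p - d) - G'.card) with ht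
      rcases Nat.lt_or_ge t 2 with ht2 | ht2
      · rcases Nat.eq_zero_or_pos t with ht0 | ht1
        · exact ⟨∅, Finset.empty_subset _, by simp [← ht, ht0], by simp⟩
        · have hG'ne : G'.Nonempty := by
            rw [← Finset.card_pos]
            omega
          obtain ⟨i1, hi1⟩ := hG'ne
          refine ⟨{i1}, by simpa using hi1, ?_, by simpa using hne i1.1⟩
          simp only [Finset.card_singleton]
          omega
      · set G := G'.image Subtype.val with hGdef
        have hGcard : G.card = G'.card :=
          Finset.card_image_of_injective _ Subtype.val_injective
        have hGS : Disjoint G S := by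
          rw [Finset.disjoint_left]
          rintro x hxG hxS
          obtain ⟨⟨x', hx'⟩, -, rfl⟩ := Finset.mem_image.mp hxG
          exact hx' (Set.mem_iInter₂.mp ham.1 _ hxS)
        have hcardGS : (G ∪ S).card = G'.card + S.card := by
          rw [Finset.card_union_of_disjoint hGS, hGcard]
        obtain ⟨Q1, hQ1sub, hQ1card, hQ1K⟩ := hSH (G ∪ S) (by omega)
        rw [hcardGS] at hQ1card
        set T := Q1 \ S with hTdef
        have hTG : T ⊆ G := by
          intro x hx
          obtain ⟨hx1, hx2⟩ := Finset.mem_sdiff.mp hx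
          rcases Finset.mem_union.mp (hQ1sub hx1) with h | h
          · exact h
          · exact absurd h hx2
        have hcardQ1T : (Q1 ∩ S).card + T.card = Q1.card :=
          Finset.card_inter_add_card_sdiff Q1 S
        have hQ1Scard : (Q1 ∩ S).card ≤ S.card :=
          Finset.card_le_card Finset.inter_subset_right
        rcases Nat.lt_or_ge T.card t with hTlt | hTge
        · -- contradiction case
          exfalso
          have hSQ1 : S ⊆ Q1 := by
            have h4 : S.card ≤ (Q1 ∩ S).card := by omega
            have h5 := Finset.eq_of_subset_of_card_le Finset.inter_subset_right h4
            intro x hx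
            exact Finset.mem_inter.mp (h5 ▸ hx) |>.1
          have hTne : T.Nonempty := Finset.card_pos.mp (by omega)
          have hQ1ne : Q1.Nonempty := hSne.mono hSQ1
          have hQ1mem : Q1 ∈ 𝒬 := by
            rw [h𝒬, Finset.mem_filter]
            exact ⟨Finset.mem_univ _, hQ1ne, by omega, hQ1K⟩
          have hmQ1 := hm Q1 hQ1ne hQ1K
          have hle1 : hdf (m Q1) ≤ hdf (m Q0) := hQ0max Q1 hQ1mem
          have hKQ1S : (⋂ i ∈ Q1, P i) ⊆ ⋂ i ∈ S, P i := hmono hSQ1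
          have hge1 : hdf (m S) ≤ hdf (m Q1) := ham.2 _ (hKQ1S hmQ1.1)
          have heq : hdf (m Q1) = hdf (m S) := by
            rw [hSval]
            exact le_antisymm hle1 (hSval ▸ hge1)
          have hymin : ∀ z ∈ ⋂ i ∈ S, P i, hdf (m Q1) ≤ hdf z :=
            fun z hz => heq ▸ ham.2 z hz
          have hya : m Q1 = a :=
            hdf_min_unique (hKconv S) (hKQ1S hmQ1.1) ham.1 hymin ham.2
          obtain ⟨x0, hx0⟩ := hTne
          obtain ⟨x1, -, hval⟩ := Finset.mem_image.mp (hTG hx0)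
          apply x1.2
          rw [hval, ← hya]
          exact Set.mem_iInter₂.mp hmQ1.1 x0 (Finset.mem_sdiff.mp hx0).1
        · -- good case
          obtain ⟨Q2, hQ2T, hQ2card⟩ := Finset.exists_subset_card_eq hTge
          set Q' := G'.filter (fun i => i.1 ∈ Q2) with hQ'def
          have hQ'sub : Q' ⊆ G' := Finset.filter_subset _ _
          have himg : Q'.image Subtype.val = Q2 := by
            apply Finset.Subset.antisymm
            · intro x hx
              obtain ⟨x', hmem, rfl⟩ := Finset.mem_image.mp hx
              exact (Finset.mem_filter.mp hmem).2
            · intro x hx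
              have hxG : x ∈ G := hTG (hQ2T hx)
              obtain ⟨x', hx'G', rfl⟩ := Finset.mem_image.mp hxG
              exact Finset.mem_image.mpr ⟨x', Finset.mem_filter.mpr ⟨hx'G', hx⟩, rfl⟩
          have hQ'card : Q'.card = t := by
            rw [← hQ2card, ← himg, Finset.card_image_of_injective _ Subtype.val_injective]
          refine ⟨Q', hQ'sub, hQ'card, ?_⟩
          obtain ⟨z, hz⟩ := hQ1K
          refine ⟨z, Set.mem_iInter₂.mpr fun i hi => ?_⟩
          have h1 : i.1 ∈ Q2 := (Finset.mem_filter.mp hi).2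
          have h2 : i.1 ∈ Q1 := (Finset.mem_sdiff.mp (hQ2T h1)).1
          exact Set.mem_iInter₂.mp hz _ h2
    -- apply the induction hypothesis
    have hcond' : (d-1)*(p-d) < d*((q-d+1)-1) := by
      have he1 : (q - d + 1) - 1 = q - d := by omega
      rw [he1]
      have hdp : d ≤ p := by omega
      have hdq' : d ≤ q := by omega
      zify [hd, hdp, hdq', (by omega : 1 ≤ q)] at hcond ⊢
      nlinarith
    obtain ⟨C', hC'card, hC'p⟩ := ih d (p - d) (q - d + 1) hd (by omega) (by omega) (by omega)
      hcond' (fun i : {i : ι // a ∉ P i} => P i.1) (fun i => hcomp i.1) (fun i => hconv i.1)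
      (fun i => hne i.1) hSH'
    refine ⟨insert a C', ?_, ?_⟩
    · calc (insert a C').card ≤ C'.card + 1 := Finset.card_insert_le _ _
        _ ≤ p - q + 1 := by omega
    · intro i
      by_cases hai : a ∈ P i
      · exact ⟨a, Finset.mem_insert_self _ _, hai⟩
      · obtain ⟨x, hxC, hxP⟩ := hC'p ⟨i, hai⟩
        exact ⟨x, Finset.mem_insert_of_mem hxC, hxP⟩

/-- Hadwiger–Debrunner theorem: if `(d-1)p < d(q-1)` with `p ≥ q ≥ 2`, `d ≥ 1`,
then a finite family of at least `p` convex sets in `ℝ^d` with the `(p,q)`-property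
can be pierced by at most `p - q + 1` points. -/
theorem hadwiger_debrunner {d p q : ℕ} (hd : 1 ≤ d) (hq : 2 ≤ q) (hpq : q ≤ p)
    (hcond : (d - 1) * p < d * (q - 1))
    {ι : Type*} [Fintype ι] (hcard : p ≤ Fintype.card ι)
    (F : ι → Set (Fin d → ℝ)) (hconv : ∀ i, Convex ℝ (F i))
    (hne : ∀ i, (F i).Nonempty)
    (hpqprop : ∀ P : Finset ι, P.card = p →
      ∃ Q ⊆ P, Q.card = q ∧ (⋂ i ∈ Q, F i).Nonempty) :
    ∃ C : Finset (Fin d → ℝ), C.card ≤ p - q + 1 ∧ ∀ i, ∃ x ∈ C, x ∈ F i := by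
  classical
  set w : Finset ι → (Fin d → ℝ) := fun s =>
    if h : (⋂ i ∈ s, F i).Nonempty then h.choose else 0 with hwdef
  have hw : ∀ s : Finset ι, (⋂ i ∈ s, F i).Nonempty → w s ∈ ⋂ i ∈ s, F i := by
    intro s h
    rw [hwdef]; simp only [dif_pos h]; exact h.choose_spec
  set pts : ι → Set (Fin d → ℝ) := fun i =>
    {x | ∃ s : Finset ι, i ∈ s ∧ (⋂ j ∈ s, F j).Nonempty ∧ w s = x} with hptsdef
  have hptsfin : ∀ i, (pts i).Finite := by
    intro i
    apply Set.Finite.subset (Set.finite_range w)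
    rintro x ⟨s, -, -, rfl⟩
    exact Set.mem_range_self s
  set P : ι → Set (Fin d → ℝ) := fun i => convexHull ℝ (pts i) with hPdef
  have hptsF : ∀ i, pts i ⊆ F i := by
    rintro i x ⟨s, his, hsne, rfl⟩
    exact Set.biInter_subset_of_mem his (hw s hsne)
  have hPF : ∀ i, P i ⊆ F i := fun i => convexHull_min (hptsF i) (hconv i)
  have hsing : ∀ i : ι, (⋂ j ∈ ({i} : Finset ι), F j).Nonempty := by
    intro i; simpa using hne i
  have hPne : ∀ i, (P i).Nonempty :=
    fun i => ⟨w {i}, subset_convexHull ℝ _ ⟨{i}, Finset.mem_singleton_self i, hsing i, rfl⟩⟩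
  have hPcomp : ∀ i, IsCompact (P i) := fun i => (hptsfin i).isCompact_convexHull (𝕜 := ℝ)
  have hPconv : ∀ i, Convex ℝ (P i) := fun i => convex_convexHull ℝ _
  have hSH : ∀ G : Finset ι, G.card ≤ p →
      ∃ Q ⊆ G, Q.card = q - (p - G.card) ∧ (⋂ i ∈ Q, P i).Nonempty := by
    intro G hG
    obtain ⟨Gb, hGGb, hGbu, hGbcard⟩ := Finset.exists_subsuperset_card_eq
      (Finset.subset_univ G) hG (by simpa using hcard)
    obtain ⟨Qb, hQbGb, hQbcard, hQbne⟩ := hpqprop Gb hGbcard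
    have h1 : q - (p - G.card) ≤ (Qb ∩ G).card := by
      have h2 : (Qb ∩ G).card + (Qb \ G).card = Qb.card :=
        Finset.card_inter_add_card_sdiff Qb G
      have h3 : Qb \ G ⊆ Gb \ G := Finset.sdiff_subset_sdiff hQbGb (Finset.Subset.refl G)
      have h4 : (Gb \ G).card = p - G.card := by
        rw [Finset.card_sdiff_of_subset hGGb, hGbcard]
      have h5 : (Qb \ G).card ≤ p - G.card := h4 ▸ Finset.card_le_card h3
      omega
    obtain ⟨Q, hQsub, hQcard⟩ := Finset.exists_subset_card_eq h1
    refine ⟨Q, Finset.Subset.trans hQsub Finset.inter_subset_right, hQcard, ?_⟩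
    refine ⟨w Qb, Set.mem_iInter₂.mpr fun i hi => ?_⟩
    have hiQb : i ∈ Qb := (Finset.mem_inter.mp (hQsub hi)).1
    exact subset_convexHull ℝ _ ⟨Qb, hiQb, hQbne, rfl⟩
  obtain ⟨C, hCcard, hCp⟩ := hd_main (p - q) d p q hd hq hpq rfl hcond P hPcomp hPconv hPne hSH
  exact ⟨C, hCcard, fun i => (hCp i).imp fun x ⟨hx1, hx2⟩ => ⟨hx1, hPF i hx2⟩⟩
end

section
/- Let d ≥ 1 and let F be a finite family of closed line segments in ℝ^d (each member is the segment [x,y] joining two points x, y ∈ ℝ^d) satisfying the (4,3)-property: among every 4 members of F there exist 3 with a common point. Then F has a piercing set of at most 3 points. -/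
open Set

variable {d : ℕ}

private lemma seg_cpt (x y : Fin d → ℝ) : IsCompact (segment ℝ x y) := by
  rw [segment_eq_image']
  exact isCompact_Icc.image (by continuity)

private lemma seg_ne (x y : Fin d → ℝ) : (segment ℝ x y).Nonempty :=
  ⟨x, left_mem_segment ℝ x y⟩

private lemma helly1d {κ : Type*} [Fintype κ] [Nonempty κ] (g : κ → Set ℝ)
    (hne : ∀ i, (g i).Nonempty) (hcv : ∀ i, Convex ℝ (g i)) (hcp : ∀ i, IsCompact (g i))
    (hpair : ∀ i j, (g i ∩ g j).Nonempty) : ∃ r, ∀ i, r ∈ g i := by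
  obtain ⟨i₀, -, hmax⟩ := Finset.exists_max_image Finset.univ (fun i => sInf (g i))
    ⟨Classical.arbitrary κ, Finset.mem_univ _⟩
  refine ⟨sInf (g i₀), fun j => ?_⟩
  obtain ⟨y, hyi, hyj⟩ := hpair i₀ j
  have h1 : sInf (g i₀) ≤ y := csInf_le (hcp i₀).bddBelow hyi
  have h2 : y ≤ sSup (g j) := le_csSup (hcp j).bddAbove hyj
  have h3 : sInf (g j) ≤ sInf (g i₀) := hmax j (Finset.mem_univ j)
  exact (hcv j).ordConnected.out ((hcp j).sInf_mem (hne j)) ((hcp j).sSup_mem (hne j))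
    ⟨h3, h1.trans h2⟩

private lemma minsup1d {κ X : Type*} [Fintype κ] [Nonempty κ] (g : κ → Set ℝ)
    (hcv : ∀ i, Convex ℝ (g i)) (hcp : ∀ i, IsCompact (g i)) (τ : κ → X)
    (hpair : ∀ i j, τ i ≠ τ j → (g i ∩ g j).Nonempty) :
    ∃ i', (∀ j, τ j = τ i') ∨ (∃ r ∈ g i', ∀ j, τ j = τ i' ∨ r ∈ g j) := by
  classical
  by_cases hM : ∃ i, (g i).Nonempty
  · obtain ⟨i₁, hi₁⟩ := hM
    obtain ⟨i', hi'mem, hmin⟩ := Finset.exists_min_image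
      (Finset.univ.filter fun i => (g i).Nonempty) (fun i => sSup (g i)) ⟨i₁, by simp [hi₁]⟩
    have hne' : (g i').Nonempty := (Finset.mem_filter.1 hi'mem).2
    refine ⟨i', Or.inr ⟨sSup (g i'), (hcp i').sSup_mem hne', fun j => ?_⟩⟩
    by_cases hτ : τ j = τ i'
    · exact Or.inl hτ
    · obtain ⟨y, hyj, hyi⟩ := hpair j i' hτ
      have hjM : j ∈ Finset.univ.filter fun i => (g i).Nonempty :=
        Finset.mem_filter.2 ⟨Finset.mem_univ j, ⟨y, hyj⟩⟩
      have h1 : sSup (g i') ≤ sSup (g j) := hmin j hjM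
      have h2 : y ≤ sSup (g i') := le_csSup (hcp i').bddAbove hyi
      exact Or.inr ((hcv j).ordConnected.out hyj ((hcp j).sSup_mem ⟨y, hyj⟩) ⟨h2, h1⟩)
  · push_neg at hM
    refine ⟨Classical.arbitrary κ, Or.inl fun j => ?_⟩
    by_contra h
    obtain ⟨y, hy, -⟩ := hpair j _ h
    rw [hM j] at hy
    exact hy

private def lineSet (z₀ dir : Fin d → ℝ) : Set (Fin d → ℝ) := {p | ∃ t : ℝ, p = z₀ + t • dir}

private def ellMap (dir : Fin d → ℝ) : (Fin d → ℝ) →ₗ[ℝ] ℝ where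
  toFun p := ∑ k, p k * dir k
  map_add' p q := by simp [add_mul, Finset.sum_add_distrib]
  map_smul' c p := by simp [Finset.mul_sum, mul_assoc]

private lemma ell_self_pos {dir : Fin d → ℝ} (h : dir ≠ 0) : 0 < ellMap dir dir := by
  have hk : ∃ k, dir k ≠ 0 := by
    by_contra hk; push_neg at hk; exact h (funext fun k => hk k)
  obtain ⟨k, hk⟩ := hk
  exact Finset.sum_pos' (fun i _ => mul_self_nonneg _) ⟨k, Finset.mem_univ k, mul_self_pos.2 hk⟩

private lemma mem_line_base (z₀ dir : Fin d → ℝ) : z₀ ∈ lineSet z₀ dir := ⟨0, by simp⟩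

private lemma line_coord {z₀ dir p : Fin d → ℝ} (hdir : dir ≠ 0) (hp : p ∈ lineSet z₀ dir) :
    p = z₀ + ((ellMap dir p - ellMap dir z₀) / ellMap dir dir) • dir := by
  obtain ⟨t, rfl⟩ := hp
  have hD : ellMap dir dir ≠ 0 := (ell_self_pos hdir).ne'
  have h1 : ellMap dir (z₀ + t • dir) = ellMap dir z₀ + t * ellMap dir dir := by
    rw [map_add, map_smul, smul_eq_mul]
  rw [h1]
  congr 1
  rw [add_sub_cancel_left, mul_div_assoc, div_self hD, mul_one]

private lemma line_inj {z₀ dir p q : Fin d → ℝ} (hdir : dir ≠ 0) (hp : p ∈ lineSet z₀ dir)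
    (hq : q ∈ lineSet z₀ dir) (h : ellMap dir p = ellMap dir q) : p = q := by
  rw [line_coord hdir hp, line_coord hdir hq, h]

private lemma line_affine {z₀ dir x y : Fin d → ℝ} (hx : x ∈ lineSet z₀ dir)
    (hy : y ∈ lineSet z₀ dir) (c : ℝ) : x + c • (y - x) ∈ lineSet z₀ dir := by
  obtain ⟨s, rfl⟩ := hx
  obtain ⟨t, rfl⟩ := hy
  exact ⟨s + c * (t - s), by module⟩

private lemma seg_subset_line {z₀ dir a b x y : Fin d → ℝ} (hx : x ∈ segment ℝ a b)
    (hy : y ∈ segment ℝ a b) (hxy : x ≠ y) (hxL : x ∈ lineSet z₀ dir)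
    (hyL : y ∈ lineSet z₀ dir) : segment ℝ a b ⊆ lineSet z₀ dir := by
  rw [segment_eq_image'] at hx hy ⊢
  obtain ⟨s, hs, rfl⟩ := hx
  obtain ⟨t, ht, rfl⟩ := hy
  have hst : (t : ℝ) - s ≠ 0 := by
    intro h
    exact hxy (by rw [sub_eq_zero.1 h])
  rintro p ⟨r, hr, rfl⟩
  simp only at hxL hyL hxy ⊢
  have key : a + r • (b - a) =
      (a + s • (b - a)) + ((r - s) / (t - s)) • ((a + t • (b - a)) - (a + s • (b - a))) := by
    have h1 : (a + t • (b - a)) - (a + s • (b - a)) = (t - s) • (b - a) := by module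
    rw [h1, smul_smul, div_mul_cancel₀ _ hst]
    module
  rw [key]
  exact line_affine hxL hyL _

private lemma seg_line_ss {z₀ dir a b : Fin d → ℝ}
    (h : ¬ segment ℝ a b ⊆ lineSet z₀ dir) {x y : Fin d → ℝ}
    (hx : x ∈ segment ℝ a b ∩ lineSet z₀ dir) (hy : y ∈ segment ℝ a b ∩ lineSet z₀ dir) :
    x = y := by
  by_contra hxy
  exact h (seg_subset_line hx.1 hy.1 hxy hx.2 hy.2)

-- placeholders from previous chunks
private lemma helly_on_line {κ : Type*} [Fintype κ] [Nonempty κ] {z₀ dir : Fin d → ℝ}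
    (hdir : dir ≠ 0) (S : κ → Set (Fin d → ℝ)) (hsub : ∀ i, S i ⊆ lineSet z₀ dir)
    (hne : ∀ i, (S i).Nonempty) (hcv : ∀ i, Convex ℝ (S i)) (hcp : ∀ i, IsCompact (S i))
    (hpair : ∀ i j, (S i ∩ S j).Nonempty) : ∃ p, ∀ i, p ∈ S i := by
  have hcont : Continuous (ellMap dir) := (ellMap dir).continuous_of_finiteDimensional
  obtain ⟨r, hr⟩ := helly1d (fun i => ellMap dir '' S i) (fun i => (hne i).image _)
    (fun i => (hcv i).linear_image _) (fun i => (hcp i).image hcont)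
    (fun i j => by
      obtain ⟨x, hxi, hxj⟩ := hpair i j
      exact ⟨ellMap dir x, ⟨x, hxi, rfl⟩, ⟨x, hxj, rfl⟩⟩)
  obtain ⟨p, hpS, hpr⟩ := hr (Classical.arbitrary κ)
  refine ⟨p, fun j => ?_⟩
  obtain ⟨pj, hpj, hpjr⟩ := hr j
  have : pj = p := line_inj hdir (hsub j hpj) (hsub _ hpS) (by rw [hpjr, hpr])
  exact this ▸ hpj

private lemma seg_sub_line (a b : Fin d → ℝ) : segment ℝ a b ⊆ lineSet a (b - a) := by
  rw [segment_eq_image']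
  rintro p ⟨θ, -, rfl⟩
  exact ⟨θ, rfl⟩

private lemma helly_on_segment {κ : Type*} [Fintype κ] [Nonempty κ] {a b : Fin d → ℝ}
    (S : κ → Set (Fin d → ℝ)) (hsub : ∀ i, S i ⊆ segment ℝ a b)
    (hne : ∀ i, (S i).Nonempty) (hcv : ∀ i, Convex ℝ (S i)) (hcp : ∀ i, IsCompact (S i))
    (hpair : ∀ i j, (S i ∩ S j).Nonempty) : ∃ p, ∀ i, p ∈ S i := by
  rcases eq_or_ne a b with rfl | hab
  · refine ⟨a, fun i => ?_⟩
    obtain ⟨x, hx⟩ := hne i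
    have := hsub i hx
    rw [segment_same] at this
    rwa [← this]
  · exact helly_on_line (sub_ne_zero.2 (Ne.symm hab)) S
      (fun i => (hsub i).trans (seg_sub_line a b)) hne hcv hcp hpair

private lemma minsup_on_segment {κ X : Type*} [Fintype κ] [Nonempty κ] {a b : Fin d → ℝ}
    (S : κ → Set (Fin d → ℝ)) (hsub : ∀ i, S i ⊆ segment ℝ a b)
    (hcv : ∀ i, Convex ℝ (S i)) (hcp : ∀ i, IsCompact (S i)) (τ : κ → X)
    (hpair : ∀ i j, τ i ≠ τ j → (S i ∩ S j).Nonempty) :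
    ∃ i', (∀ j, τ j = τ i') ∨ (∃ r ∈ S i', ∀ j, τ j = τ i' ∨ r ∈ S j) := by
  classical
  rcases eq_or_ne a b with rfl | hab
  · by_cases hM : ∃ i, (S i).Nonempty
    · obtain ⟨i', hi'⟩ := hM
      have hmem : ∀ {j}, (S j).Nonempty → a ∈ S j := by
        intro j hj
        obtain ⟨x, hx⟩ := hj
        have := hsub j hx
        rw [segment_same] at this
        rwa [← this]
      refine ⟨i', Or.inr ⟨a, hmem hi', fun j => ?_⟩⟩
      by_cases hτ : τ j = τ i'
      · exact Or.inl hτ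
      · obtain ⟨x, hxj, -⟩ := hpair j i' hτ
        exact Or.inr (hmem ⟨x, hxj⟩)
    · push_neg at hM
      refine ⟨Classical.arbitrary κ, Or.inl fun j => ?_⟩
      by_contra h
      obtain ⟨y, hy, -⟩ := hpair j _ h
      rw [hM j] at hy
      exact hy
  · have hdir : b - a ≠ 0 := sub_ne_zero.2 (Ne.symm hab)
    have hsub' : ∀ i, S i ⊆ lineSet a (b - a) := fun i => (hsub i).trans (seg_sub_line a b)
    have hcont : Continuous (ellMap (b - a)) := (ellMap (b - a)).continuous_of_finiteDimensional
    obtain ⟨i', hi'⟩ := minsup1d (fun i => ellMap (b - a) '' S i)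
      (fun i => (hcv i).linear_image _) (fun i => (hcp i).image hcont) τ
      (fun i j hij => by
        obtain ⟨x, hxi, hxj⟩ := hpair i j hij
        exact ⟨ellMap (b-a) x, ⟨x, hxi, rfl⟩, ⟨x, hxj, rfl⟩⟩)
    rcases hi' with h | ⟨r, ⟨p, hpS, hpr⟩, hall⟩
    · exact ⟨i', Or.inl h⟩
    · refine ⟨i', Or.inr ⟨p, hpS, fun j => ?_⟩⟩
      rcases hall j with h | ⟨pj, hpj, hpjr⟩
      · exact Or.inl h
      · have : pj = p := line_inj hdir (hsub' j hpj) (hsub' i' hpS) (by rw [hpjr, hpr])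
        exact Or.inr (this ▸ hpj)

private lemma interval_sep_aux {Zh zh zh' : Set ℝ} (hZcv : Convex ℝ Zh) (hzcv : Convex ℝ zh)
    (hz'cv : Convex ℝ zh')
    (hdisj : ∀ x, x ∈ zh → x ∈ zh' → x ∈ Zh → False) {t t' y : ℝ}
    (ht : t ∈ zh) (htZ : t ∈ Zh) (ht' : t' ∈ zh') (ht'Z : t' ∈ Zh)
    (hy : y ∈ zh) (hy' : y ∈ zh') (htt' : t ≤ t') : False := by
  rcases le_total y t with h | h
  · exact hdisj t ht (hz'cv.ordConnected.out hy' ht' ⟨h, htt'⟩) htZ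
  · rcases le_total y t' with h2 | h2
    · exact hdisj y hy hy' (hZcv.ordConnected.out htZ ht'Z ⟨h, h2⟩)
    · exact hdisj t' (hzcv.ordConnected.out ht hy ⟨htt', h2⟩) ht' ht'Z

private lemma interval_sep {Zh zh zh' : Set ℝ} (hZcv : Convex ℝ Zh) (hzcv : Convex ℝ zh)
    (hz'cv : Convex ℝ zh')
    (hdisj : ∀ x, x ∈ zh → x ∈ zh' → x ∈ Zh → False) {t t' y : ℝ}
    (ht : t ∈ zh) (htZ : t ∈ Zh) (ht' : t' ∈ zh') (ht'Z : t' ∈ Zh)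
    (hy : y ∈ zh) (hy' : y ∈ zh') : False := by
  rcases le_total t t' with h | h
  · exact interval_sep_aux hZcv hzcv hz'cv hdisj ht htZ ht' ht'Z hy hy' h
  · exact interval_sep_aux hZcv hz'cv hzcv (fun x h1 h2 h3 => hdisj x h2 h1 h3)
      ht' ht'Z ht htZ hy' hy h

private lemma one_dim_sep_aux {U V W : Set ℝ} (hU : Convex ℝ U) (hV : Convex ℝ V)
    (hW : Convex ℝ W) {ζ x y : ℝ} (hζU : ζ ∈ U) (hζV : ζ ∈ V)
    (hWZ : ∀ z, z ∈ W → z ∈ U → z ∈ V → False)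
    (hxW : x ∈ W) (hxU : x ∈ U) (hyW : y ∈ W) (hyV : y ∈ V) (hxy : x ≤ y) : False := by
  rcases le_total ζ x with h | h
  · exact hWZ x hxW hxU (hV.ordConnected.out hζV hyV ⟨h, hxy⟩)
  · rcases le_total ζ y with h2 | h2
    · exact hWZ ζ (hW.ordConnected.out hxW hyW ⟨h, h2⟩) hζU hζV
    · exact hWZ y hyW (hU.ordConnected.out hxU hζU ⟨hxy, h2⟩) hyV

private lemma one_dim_sep {U V W : Set ℝ} (hU : Convex ℝ U) (hV : Convex ℝ V)
    (hW : Convex ℝ W) {ζ x y : ℝ} (hζU : ζ ∈ U) (hζV : ζ ∈ V)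
    (hWZ : ∀ z, z ∈ W → z ∈ U → z ∈ V → False)
    (hxW : x ∈ W) (hxU : x ∈ U) (hyW : y ∈ W) (hyV : y ∈ V) : False := by
  rcases le_total x y with h | h
  · exact one_dim_sep_aux hU hV hW hζU hζV hWZ hxW hxU hyW hyV h
  · exact one_dim_sep_aux hV hU hW hζV hζU (fun z h1 h2 h3 => hWZ z h1 h3 h2) hyW hyV hxW hxU h

private lemma quad_mem {ι : Type*} [Fintype ι] {F : ι → Set (Fin d → ℝ)}
    (h43 : ∀ P : Finset ι, P.card = 4 → ∃ Q ⊆ P, Q.card = 3 ∧ (⋂ i ∈ Q, F i).Nonempty)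
    {i j k l : ι} (hij : i ≠ j) (hik : i ≠ k) (hil : i ≠ l) (hjk : j ≠ k) (hjl : j ≠ l)
    (hkl : k ≠ l) :
    (F i ∩ F j ∩ F k).Nonempty ∨ (F i ∩ F j ∩ F l).Nonempty ∨
    (F i ∩ F k ∩ F l).Nonempty ∨ (F j ∩ F k ∩ F l).Nonempty := by
  classical
  have hcard : ({i, j, k, l} : Finset ι).card = 4 := by
    rw [Finset.card_insert_of_notMem (by simp [hij, hik, hil]),
        Finset.card_insert_of_notMem (by simp [hjk, hjl]),
        Finset.card_insert_of_notMem (by simp [hkl]), Finset.card_singleton]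
  obtain ⟨Q, hQP, hQ3, hne⟩ := h43 _ hcard
  obtain ⟨x, hx⟩ := hne
  have hxm : ∀ m ∈ Q, x ∈ F m := by
    intro m hm
    exact Set.mem_iInter₂.1 hx m hm
  have small : ∀ s t : ι, Q ⊆ ({s, t} : Finset ι) → False := by
    intro s t hsub
    have h2 : Q.card ≤ 2 := (Finset.card_le_card hsub).trans
      ((Finset.card_insert_le s {t}).trans (by simp))
    omega
  have hQm : ∀ m ∈ Q, m = i ∨ m = j ∨ m = k ∨ m = l := by
    intro m hm
    have := hQP hm
    simpa using this
  by_cases hi : i ∈ Q <;> by_cases hj : j ∈ Q <;> by_cases hk : k ∈ Q <;> by_cases hl : l ∈ Q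
  · exact Or.inl ⟨x, ⟨hxm i hi, hxm j hj⟩, hxm k hk⟩
  · exact Or.inl ⟨x, ⟨hxm i hi, hxm j hj⟩, hxm k hk⟩
  · exact Or.inr (Or.inl ⟨x, ⟨hxm i hi, hxm j hj⟩, hxm l hl⟩)
  · exact absurd (fun m hm => by
      have := hQm m hm
      simp only [Finset.mem_insert, Finset.mem_singleton]
      rcases this with rfl|rfl|rfl|rfl <;> tauto) (fun h => small i j h)
  · exact Or.inr (Or.inr (Or.inl ⟨x, ⟨hxm i hi, hxm k hk⟩, hxm l hl⟩))
  · exact absurd (fun m hm => by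
      have := hQm m hm
      simp only [Finset.mem_insert, Finset.mem_singleton]
      rcases this with rfl|rfl|rfl|rfl <;> tauto) (fun h => small i k h)
  · exact absurd (fun m hm => by
      have := hQm m hm
      simp only [Finset.mem_insert, Finset.mem_singleton]
      rcases this with rfl|rfl|rfl|rfl <;> tauto) (fun h => small i l h)
  · exact absurd (fun m hm => by
      have := hQm m hm
      simp only [Finset.mem_insert, Finset.mem_singleton]
      rcases this with rfl|rfl|rfl|rfl <;> tauto) (fun h => small i i h)
  · exact Or.inr (Or.inr (Or.inr ⟨x, ⟨hxm j hj, hxm k hk⟩, hxm l hl⟩))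
  · exact absurd (fun m hm => by
      have := hQm m hm
      simp only [Finset.mem_insert, Finset.mem_singleton]
      rcases this with rfl|rfl|rfl|rfl <;> tauto) (fun h => small j k h)
  · exact absurd (fun m hm => by
      have := hQm m hm
      simp only [Finset.mem_insert, Finset.mem_singleton]
      rcases this with rfl|rfl|rfl|rfl <;> tauto) (fun h => small j l h)
  · exact absurd (fun m hm => by
      have := hQm m hm
      simp only [Finset.mem_insert, Finset.mem_singleton]
      rcases this with rfl|rfl|rfl|rfl <;> tauto) (fun h => small j j h)
  · exact absurd (fun m hm => by
      have := hQm m hm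
      simp only [Finset.mem_insert, Finset.mem_singleton]
      rcases this with rfl|rfl|rfl|rfl <;> tauto) (fun h => small k l h)
  · exact absurd (fun m hm => by
      have := hQm m hm
      simp only [Finset.mem_insert, Finset.mem_singleton]
      rcases this with rfl|rfl|rfl|rfl <;> tauto) (fun h => small k k h)
  · exact absurd (fun m hm => by
      have := hQm m hm
      simp only [Finset.mem_insert, Finset.mem_singleton]
      rcases this with rfl|rfl|rfl|rfl <;> tauto) (fun h => small l l h)
  · exact absurd (fun m hm => by
      have := hQm m hm
      simp only [Finset.mem_insert, Finset.mem_singleton]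
      rcases this with rfl|rfl|rfl|rfl <;> tauto) (fun h => small i i h)

private lemma exists_fourth {ι : Type*} [Fintype ι] (hcard : 4 ≤ Fintype.card ι) (a b c : ι) :
    ∃ z : ι, z ≠ a ∧ z ≠ b ∧ z ≠ c := by
  classical
  by_contra h
  push_neg at h
  have hsub : (Finset.univ : Finset ι) ⊆ {a, b, c} := by
    intro w _
    by_cases h1 : w = a
    · simp [h1]
    by_cases h2 : w = b
    · simp [h2]
    simp [h w h1 h2]
  have h2 : Fintype.card ι ≤ 3 := by
    rw [← Finset.card_univ]
    refine (Finset.card_le_card hsub).trans ?_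
    refine (Finset.card_insert_le a {b, c}).trans ?_
    refine Nat.add_le_add_right ((Finset.card_insert_le b {c}).trans (by simp)) 1
  omega

private lemma case1a {ι : Type*} [Fintype ι] (F : ι → Set (Fin d → ℝ))
    (hseg : ∀ i, ∃ x y : Fin d → ℝ, F i = segment ℝ x y) (hcard : 4 ≤ Fintype.card ι)
    (h43 : ∀ P : Finset ι, P.card = 4 → ∃ Q ⊆ P, Q.card = 3 ∧ (⋂ i ∈ Q, F i).Nonempty)
    {a b c : ι} (hab : a ≠ b) (hac : a ≠ c) (hbc : b ≠ c)
    (hnc : ∀ x, x ∈ F a → x ∈ F b → x ∈ F c → False)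
    (hs1 : (F a ∩ F b).Subsingleton) (hs2 : (F a ∩ F c).Subsingleton)
    (hs3 : (F b ∩ F c).Subsingleton) :
    ∃ C : Finset (Fin d → ℝ), C.card ≤ 3 ∧ ∀ i, ∃ x ∈ C, x ∈ F i := by
  classical
  have hFne : ∀ i, (F i).Nonempty := fun i => by
    obtain ⟨x, y, h⟩ := hseg i; rw [h]; exact ⟨x, left_mem_segment ℝ x y⟩
  have chan : ∀ (s : Set (Fin d → ℝ)), s.Subsingleton → ∀ (hne : s.Nonempty) (z : ι),
      (s ∩ F z).Nonempty → hne.choose ∈ F z := by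
    rintro s hs hne z ⟨y, hy1, hy2⟩
    exact (hs hy1 hne.choose_spec) ▸ hy2
  have hquad : ∀ z : ι, z ≠ a → z ≠ b → z ≠ c →
      (F a ∩ F b ∩ F z).Nonempty ∨ (F a ∩ F c ∩ F z).Nonempty ∨ (F b ∩ F c ∩ F z).Nonempty := by
    intro z hza hzb hzc
    rcases quad_mem h43 hab hac (Ne.symm hza) hbc (Ne.symm hzb) (Ne.symm hzc) with h | h | h | h
    · exact absurd h (by rintro ⟨x, ⟨⟨h1, h2⟩, h3⟩⟩; exact hnc x h1 h2 h3)
    · exact Or.inl h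
    · exact Or.inr (Or.inl h)
    · exact Or.inr (Or.inr h)
  by_cases e1 : (F a ∩ F b).Nonempty <;> by_cases e2 : (F a ∩ F c).Nonempty <;>
    by_cases e3 : (F b ∩ F c).Nonempty
  -- TTT
  · refine ⟨{e1.choose, e2.choose, e3.choose},
      (Finset.card_insert_le _ _).trans (Nat.add_le_add_right ((Finset.card_insert_le _ _).trans
        (by simp)) 1), fun i => ?_⟩
    by_cases h : i = a
    · exact ⟨e1.choose, by simp, h ▸ e1.choose_spec.1⟩
    by_cases h2 : i = b
    · exact ⟨e1.choose, by simp, h2 ▸ e1.choose_spec.2⟩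
    by_cases h3 : i = c
    · exact ⟨e2.choose, by simp, h3 ▸ e2.choose_spec.2⟩
    rcases hquad i h h2 h3 with hh | hh | hh
    · exact ⟨e1.choose, by simp, chan _ hs1 e1 i hh⟩
    · exact ⟨e2.choose, by simp, chan _ hs2 e2 i hh⟩
    · exact ⟨e3.choose, by simp, chan _ hs3 e3 i hh⟩
  -- TTF
  · refine ⟨{e1.choose, e2.choose},
      (Finset.card_insert_le _ _).trans (by simp), fun i => ?_⟩
    by_cases h : i = a
    · exact ⟨e1.choose, by simp, h ▸ e1.choose_spec.1⟩
    by_cases h2 : i = b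
    · exact ⟨e1.choose, by simp, h2 ▸ e1.choose_spec.2⟩
    by_cases h3 : i = c
    · exact ⟨e2.choose, by simp, h3 ▸ e2.choose_spec.2⟩
    rcases hquad i h h2 h3 with hh | hh | hh
    · exact ⟨e1.choose, by simp, chan _ hs1 e1 i hh⟩
    · exact ⟨e2.choose, by simp, chan _ hs2 e2 i hh⟩
    · exact absurd ⟨hh.choose, hh.choose_spec.1⟩ e3
  -- TFT
  · refine ⟨{e1.choose, e3.choose},
      (Finset.card_insert_le _ _).trans (by simp), fun i => ?_⟩
    by_cases h : i = a
    · exact ⟨e1.choose, by simp, h ▸ e1.choose_spec.1⟩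
    by_cases h2 : i = b
    · exact ⟨e1.choose, by simp, h2 ▸ e1.choose_spec.2⟩
    by_cases h3 : i = c
    · exact ⟨e3.choose, by simp, h3 ▸ e3.choose_spec.2⟩
    rcases hquad i h h2 h3 with hh | hh | hh
    · exact ⟨e1.choose, by simp, chan _ hs1 e1 i hh⟩
    · exact absurd ⟨hh.choose, hh.choose_spec.1⟩ e2
    · exact ⟨e3.choose, by simp, chan _ hs3 e3 i hh⟩
  -- TFF
  · refine ⟨{e1.choose, (hFne c).choose},
      (Finset.card_insert_le _ _).trans (by simp), fun i => ?_⟩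
    by_cases h : i = a
    · exact ⟨e1.choose, by simp, h ▸ e1.choose_spec.1⟩
    by_cases h2 : i = b
    · exact ⟨e1.choose, by simp, h2 ▸ e1.choose_spec.2⟩
    by_cases h3 : i = c
    · exact ⟨(hFne c).choose, by simp, h3 ▸ (hFne c).choose_spec⟩
    rcases hquad i h h2 h3 with hh | hh | hh
    · exact ⟨e1.choose, by simp, chan _ hs1 e1 i hh⟩
    · exact absurd ⟨hh.choose, hh.choose_spec.1⟩ e2
    · exact absurd ⟨hh.choose, hh.choose_spec.1⟩ e3
  -- FTT
  · refine ⟨{e2.choose, e3.choose},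
      (Finset.card_insert_le _ _).trans (by simp), fun i => ?_⟩
    by_cases h : i = a
    · exact ⟨e2.choose, by simp, h ▸ e2.choose_spec.1⟩
    by_cases h2 : i = b
    · exact ⟨e3.choose, by simp, h2 ▸ e3.choose_spec.1⟩
    by_cases h3 : i = c
    · exact ⟨e2.choose, by simp, h3 ▸ e2.choose_spec.2⟩
    rcases hquad i h h2 h3 with hh | hh | hh
    · exact absurd ⟨hh.choose, hh.choose_spec.1⟩ e1
    · exact ⟨e2.choose, by simp, chan _ hs2 e2 i hh⟩
    · exact ⟨e3.choose, by simp, chan _ hs3 e3 i hh⟩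
  -- FTF
  · refine ⟨{e2.choose, (hFne b).choose},
      (Finset.card_insert_le _ _).trans (by simp), fun i => ?_⟩
    by_cases h : i = a
    · exact ⟨e2.choose, by simp, h ▸ e2.choose_spec.1⟩
    by_cases h2 : i = b
    · exact ⟨(hFne b).choose, by simp, h2 ▸ (hFne b).choose_spec⟩
    by_cases h3 : i = c
    · exact ⟨e2.choose, by simp, h3 ▸ e2.choose_spec.2⟩
    rcases hquad i h h2 h3 with hh | hh | hh
    · exact absurd ⟨hh.choose, hh.choose_spec.1⟩ e1
    · exact ⟨e2.choose, by simp, chan _ hs2 e2 i hh⟩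
    · exact absurd ⟨hh.choose, hh.choose_spec.1⟩ e3
  -- FFT
  · refine ⟨{e3.choose, (hFne a).choose},
      (Finset.card_insert_le _ _).trans (by simp), fun i => ?_⟩
    by_cases h : i = a
    · exact ⟨(hFne a).choose, by simp, h ▸ (hFne a).choose_spec⟩
    by_cases h2 : i = b
    · exact ⟨e3.choose, by simp, h2 ▸ e3.choose_spec.1⟩
    by_cases h3 : i = c
    · exact ⟨e3.choose, by simp, h3 ▸ e3.choose_spec.2⟩
    rcases hquad i h h2 h3 with hh | hh | hh
    · exact absurd ⟨hh.choose, hh.choose_spec.1⟩ e1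
    · exact absurd ⟨hh.choose, hh.choose_spec.1⟩ e2
    · exact ⟨e3.choose, by simp, chan _ hs3 e3 i hh⟩
  -- FFF
  · exfalso
    obtain ⟨z, hza, hzb, hzc⟩ := exists_fourth hcard a b c
    rcases hquad z hza hzb hzc with hh | hh | hh
    · exact e1 ⟨hh.choose, hh.choose_spec.1⟩
    · exact e2 ⟨hh.choose, hh.choose_spec.1⟩
    · exact e3 ⟨hh.choose, hh.choose_spec.1⟩

private lemma case0 {ι : Type*} [Fintype ι] (F : ι → Set (Fin d → ℝ))
    (hseg : ∀ i, ∃ x y : Fin d → ℝ, F i = segment ℝ x y) (hcard : 4 ≤ Fintype.card ι)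
    (h3 : ∀ a b c : ι, a ≠ b → a ≠ c → b ≠ c → (F a ∩ F b ∩ F c).Nonempty) :
    ∃ C : Finset (Fin d → ℝ), C.card ≤ 3 ∧ ∀ i, ∃ x ∈ C, x ∈ F i := by
  classical
  have hFcvx : ∀ i, Convex ℝ (F i) := fun i => by
    obtain ⟨x, y, h⟩ := hseg i; rw [h]; exact convex_segment x y
  have hFcpt : ∀ i, IsCompact (F i) := fun i => by
    obtain ⟨x, y, h⟩ := hseg i
    rw [h, segment_eq_image']
    exact isCompact_Icc.image (by continuity)
  have hpos : 0 < Fintype.card ι := by omega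
  have hι : Nonempty ι := Fintype.card_pos_iff.1 hpos
  obtain ⟨a⟩ := hι
  have hlt : 1 < Fintype.card ι := by omega
  obtain ⟨z1, hz1⟩ := Fintype.exists_ne_of_one_lt_card hlt a
  haveI : Nonempty {z : ι // z ≠ a} := ⟨⟨z1, hz1⟩⟩
  obtain ⟨sx, sy, hFa⟩ := hseg a
  have hthird : ∀ z : ι, ∃ w : ι, w ≠ a ∧ w ≠ z := by
    intro z
    by_contra h
    push_neg at h
    have hsub : (Finset.univ : Finset ι) ⊆ {a, z} := by
      intro w _
      by_cases hw : w = a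
      · simp [hw]
      · simp [h w hw]
    have h2 : Fintype.card ι ≤ 2 := by
      rw [← Finset.card_univ]
      exact (Finset.card_le_card hsub).trans ((Finset.card_insert_le a {z}).trans (by simp))
    omega
  have hSne : ∀ z : {z : ι // z ≠ a}, (F a ∩ F z.1).Nonempty := by
    intro z
    obtain ⟨w, hwa, hwz⟩ := hthird z.1
    obtain ⟨x, hx⟩ := h3 a z.1 w (Ne.symm z.2) (Ne.symm hwa) (Ne.symm hwz)
    exact ⟨x, hx.1⟩
  obtain ⟨p, hp⟩ := helly_on_segment (fun z : {z : ι // z ≠ a} => F a ∩ F z.1)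
    (fun z => by rw [← hFa]; exact inter_subset_left)
    hSne
    (fun z => (hFcvx a).inter (hFcvx z.1))
    (fun z => (hFcpt a).inter_right (hFcpt z.1).isClosed)
    (fun z z' => by
      by_cases h : z.1 = z'.1
      · obtain ⟨x, hx⟩ := hSne z
        refine ⟨x, hx, hx.1, ?_⟩
        rw [← h]
        exact hx.2
      · obtain ⟨x, hx⟩ := h3 a z.1 z'.1 (Ne.symm z.2) (Ne.symm z'.2) h
        exact ⟨x, ⟨hx.1.1, hx.1.2⟩, ⟨hx.1.1, hx.2⟩⟩)
  refine ⟨{p}, by simp, fun i => ⟨p, by simp, ?_⟩⟩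
  by_cases h : i = a
  · subst h
    exact (hp ⟨z1, hz1⟩).1
  · exact (hp ⟨i, h⟩).2

private lemma caseC2core {ι : Type*} [Fintype ι] (F : ι → Set (Fin d → ℝ))
    (hseg : ∀ i, ∃ x y : Fin d → ℝ, F i = segment ℝ x y)
    (h43 : ∀ P : Finset ι, P.card = 4 → ∃ Q ⊆ P, Q.card = 3 ∧ (⋂ i ∈ Q, F i).Nonempty)
    {a b c : ι} (hab : a ≠ b) (hac : a ≠ c) (hbc : b ≠ c)
    {z₀ z₁ : Fin d → ℝ} (hz₀ : z₀ ∈ F a ∩ F b) (hz₁ : z₁ ∈ F a ∩ F b) (hz : z₀ ≠ z₁)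
    (hcZ : ∀ x, x ∈ F c → x ∈ F a → x ∈ F b → False)
    (hflatW : ∀ j, ¬(F j ∩ (F a ∩ F b)).Nonempty → F j ⊆ lineSet z₀ (z₁ - z₀))
    (q : Fin d → ℝ) (hqW : ∀ j, ¬(F j ∩ (F a ∩ F b)).Nonempty → q ∈ F j)
    (hacE : F a ∩ F c = ∅) :
    ∃ C : Finset (Fin d → ℝ), C.card ≤ 3 ∧ ∀ i, ∃ x ∈ C, x ∈ F i := by
  classical
  have hFcvx : ∀ i, Convex ℝ (F i) := fun i => by
    obtain ⟨x, y, h⟩ := hseg i; rw [h]; exact convex_segment x y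
  have hFcpt : ∀ i, IsCompact (F i) := fun i => by
    obtain ⟨x, y, h⟩ := hseg i
    rw [h, segment_eq_image']
    exact isCompact_Icc.image (by continuity)
  have hFne : ∀ i, (F i).Nonempty := fun i => by
    obtain ⟨x, y, h⟩ := hseg i; rw [h]; exact ⟨x, left_mem_segment ℝ x y⟩
  set dir := z₁ - z₀ with hdirdef
  have hdir : dir ≠ 0 := sub_ne_zero.2 (Ne.symm hz)
  set L := lineSet z₀ dir with hLdef
  have hz0L : z₀ ∈ L := ⟨0, by simp⟩
  have hz1L : z₁ ∈ L := ⟨1, by module⟩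
  set Z := F a ∩ F b with hZdef
  have hu : F a ⊆ L := by
    obtain ⟨x, y, hF⟩ := hseg a
    rw [hF]
    exact seg_subset_line (hF ▸ hz₀.1) (hF ▸ hz₁.1) hz hz0L hz1L
  have hv : F b ⊆ L := by
    obtain ⟨x, y, hF⟩ := hseg b
    rw [hF]
    exact seg_subset_line (hF ▸ hz₀.2) (hF ▸ hz₁.2) hz hz0L hz1L
  have hZL : Z ⊆ L := fun x hx => hu hx.1
  set Qp : ι → Prop := fun z => (F z ∩ Z).Nonempty with hQpdef
  have hQa : Qp a := ⟨z₀, hz₀.1, hz₀⟩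
  have hWc : ¬ Qp c := by
    rintro ⟨x, hx1, hx2⟩
    exact hcZ x hx1 hx2.1 hx2.2
  have hss : ∀ z, ¬(F z ⊆ L) → ∀ x ∈ F z, x ∈ L → ∀ y ∈ F z, y ∈ L → x = y := by
    intro z hnfl x hx hxL y hy hyL
    obtain ⟨p, s, hF⟩ := hseg z
    rw [hF] at hnfl hx hy
    exact seg_line_ss hnfl ⟨hx, hxL⟩ ⟨hy, hyL⟩
  set τ : ι → (Fin d → ℝ) := fun z =>
    if h : (F z ∩ Z).Nonempty then h.choose else z₀ with hτdef
  have hτZ : ∀ z, Qp z → τ z ∈ F z ∩ Z := by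
    intro z h
    simp only [hτdef, dif_pos h]
    split_ifs with h'
    · exact h'.choose_spec
    · exact absurd h h'
  have hτsing : ∀ z, Qp z → ¬(F z ⊆ L) → ∀ x ∈ F z, x ∈ L → x = τ z := by
    intro z h hnfl x hx hxL
    exact hss z hnfl x hx hxL (τ z) (hτZ z h).1 (hZL (hτZ z h).2)
  -- the quad consequence
  have Hq : ∀ z z', Qp z → Qp z' → z ≠ z' → ¬(F z ∩ Z ∩ (F z' ∩ Z)).Nonempty →
      (F z ∩ F z' ∩ F a).Nonempty ∨ (F z ∩ F z' ∩ F c).Nonempty := by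
    intro z z' hQz hQz' hzz' hT
    have hza : z ≠ a := by
      rintro rfl
      exact hT ⟨τ z', ⟨(hτZ z' hQz').2.1, (hτZ z' hQz').2⟩, hτZ z' hQz'⟩
    have hz'a : z' ≠ a := by
      rintro rfl
      exact hT ⟨τ z, hτZ z hQz, ⟨(hτZ z hQz).2.1, (hτZ z hQz).2⟩⟩
    have hzc : z ≠ c := fun h => hWc (h ▸ hQz)
    have hz'c : z' ≠ c := fun h => hWc (h ▸ hQz')
    rcases quad_mem h43 hzz' hza hzc hz'a hz'c hac with h | h | h | h
    · exact Or.inl h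
    · exact Or.inr h
    · obtain ⟨x, hx⟩ := h
      exfalso
      have : x ∈ F a ∩ F c := ⟨hx.1.2, hx.2⟩
      rw [hacE] at this
      exact this
    · obtain ⟨x, hx⟩ := h
      exfalso
      have : x ∈ F a ∩ F c := ⟨hx.1.2, hx.2⟩
      rw [hacE] at this
      exact this
  -- flats of Q pairwise intersect
  haveI : Fintype {z : ι // Qp z ∧ F z ⊆ L} := Fintype.ofFinite _
  haveI hFQne : Nonempty {z : ι // Qp z ∧ F z ⊆ L} := ⟨⟨a, hQa, hu⟩⟩
  obtain ⟨p, hpAll⟩ := helly_on_line hdir (fun n : {z : ι // Qp z ∧ F z ⊆ L} => F n.1)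
    (fun n => n.2.2) (fun n => hFne n.1) (fun n => hFcvx n.1) (fun n => hFcpt n.1)
    (by
      rintro ⟨n, hQn, hfn⟩ ⟨m, hQm, hfm⟩
      by_cases hnm : n = m
      · subst hnm
        obtain ⟨x, hx⟩ := hFne n
        exact ⟨x, hx, hx⟩
      by_cases hT : (F n ∩ Z ∩ (F m ∩ Z)).Nonempty
      · obtain ⟨x, hx⟩ := hT
        exact ⟨x, hx.1.1, hx.2.1⟩
      rcases Hq n m hQn hQm hnm hT with ⟨y, hy⟩ | ⟨y, hy⟩
      · exact ⟨y, hy.1.1, hy.1.2⟩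
      · exact ⟨y, hy.1.1, hy.1.2⟩)
  -- nonflats of Q share τ
  have hnfτ : ∀ z z', Qp z → Qp z' → ¬(F z ⊆ L) → ¬(F z' ⊆ L) → τ z = τ z' := by
    intro z z' hQz hQz' hnz hnz'
    by_contra hττ
    have hzz' : z ≠ z' := fun h => hττ (h ▸ rfl)
    have hT : ¬(F z ∩ Z ∩ (F z' ∩ Z)).Nonempty := by
      rintro ⟨x, hx1, hx2⟩
      have e1 : x = τ z := hτsing z hQz hnz x hx1.1 (hZL hx1.2)
      have e2 : x = τ z' := hτsing z' hQz' hnz' x hx2.1 (hZL hx2.2)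
      exact hττ (e1 ▸ e2 ▸ rfl)
    rcases Hq z z' hQz hQz' hzz' hT with ⟨y, hy⟩ | ⟨y, hy⟩
    · have e1 : y = τ z := hτsing z hQz hnz y hy.1.1 (hu hy.2)
      have e2 : y = τ z' := hτsing z' hQz' hnz' y hy.1.2 (hu hy.2)
      exact hττ (e1 ▸ e2 ▸ rfl)
    · have hcL : F c ⊆ L := hflatW c hWc
      have e1 : y = τ z := hτsing z hQz hnz y hy.1.1 (hcL hy.2)
      have e2 : y = τ z' := hτsing z' hQz' hnz' y hy.1.2 (hcL hy.2)
      exact hττ (e1 ▸ e2 ▸ rfl)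
  by_cases hEx : ∃ z, Qp z ∧ ¬(F z ⊆ L)
  · obtain ⟨zs, hQzs, hnzs⟩ := hEx
    refine ⟨{q, p, τ zs}, (Finset.card_insert_le _ _).trans (Nat.add_le_add_right
      ((Finset.card_insert_le _ _).trans (by simp)) 1), fun i => ?_⟩
    by_cases hQi : Qp i
    · by_cases hfl : F i ⊆ L
      · exact ⟨p, by simp, hpAll ⟨i, hQi, hfl⟩⟩
      · refine ⟨τ zs, by simp, ?_⟩
        rw [← hnfτ i zs hQi hQzs hfl hnzs]
        exact (hτZ i hQi).1
    · exact ⟨q, by simp, hqW i hQi⟩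
  · refine ⟨{q, p}, (Finset.card_insert_le _ _).trans (by simp), fun i => ?_⟩
    by_cases hQi : Qp i
    · have hfl : F i ⊆ L := by
        by_contra hnfl
        exact hEx ⟨i, hQi, hnfl⟩
      exact ⟨p, by simp, hpAll ⟨i, hQi, hfl⟩⟩
    · exact ⟨q, by simp, hqW i hQi⟩

set_option maxHeartbeats 1000000 in
private lemma caseC {ι : Type*} [Fintype ι] (F : ι → Set (Fin d → ℝ))
    (hseg : ∀ i, ∃ x y : Fin d → ℝ, F i = segment ℝ x y)
    (h43 : ∀ P : Finset ι, P.card = 4 → ∃ Q ⊆ P, Q.card = 3 ∧ (⋂ i ∈ Q, F i).Nonempty)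
    {a b c : ι} (hab : a ≠ b) (hac : a ≠ c) (hbc : b ≠ c)
    {z₀ z₁ : Fin d → ℝ} (hz₀ : z₀ ∈ F a ∩ F b) (hz₁ : z₁ ∈ F a ∩ F b) (hz : z₀ ≠ z₁)
    (hcZ : ∀ x, x ∈ F c → x ∈ F a → x ∈ F b → False) :
    ∃ C : Finset (Fin d → ℝ), C.card ≤ 3 ∧ ∀ i, ∃ x ∈ C, x ∈ F i := by
  classical
  have hFcvx : ∀ i, Convex ℝ (F i) := fun i => by
    obtain ⟨x, y, h⟩ := hseg i; rw [h]; exact convex_segment x y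
  have hFcpt : ∀ i, IsCompact (F i) := fun i => by
    obtain ⟨x, y, h⟩ := hseg i
    rw [h, segment_eq_image']
    exact isCompact_Icc.image (by continuity)
  have hFne : ∀ i, (F i).Nonempty := fun i => by
    obtain ⟨x, y, h⟩ := hseg i; rw [h]; exact ⟨x, left_mem_segment ℝ x y⟩
  set dir := z₁ - z₀ with hdirdef
  have hdir : dir ≠ 0 := sub_ne_zero.2 (Ne.symm hz)
  set L := lineSet z₀ dir with hLdef
  have hz0L : z₀ ∈ L := ⟨0, by simp⟩
  have hz1L : z₁ ∈ L := ⟨1, by module⟩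
  set Z := F a ∩ F b with hZdef
  have hZcvx : Convex ℝ Z := (hFcvx a).inter (hFcvx b)
  have hu : F a ⊆ L := by
    obtain ⟨x, y, hF⟩ := hseg a
    rw [hF]
    exact seg_subset_line (hF ▸ hz₀.1) (hF ▸ hz₁.1) hz hz0L hz1L
  have hv : F b ⊆ L := by
    obtain ⟨x, y, hF⟩ := hseg b
    rw [hF]
    exact seg_subset_line (hF ▸ hz₀.2) (hF ▸ hz₁.2) hz hz0L hz1L
  have hZL : Z ⊆ L := fun x hx => hu hx.1
  set Qp : ι → Prop := fun z => (F z ∩ Z).Nonempty with hQpdef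
  have hQa : Qp a := ⟨z₀, hz₀.1, hz₀⟩
  have hQb : Qp b := ⟨z₀, hz₀.2, hz₀⟩
  have hWc : ¬ Qp c := by
    rintro ⟨x, hx1, hx2⟩
    exact hcZ x hx1 hx2.1 hx2.2
  have hss : ∀ z, ¬(F z ⊆ L) → ∀ x ∈ F z, x ∈ L → ∀ y ∈ F z, y ∈ L → x = y := by
    intro z hnfl x hx hxL y hy hyL
    obtain ⟨p, s, hF⟩ := hseg z
    rw [hF] at hnfl hx hy
    exact seg_line_ss hnfl ⟨hx, hxL⟩ ⟨hy, hyL⟩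
  set τ : ι → (Fin d → ℝ) := fun z =>
    if h : (F z ∩ Z).Nonempty then h.choose else z₀ with hτdef
  have hτZ : ∀ z, Qp z → τ z ∈ F z ∩ Z := by
    intro z h
    simp only [hτdef, dif_pos h]
    split_ifs with h'
    · exact h'.choose_spec
    · exact absurd h h'
  have hτsing : ∀ z, Qp z → ¬(F z ⊆ L) → ∀ x ∈ F z, x ∈ L → x = τ z := by
    intro z h hnfl x hx hxL
    exact hss z hnfl x hx hxL (τ z) (hτZ z h).1 (hZL (hτZ z h).2)
  by_cases hC1 : ∃ iw, ¬ Qp iw ∧ ¬(F iw ⊆ L)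
  · -- CASE C1
    obtain ⟨iw, hiwW, hiwNF⟩ := hC1
    have hqdata : ∃ q, q ∈ F iw ∧ (∀ x, x ∈ F iw → x ∈ L → x = q) := by
      by_cases hqe : (F iw ∩ L).Nonempty
      · exact ⟨hqe.choose, hqe.choose_spec.1, fun x hx hxL =>
          hss iw hiwNF x hx hxL _ hqe.choose_spec.1 hqe.choose_spec.2⟩
      · exact ⟨(hFne iw).choose, (hFne iw).choose_spec,
          fun x hx hxL => (hqe ⟨x, hx, hxL⟩).elim⟩
    obtain ⟨q, hq_w, hql⟩ := hqdata
    have haiw : a ≠ iw := fun h => hiwW (h ▸ hQa)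
    have hbiw : b ≠ iw := fun h => hiwW (h ▸ hQb)
    have hqW : ∀ j, ¬ Qp j → q ∈ F j := by
      intro j hj
      by_cases hji : j = iw
      · exact hji ▸ hq_w
      have haj : a ≠ j := fun h => hj (h ▸ hQa)
      have hbj : b ≠ j := fun h => hj (h ▸ hQb)
      rcases quad_mem h43 hab haiw haj hbiw hbj (fun h => hji h.symm) with h | h | h | h
      · exact absurd ⟨h.choose, h.choose_spec.2, h.choose_spec.1⟩ hiwW
      · exact absurd ⟨h.choose, h.choose_spec.2, h.choose_spec.1⟩ hj
      · obtain ⟨x, hx⟩ := h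
        exact (hql x hx.1.2 (hu hx.1.1)) ▸ hx.2
      · obtain ⟨x, hx⟩ := h
        exact (hql x hx.1.2 (hv hx.1.1)) ▸ hx.2
    set Q'p : ι → Prop := fun z => Qp z ∧ q ∉ F z with hQ'def
    have C1q : ∀ z z', Q'p z → Q'p z' → z ≠ z' → ¬(F z ∩ Z ∩ (F z' ∩ Z)).Nonempty →
        (F z ∩ F z' ∩ F a).Nonempty ∨ (F z ∩ F z' ∩ F iw).Nonempty := by
      intro z z' hz hz' hzz' hT
      have hza : z ≠ a := by
        rintro rfl
        exact hT ⟨τ z', ⟨(hτZ z' hz'.1).2.1, (hτZ z' hz'.1).2⟩, hτZ z' hz'.1⟩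
      have hz'a : z' ≠ a := by
        rintro rfl
        exact hT ⟨τ z, hτZ z hz.1, ⟨(hτZ z hz.1).2.1, (hτZ z hz.1).2⟩⟩
      have hziw : z ≠ iw := fun h => hiwW (h ▸ hz.1)
      have hz'iw : z' ≠ iw := fun h => hiwW (h ▸ hz'.1)
      rcases quad_mem h43 hzz' hza hziw hz'a hz'iw haiw with h | h | h | h
      · exact Or.inl h
      · exact Or.inr h
      · obtain ⟨x, hx⟩ := h
        exact absurd ((hql x hx.2 (hu hx.1.2)) ▸ hx.1.1) hz.2
      · obtain ⟨x, hx⟩ := h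
        exact absurd ((hql x hx.2 (hu hx.1.2)) ▸ hx.1.1) hz'.2
    have hd1 : ∀ z z', Q'p z → Q'p z' → F z ⊆ L → F z' ⊆ L → z ≠ z' →
        (F z ∩ Z ∩ (F z' ∩ Z)).Nonempty := by
      intro z z' hz hz' hfz hfz' hzz'
      by_contra hT
      have hy : ∃ y, y ∈ F z ∩ F z' := by
        rcases C1q z z' hz hz' hzz' hT with ⟨y, hy⟩ | ⟨y, hy⟩
        · exact ⟨y, hy.1⟩
        · exact ⟨y, hy.1⟩
      obtain ⟨y, hy⟩ := hy
      have hdisj : ∀ x : ℝ, x ∈ ellMap dir '' F z → x ∈ ellMap dir '' F z' →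
          x ∈ ellMap dir '' Z → False := by
        rintro x ⟨p1, hp1, e1⟩ ⟨p2, hp2, e2⟩ ⟨p3, hp3, e3⟩
        have h13 : p1 = p3 := line_inj hdir (hfz hp1) (hZL hp3) (e1.trans e3.symm)
        have h23 : p2 = p3 := line_inj hdir (hfz' hp2) (hZL hp3) (e2.trans e3.symm)
        exact hT ⟨p3, ⟨h13 ▸ hp1, hp3⟩, ⟨h23 ▸ hp2, hp3⟩⟩
      exact interval_sep (hZcvx.linear_image (ellMap dir))
        ((hFcvx z).linear_image (ellMap dir)) ((hFcvx z').linear_image (ellMap dir)) hdisj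
        ⟨τ z, (hτZ z hz.1).1, rfl⟩ ⟨τ z, (hτZ z hz.1).2, rfl⟩
        ⟨τ z', (hτZ z' hz'.1).1, rfl⟩ ⟨τ z', (hτZ z' hz'.1).2, rfl⟩
        ⟨y, hy.1, rfl⟩ ⟨y, hy.2, rfl⟩
    have hd2 : ∀ z z', Q'p z → Q'p z' → F z ⊆ L → ¬(F z' ⊆ L) → τ z' ∈ F z ∩ Z := by
      intro z z' hz hz' hfz hnfz'
      by_contra hτn
      have hzz' : z ≠ z' := fun h => hnfz' (h ▸ hfz)
      have hT : ¬(F z ∩ Z ∩ (F z' ∩ Z)).Nonempty := by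
        rintro ⟨x, hx1, hx2⟩
        have hxe : x = τ z' := hτsing z' hz'.1 hnfz' x hx2.1 (hZL hx2.2)
        exact hτn (hxe ▸ hx1)
      rcases C1q z z' hz hz' hzz' hT with ⟨y, hy⟩ | ⟨y, hy⟩
      · have hye : y = τ z' := hτsing z' hz'.1 hnfz' y hy.1.2 (hu hy.2)
        exact hτn ⟨hye ▸ hy.1.1, (hτZ z' hz'.1).2⟩
      · have hye : y = q := hql y hy.2 (hfz hy.1.1)
        exact hz.2 (hye ▸ hy.1.1)
    have hd3 : ∀ z z', Q'p z → Q'p z' → ¬(F z ⊆ L) → ¬(F z' ⊆ L) → τ z ≠ τ z' →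
        ((F z ∩ F iw) ∩ (F z' ∩ F iw)).Nonempty := by
      intro z z' hz hz' hnf hnf' hττ
      have hzz' : z ≠ z' := fun h => hττ (h ▸ rfl)
      have hT : ¬(F z ∩ Z ∩ (F z' ∩ Z)).Nonempty := by
        rintro ⟨x, hx1, hx2⟩
        have e1 : x = τ z := hτsing z hz.1 hnf x hx1.1 (hZL hx1.2)
        have e2 : x = τ z' := hτsing z' hz'.1 hnf' x hx2.1 (hZL hx2.2)
        exact hττ (e1 ▸ e2 ▸ rfl)
      rcases C1q z z' hz hz' hzz' hT with ⟨y, hy⟩ | ⟨y, hy⟩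
      · have e1 : y = τ z := hτsing z hz.1 hnf y hy.1.1 (hu hy.2)
        have e2 : y = τ z' := hτsing z' hz'.1 hnf' y hy.1.2 (hu hy.2)
        exact absurd (e1 ▸ e2 ▸ rfl) hττ
      · exact ⟨y, ⟨hy.1.1, hy.2⟩, ⟨hy.1.2, hy.2⟩⟩
    haveI : Fintype {z : ι // Q'p z ∧ ¬(F z ⊆ L)} := Fintype.ofFinite _
    by_cases hN : Nonempty {z : ι // Q'p z ∧ ¬(F z ⊆ L)}
    · haveI := hN
      obtain ⟨wx, wy, hw⟩ := hseg iw
      obtain ⟨i', hi'⟩ := minsup_on_segment (a := wx) (b := wy)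
        (fun n : {z : ι // Q'p z ∧ ¬(F z ⊆ L)} => F n.1 ∩ F iw)
        (fun n => by rw [← hw]; exact inter_subset_right)
        (fun n => (hFcvx n.1).inter (hFcvx iw))
        (fun n => (hFcpt n.1).inter_right (hFcpt iw).isClosed)
        (fun n => τ n.1)
        (fun n m hττ => hd3 n.1 m.1 n.2.1 m.2.1 n.2.2 m.2.2 hττ)
      rcases hi' with hAll | ⟨r, hrS, hall⟩
      · refine ⟨{q, τ i'.1}, (Finset.card_insert_le _ _).trans (by simp), fun i => ?_⟩
        by_cases hQi : Qp i
        · by_cases hqi : q ∈ F i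
          · exact ⟨q, by simp, hqi⟩
          by_cases hfl : F i ⊆ L
          · exact ⟨τ i'.1, by simp, (hd2 i i'.1 ⟨hQi, hqi⟩ i'.2.1 hfl i'.2.2).1⟩
          · have he := hAll ⟨i, ⟨hQi, hqi⟩, hfl⟩
            exact ⟨τ i'.1, by simp, he ▸ (hτZ i hQi).1⟩
        · exact ⟨q, by simp, hqW i hQi⟩
      · refine ⟨{q, τ i'.1, r}, (Finset.card_insert_le _ _).trans (Nat.add_le_add_right
          ((Finset.card_insert_le _ _).trans (by simp)) 1), fun i => ?_⟩
        by_cases hQi : Qp i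
        · by_cases hqi : q ∈ F i
          · exact ⟨q, by simp, hqi⟩
          by_cases hfl : F i ⊆ L
          · exact ⟨τ i'.1, by simp, (hd2 i i'.1 ⟨hQi, hqi⟩ i'.2.1 hfl i'.2.2).1⟩
          · rcases hall ⟨i, ⟨hQi, hqi⟩, hfl⟩ with he | hr'
            · exact ⟨τ i'.1, by simp, he ▸ (hτZ i hQi).1⟩
            · exact ⟨r, by simp, hr'.1⟩
        · exact ⟨q, by simp, hqW i hQi⟩
    · haveI : Fintype {z : ι // Q'p z ∧ F z ⊆ L} := Fintype.ofFinite _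
      by_cases hFQ : Nonempty {z : ι // Q'p z ∧ F z ⊆ L}
      · haveI := hFQ
        obtain ⟨pf, hpf⟩ := helly_on_line hdir
          (fun n : {z : ι // Q'p z ∧ F z ⊆ L} => F n.1 ∩ Z)
          (fun n x hx => hZL hx.2) (fun n => n.2.1.1)
          (fun n => (hFcvx n.1).inter hZcvx)
          (fun n => (hFcpt n.1).inter_right
            (((hFcpt a).inter_right (hFcpt b).isClosed).isClosed))
          (by
            rintro ⟨n, hn, hfn⟩ ⟨m, hm, hfm⟩
            by_cases hnm : n = m
            · subst hnm
              obtain ⟨x, hx⟩ := hn.1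
              exact ⟨x, hx, hx⟩
            · exact hd1 n m hn hm hfn hfm hnm)
        refine ⟨{q, pf}, (Finset.card_insert_le _ _).trans (by simp), fun i => ?_⟩
        by_cases hQi : Qp i
        · by_cases hqi : q ∈ F i
          · exact ⟨q, by simp, hqi⟩
          have hfl : F i ⊆ L := by
            by_contra hnfl
            exact hN ⟨⟨i, ⟨hQi, hqi⟩, hnfl⟩⟩
          exact ⟨pf, by simp, (hpf ⟨i, ⟨hQi, hqi⟩, hfl⟩).1⟩
        · exact ⟨q, by simp, hqW i hQi⟩
      · refine ⟨{q}, by simp, fun i => ⟨q, by simp, ?_⟩⟩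
        by_cases hQi : Qp i
        · by_contra hqi
          by_cases hfl : F i ⊆ L
          · exact hFQ ⟨⟨i, ⟨hQi, hqi⟩, hfl⟩⟩
          · exact hN ⟨⟨i, ⟨hQi, hqi⟩, hfl⟩⟩
        · exact hqW i hQi
  · -- CASE C2
    have hallflat : ∀ j, ¬ Qp j → F j ⊆ L := by
      intro j hj
      by_contra hnfl
      exact hC1 ⟨j, hj, hnfl⟩
    haveI : Fintype {j : ι // ¬ Qp j} := Fintype.ofFinite _
    haveI : Nonempty {j : ι // ¬ Qp j} := ⟨⟨c, hWc⟩⟩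
    have hWpair : ∀ n m : {j : ι // ¬ Qp j}, (F n.1 ∩ F m.1).Nonempty := by
      rintro ⟨n, hn⟩ ⟨m, hm⟩
      by_cases hnm : n = m
      · subst hnm
        obtain ⟨x, hx⟩ := hFne n
        exact ⟨x, hx, hx⟩
      have han : a ≠ n := fun h => hn (h ▸ hQa)
      have hbn : b ≠ n := fun h => hn (h ▸ hQb)
      have ham : a ≠ m := fun h => hm (h ▸ hQa)
      have hbm : b ≠ m := fun h => hm (h ▸ hQb)
      rcases quad_mem h43 hab han ham hbn hbm hnm with h | h | h | h
      · exact absurd ⟨h.choose, h.choose_spec.2, h.choose_spec.1⟩ hn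
      · exact absurd ⟨h.choose, h.choose_spec.2, h.choose_spec.1⟩ hm
      · obtain ⟨x, hx⟩ := h
        exact ⟨x, hx.1.2, hx.2⟩
      · obtain ⟨x, hx⟩ := h
        exact ⟨x, hx.1.2, hx.2⟩
    obtain ⟨q, hqAll⟩ := helly_on_line hdir (fun n : {j : ι // ¬ Qp j} => F n.1)
      (fun n => hallflat n.1 n.2) (fun n => hFne n.1) (fun n => hFcvx n.1)
      (fun n => hFcpt n.1) hWpair
    have hqW : ∀ j, ¬ Qp j → q ∈ F j := fun j hj => hqAll ⟨j, hj⟩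
    have hdisjUV : F a ∩ F c = ∅ ∨ F b ∩ F c = ∅ := by
      by_contra hcon
      push_neg at hcon
      obtain ⟨h1, h2⟩ := hcon
      obtain ⟨xa, hxa⟩ := h1
      obtain ⟨xb, hxb⟩ := h2
      have hcL : F c ⊆ L := hallflat c hWc
      have hWZ : ∀ t : ℝ, t ∈ ellMap dir '' F c → t ∈ ellMap dir '' F a →
          t ∈ ellMap dir '' F b → False := by
        rintro t ⟨pc, hpc, ec⟩ ⟨pa, hpa, ea⟩ ⟨pb, hpb, eb⟩
        have hca : pc = pa := line_inj hdir (hcL hpc) (hu hpa) (ec.trans ea.symm)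
        have hcb : pc = pb := line_inj hdir (hcL hpc) (hv hpb) (ec.trans eb.symm)
        exact hcZ pc hpc (hca ▸ hpa) (hcb ▸ hpb)
      exact one_dim_sep ((hFcvx a).linear_image (ellMap dir))
        ((hFcvx b).linear_image (ellMap dir)) ((hFcvx c).linear_image (ellMap dir))
        ⟨z₀, hz₀.1, rfl⟩ ⟨z₀, hz₀.2, rfl⟩ hWZ
        ⟨xa, hxa.2, rfl⟩ ⟨xa, hxa.1, rfl⟩ ⟨xb, hxb.2, rfl⟩ ⟨xb, hxb.1, rfl⟩
    rcases hdisjUV with hE | hE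
    · exact caseC2core F hseg h43 hab hac hbc hz₀ hz₁ hz hcZ hallflat q hqW hE
    · refine caseC2core F hseg h43 (Ne.symm hab) hbc hac
        (⟨hz₀.2, hz₀.1⟩ : z₀ ∈ F b ∩ F a) ⟨hz₁.2, hz₁.1⟩ hz
        (fun x h1 h2 h3 => hcZ x h1 h3 h2) ?_ q ?_ hE
      · intro j hj
        refine hallflat j (fun hQ => hj ?_)
        obtain ⟨x, hx1, hx2⟩ := hQ
        exact ⟨x, hx1, hx2.2, hx2.1⟩
      · intro j hj
        refine hqW j (fun hQ => hj ?_)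
        obtain ⟨x, hx1, hx2⟩ := hQ
        exact ⟨x, hx1, hx2.2, hx2.1⟩

/-- Kynčl–Tancer: a finite family of closed line segments in `ℝ^d` with the
`(4,3)`-property can be pierced by at most `3` points. -/
theorem kyncl_tancer_segments {d : ℕ} (hd : 1 ≤ d) {ι : Type*} [Fintype ι]
    (F : ι → Set (Fin d → ℝ))
    (hseg : ∀ i, ∃ x y : Fin d → ℝ, F i = segment ℝ x y)
    (h43 : ∀ P : Finset ι, P.card = 4 →
      ∃ Q ⊆ P, Q.card = 3 ∧ (⋂ i ∈ Q, F i).Nonempty) :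
    ∃ C : Finset (Fin d → ℝ), C.card ≤ 3 ∧ ∀ i, ∃ x ∈ C, x ∈ F i := by
  classical
  have hFne : ∀ i, (F i).Nonempty := fun i => by
    obtain ⟨x, y, h⟩ := hseg i; rw [h]; exact ⟨x, left_mem_segment ℝ x y⟩
  by_cases hcard : Fintype.card ι ≤ 3
  · refine ⟨Finset.univ.image (fun i => (hFne i).choose),
      (Finset.card_image_le).trans (by rw [Finset.card_univ]; exact hcard), fun i =>
      ⟨(hFne i).choose, Finset.mem_image.2 ⟨i, Finset.mem_univ i, rfl⟩, (hFne i).choose_spec⟩⟩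
  push_neg at hcard
  have hcard4 : 4 ≤ Fintype.card ι := hcard
  by_cases h3 : ∀ a b c : ι, a ≠ b → a ≠ c → b ≠ c → (F a ∩ F b ∩ F c).Nonempty
  · exact case0 F hseg hcard4 h3
  push_neg at h3
  obtain ⟨a, b, c, hab, hac, hbc, hnc0⟩ := h3
  have hnc : ∀ x, x ∈ F a → x ∈ F b → x ∈ F c → False := by
    intro x h1 h2 h3x
    have hx : x ∈ F a ∩ F b ∩ F c := ⟨⟨h1, h2⟩, h3x⟩
    rw [hnc0] at hx
    exact hx
  by_cases s1 : (F a ∩ F b).Subsingleton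
  · by_cases s2 : (F a ∩ F c).Subsingleton
    · by_cases s3 : (F b ∩ F c).Subsingleton
      · exact case1a F hseg hcard4 h43 hab hac hbc hnc s1 s2 s3
      · obtain ⟨x, hx, y, hy, hxy⟩ := Set.not_subsingleton_iff.1 s3
        exact caseC F hseg h43 hbc (Ne.symm hab) (Ne.symm hac) hx hy hxy
          (fun x h1 h2 h3x => hnc x h1 h2 h3x)
    · obtain ⟨x, hx, y, hy, hxy⟩ := Set.not_subsingleton_iff.1 s2
      exact caseC F hseg h43 hac hab (Ne.symm hbc) hx hy hxy
        (fun x h1 h2 h3x => hnc x h2 h1 h3x)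
  · obtain ⟨x, hx, y, hy, hxy⟩ := Set.not_subsingleton_iff.1 s1
    exact caseC F hseg h43 hab hac hbc hx hy hxy
      (fun x h1 h2 h3x => hnc x h2 h3x h1)
end

section
/- Let d ≥ 1 and let p, q be integers with 2 ≤ q ≤ p ≤ 2q - 2. Let F : Fin n → Set (ℝ^d) be a family of n ≥ p nonempty axis-parallel boxes in ℝ^d such that for every p-element subset P of the indices there exist q indices in P whose boxes have a common point. Then there exists a point x ∈ ℝ^d such that the number of indices i with x ∈ F i is at least n - (p - q). -/
open Finset

section AgreeableAux

attribute [local instance] Classical.propDecidable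

/-- Pairwise non-adjacency (independence in the "disjointness graph"). -/
private def Indep {n : ℕ} (E : Fin n → Fin n → Prop) (S : Finset (Fin n)) : Prop :=
  ∀ i ∈ S, ∀ j ∈ S, i ≠ j → ¬ E i j

private lemma indep_subset {n : ℕ} {E : Fin n → Fin n → Prop} {S T : Finset (Fin n)}
    (hTS : T ⊆ S) (hS : Indep E S) : Indep E T :=
  fun i hi j hj hij => hS i (hTS hi) j (hTS hj) hij

/-- Neighborhood-in-`B` of a set `T`. -/
private noncomputable def NB {n : ℕ} (E : Fin n → Fin n → Prop) (B T : Finset (Fin n)) : Finset (Fin n) :=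
  B.filter fun x => ∃ w ∈ T, E w x

private lemma mem_NB {n : ℕ} {E : Fin n → Fin n → Prop} {B T : Finset (Fin n)} {x : Fin n} :
    x ∈ NB E B T ↔ x ∈ B ∧ ∃ w ∈ T, E w x := by
  simp [NB]

private lemma NB_subset {n : ℕ} (E : Fin n → Fin n → Prop) (B T : Finset (Fin n)) :
    NB E B T ⊆ B := filter_subset _ _

/-- The graph-theoretic core: if every `p`-set of vertices contains an independent
`q`-set, `2 ≤ q ≤ p ≤ 2q-2`, `p ≤ n`, then there is an independent set of size
at least `n - (p - q)`. -/
private theorem exists_big_indep {n p q : ℕ} (hq : 2 ≤ q) (hqp : q ≤ p)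
    (hp2q : p ≤ 2 * q - 2) (hn : p ≤ n) (E : Fin n → Fin n → Prop)
    (hsym : ∀ i j, E i j → E j i)
    (hagree : ∀ P : Finset (Fin n), P.card = p → ∃ Q ⊆ P, Q.card = q ∧ Indep E Q) :
    ∃ S : Finset (Fin n), n - (p - q) ≤ S.card ∧ Indep E S := by
  classical
  set k := p - q with hk
  -- a maximum independent set `I`
  obtain ⟨I, hImem, hImax⟩ := Finset.exists_max_image
    ((Finset.univ.powerset).filter (fun S => Indep E S)) Finset.card
    ⟨∅, by simp [Indep]⟩
  have hI_indep : Indep E I := (mem_filter.mp hImem).2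
  have hImax' : ∀ J : Finset (Fin n), Indep E J → J.card ≤ I.card := fun J hJ =>
    hImax J (mem_filter.mpr ⟨mem_powerset.mpr (subset_univ J), hJ⟩)
  have hIq : q ≤ I.card := by
    obtain ⟨P, _, hPcard⟩ := Finset.exists_subset_card_eq
      (s := (univ : Finset (Fin n))) (n := p) (by simp [hn])
    obtain ⟨Q, hQP, hQcard, hQind⟩ := hagree P hPcard
    calc q = Q.card := hQcard.symm
    _ ≤ I.card := hImax' Q hQind
  rcases le_or_gt (n - k) I.card with hcase | hlt
  · exact ⟨I, hcase, hI_indep⟩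
  exfalso
  have hkn : k ≤ n := le_trans (Nat.sub_le p q) hn
  -- pick `k+1` vertices outside `I`
  have hcardsd : k + 1 ≤ (univ \ I).card := by
    rw [card_sdiff_of_subset (subset_univ I), card_univ, Fintype.card_fin]
    omega
  obtain ⟨R', hR'sub, hR'card⟩ := Finset.exists_subset_card_eq hcardsd
  have hdisj : ∀ x ∈ R', x ∉ I := fun x hx => (mem_sdiff.mp (hR'sub hx)).2
  -- Hall condition from maximality of `I`
  have hHall : ∀ T ⊆ R', Indep E T → T.card ≤ (NB E I T).card := by
    intro T hTR hTind
    by_contra hcon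
    push_neg at hcon
    have hTI : ∀ x ∈ T, x ∉ I := fun x hx => hdisj x (hTR hx)
    set J := T ∪ (I \ NB E I T) with hJ
    have hJind : Indep E J := by
      intro i hi j hj hij
      rcases mem_union.mp hi with hiT | hiI <;> rcases mem_union.mp hj with hjT | hjI
      · exact hTind i hiT j hjT hij
      · intro hE
        exact (mem_sdiff.mp hjI).2 (mem_NB.mpr ⟨(mem_sdiff.mp hjI).1, i, hiT, hE⟩)
      · intro hE
        exact (mem_sdiff.mp hiI).2 (mem_NB.mpr ⟨(mem_sdiff.mp hiI).1, j, hjT, hsym i j hE⟩)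
      · exact hI_indep i (mem_sdiff.mp hiI).1 j (mem_sdiff.mp hjI).1 hij
    have hdJ : Disjoint T (I \ NB E I T) :=
      disjoint_left.mpr fun x hxT hxI => hTI x hxT (mem_sdiff.mp hxI).1
    have hJcard : J.card = T.card + (I.card - (NB E I T).card) := by
      rw [hJ, card_union_of_disjoint hdJ, card_sdiff_of_subset (NB_subset E I T)]
    have hNBI : (NB E I T).card ≤ I.card := card_le_card (NB_subset E I T)
    have := hImax' J hJind
    omega
  -- minimal `B0 ⊆ I` satisfying the Hall-type condition
  obtain ⟨B0, hB0mem, hB0min⟩ := Finset.exists_min_image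
    ((I.powerset).filter (fun B => ∀ T ⊆ R', Indep E T → T.card ≤ (NB E B T).card))
    Finset.card ⟨I, mem_filter.mpr ⟨mem_powerset.mpr subset_rfl, hHall⟩⟩
  have hB0I : B0 ⊆ I := mem_powerset.mp (mem_filter.mp hB0mem).1
  have hΦB0 : ∀ T ⊆ R', Indep E T → T.card ≤ (NB E B0 T).card := (mem_filter.mp hB0mem).2
  -- for each `b ∈ B0` there is a tight independent set `T b` with `b` in its neighborhood
  have hTb : ∀ b ∈ B0, ∃ T, T ⊆ R' ∧ Indep E T ∧ (NB E B0 T).card = T.card ∧ b ∈ NB E B0 T := by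
    intro b hb
    have hcardpos : 1 ≤ B0.card := card_pos.mpr ⟨b, hb⟩
    have hnot : ¬ (∀ T ⊆ R', Indep E T → T.card ≤ (NB E (B0.erase b) T).card) := by
      intro hΦ
      have hmem2 : B0.erase b ∈ (I.powerset).filter
          (fun B => ∀ T ⊆ R', Indep E T → T.card ≤ (NB E B T).card) :=
        mem_filter.mpr ⟨mem_powerset.mpr ((erase_subset b B0).trans hB0I), hΦ⟩
      have := hB0min (B0.erase b) hmem2
      have hcb := card_erase_of_mem hb
      omega
    push_neg at hnot
    obtain ⟨T, hTR, hTind, hlt2⟩ := hnot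
    have herase : NB E (B0.erase b) T = (NB E B0 T).erase b := by
      ext x
      simp only [mem_NB, mem_erase]
      tauto
    have hge := hΦB0 T hTR hTind
    have hbmem : b ∈ NB E B0 T := by
      by_contra hbn
      rw [herase, erase_eq_of_notMem hbn] at hlt2
      omega
    have hce := card_erase_of_mem hbmem
    rw [herase] at hlt2
    exact ⟨T, hTR, hTind, by omega, hbmem⟩
  choose! T hT1 hT2 hT3 hT4 using hTb
  -- the union of the tight sets has a small neighborhood
  have key : ∀ C : Finset (Fin n), C ⊆ B0 →
      (NB E B0 (C.biUnion T)).card ≤ (C.biUnion T).card := by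
    intro C
    induction C using Finset.induction_on with
    | empty =>
      intro _
      simp [NB]
    | insert _ _ hnotmem ih =>
      rename_i c C0
      intro hsub
      have hcB0 : c ∈ B0 := hsub (mem_insert_self _ _)
      have hU := ih (fun x hx => hsub (mem_insert_of_mem hx))
      rw [biUnion_insert]
      set U := C0.biUnion T with hUdef
      have hTa3 : (NB E B0 (T c)).card = (T c).card := hT3 c hcB0
      have hint : (T c ∩ U).card ≤ (NB E B0 (T c ∩ U)).card := by
        refine hΦB0 _ (fun x hx => hT1 c hcB0 (mem_inter.mp hx).1) ?_
        exact indep_subset inter_subset_left (hT2 c hcB0)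
      have hsplit : NB E B0 (T c ∪ U) = NB E B0 (T c) ∪ NB E B0 U := by
        ext x
        simp only [mem_NB, mem_union]
        constructor
        · rintro ⟨hxB, w, hw | hw, hE⟩
          · exact Or.inl ⟨hxB, w, hw, hE⟩
          · exact Or.inr ⟨hxB, w, hw, hE⟩
        · rintro (⟨hxB, w, hw, hE⟩ | ⟨hxB, w, hw, hE⟩)
          · exact ⟨hxB, w, Or.inl hw, hE⟩
          · exact ⟨hxB, w, Or.inr hw, hE⟩
      have hsub2 : NB E B0 (T c ∩ U) ⊆ NB E B0 (T c) ∩ NB E B0 U := by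
        intro x hx
        obtain ⟨hxB, w, hw, hE⟩ := mem_NB.mp hx
        exact mem_inter.mpr ⟨mem_NB.mpr ⟨hxB, w, (mem_inter.mp hw).1, hE⟩,
          mem_NB.mpr ⟨hxB, w, (mem_inter.mp hw).2, hE⟩⟩
      have h1 := card_union_add_card_inter (NB E B0 (T c)) (NB E B0 U)
      have h2 := card_union_add_card_inter (T c) U
      have h3 := card_le_card hsub2
      rw [hsplit]
      omega
  have hB0W : B0 ⊆ NB E B0 (B0.biUnion T) := by
    intro b hb
    obtain ⟨hbB, w, hw, hE⟩ := mem_NB.mp (hT4 b hb)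
    exact mem_NB.mpr ⟨hbB, w, mem_biUnion.mpr ⟨b, hb, hw⟩, hE⟩
  have hWR : B0.biUnion T ⊆ R' := biUnion_subset.mpr hT1
  have hB0card : B0.card ≤ k + 1 := by
    calc B0.card ≤ (NB E B0 (B0.biUnion T)).card := card_le_card hB0W
    _ ≤ (B0.biUnion T).card := key B0 subset_rfl
    _ ≤ R'.card := card_le_card hWR
    _ = k + 1 := hR'card
  -- pad `B0` to a `(q-1)`-set `B ⊆ I`
  have hB0q1 : B0.card ≤ q - 1 := by omega
  have hq1I : q - 1 ≤ I.card := by omega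
  obtain ⟨B, hB0B, hBI, hBcard⟩ := Finset.exists_subsuperset_card_eq hB0I hB0q1 hq1I
  -- the contradictory `p`-set
  have hPdisj : Disjoint R' B := disjoint_left.mpr fun x hxR hxB => hdisj x hxR (hBI hxB)
  have hPcard : (R' ∪ B).card = p := by
    rw [card_union_of_disjoint hPdisj, hR'card, hBcard]
    omega
  obtain ⟨Q, hQP, hQcard, hQind⟩ := hagree (R' ∪ B) hPcard
  set T0 := Q ∩ R' with hT0def
  have hT0R : T0 ⊆ R' := inter_subset_right
  have hT0ind : Indep E T0 := indep_subset inter_subset_left hQind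
  have hHallT0 : T0.card ≤ (NB E B0 T0).card := hΦB0 T0 hT0R hT0ind
  have hmle : (NB E B0 T0).card ≤ (NB E B T0).card :=
    card_le_card (filter_subset_filter _ hB0B)
  have hQsplit : (Q ∩ R') ∪ (Q ∩ B) = Q := by
    rw [← inter_union_distrib_left]
    exact inter_eq_left.mpr hQP
  have hQdisj : Disjoint (Q ∩ R') (Q ∩ B) := hPdisj.mono inter_subset_right inter_subset_right
  have hQcards : T0.card + (Q ∩ B).card = q := by
    rw [hT0def, ← card_union_of_disjoint hQdisj, hQsplit, hQcard]
  have hdisjNB : Disjoint (Q ∩ B) (NB E B T0) := by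
    rw [disjoint_left]
    intro x hx1 hx2
    obtain ⟨hxB, w, hwT0, hE⟩ := mem_NB.mp hx2
    have hwQ : w ∈ Q := (mem_inter.mp hwT0).1
    have hxQ : x ∈ Q := (mem_inter.mp hx1).1
    have hwx : w ≠ x := by
      intro h
      exact hdisj x (h ▸ (mem_inter.mp hwT0).2) (hBI (mem_inter.mp hx1).2)
    exact hQind w hwQ x hxQ hwx hE
  have hfinal : (Q ∩ B).card + (NB E B T0).card ≤ B.card := by
    rw [← card_union_of_disjoint hdisjNB]
    exact card_le_card (union_subset inter_subset_right (NB_subset E B T0))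
  omega

end AgreeableAux

/-- Berg et al.: a `(q,p)`-agreeable `ℝ^d`-box society with `n` voters and
`2 ≤ q ≤ p ≤ 2q - 2` has a point contained in at least `n - (p - q)` approval sets. -/
theorem agreeable_box_society {d p q n : ℕ} (hd : 1 ≤ d) (hq : 2 ≤ q) (hqp : q ≤ p)
    (hp2q : p ≤ 2 * q - 2) (hn : p ≤ n)
    (F : Fin n → Set (Fin d → ℝ))
    (hbox : ∀ i, ∃ a b : Fin d → ℝ, (∀ j, a j ≤ b j) ∧
      F i = Set.univ.pi fun j => Set.Icc (a j) (b j))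
    (hagree : ∀ P : Finset (Fin n), P.card = p →
      ∃ Q ⊆ P, Q.card = q ∧ (⋂ i ∈ Q, F i).Nonempty) :
    ∃ x : Fin d → ℝ,
      (n : ℝ) - ((p : ℝ) - (q : ℝ)) ≤ (Set.ncard {i : Fin n | x ∈ F i} : ℝ) := by
  classical
  choose a b hab hF using hbox
  set E : Fin n → Fin n → Prop := fun i j => ¬ (F i ∩ F j).Nonempty with hE
  have hsym : ∀ i j, E i j → E j i := by
    intro i j h hne
    exact h (by rwa [Set.inter_comm])
  have hagree' : ∀ P : Finset (Fin n), P.card = p → ∃ Q ⊆ P, Q.card = q ∧ Indep E Q := by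
    intro P hP
    obtain ⟨Q, hQP, hQcard, x, hx⟩ := hagree P hP
    refine ⟨Q, hQP, hQcard, ?_⟩
    intro i hi j hj hij hEij
    exact hEij ⟨x, Set.mem_iInter₂.mp hx i hi, Set.mem_iInter₂.mp hx j hj⟩
  obtain ⟨S, hScard, hSind⟩ := exists_big_indep hq hqp hp2q hn E hsym hagree'
  have hSne : S.Nonempty := by
    rw [← card_pos]
    omega
  set x : Fin d → ℝ := fun j => S.sup' hSne (fun i => a i j) with hxdef
  have hmem : ∀ i ∈ S, x ∈ F i := by
    intro i hi
    rw [hF i]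
    refine Set.mem_univ_pi.mpr fun j => ?_
    refine Set.mem_Icc.mpr ⟨?_, ?_⟩
    · exact Finset.le_sup' (fun i => a i j) hi
    · apply Finset.sup'_le
      intro i' hi'
      by_cases h : i' = i
      · subst h
        exact hab i' j
      · have hne : ¬ E i' i := hSind i' hi' i hi h
        have hNE : (F i' ∩ F i).Nonempty := not_not.mp hne
        obtain ⟨y, hy1, hy2⟩ := hNE
        rw [hF i'] at hy1
        rw [hF i] at hy2
        have h1 : y j ∈ Set.Icc (a i' j) (b i' j) := Set.mem_univ_pi.mp hy1 j
        have h2 : y j ∈ Set.Icc (a i j) (b i j) := Set.mem_univ_pi.mp hy2 j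
        exact le_trans h1.1 h2.2
  refine ⟨x, ?_⟩
  have hsub : (S : Set (Fin n)) ⊆ {i | x ∈ F i} := fun i hi => hmem i hi
  have h1 : S.card ≤ Set.ncard {i | x ∈ F i} := by
    rw [← Set.ncard_coe_finset]
    exact Set.ncard_le_ncard hsub (Set.toFinite _)
  have h2 : n - (p - q) ≤ Set.ncard {i | x ∈ F i} := le_trans hScard h1
  have hpq : p - q ≤ n := le_trans (Nat.sub_le p q) hn
  calc (n : ℝ) - ((p : ℝ) - (q : ℝ)) = ((n - (p - q) : ℕ) : ℝ) := by
        rw [Nat.cast_sub hpq, Nat.cast_sub hqp]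
  _ ≤ (Set.ncard {i : Fin n | x ∈ F i} : ℝ) := Nat.cast_le.mpr h2
end

section
/- Let p ≥ 2 and let F be a finite family of nonempty closed bounded intervals in ℝ satisfying the (p,2)-property: among every p members of F there exist 2 with a common point. Then F has a piercing set of at most p - 1 points. -/
theorem gallai_aux (p : ℕ) : ∀ {ι : Type*} [Fintype ι] (F : ι → Set ℝ),
    (∀ i, ∃ a b : ℝ, a ≤ b ∧ F i = Set.Icc a b) →
    (∀ P : Finset ι, P.card = p + 2 →
      ∃ Q ⊆ P, Q.card = 2 ∧ (⋂ i ∈ Q, F i).Nonempty) →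
    ∃ C : Finset ℝ, C.card ≤ p + 1 ∧ ∀ i, ∃ x ∈ C, x ∈ F i := by
  induction p with
  | zero =>
    intro ι _ F hint hp2
    classical
    by_cases hι : Nonempty ι
    · choose a b hab hF using hint
      obtain ⟨i₀, -, hmin⟩ := Finset.exists_min_image Finset.univ b
        ⟨Classical.arbitrary ι, Finset.mem_univ _⟩
      have hb0 : b i₀ ∈ F i₀ := by rw [hF]; exact ⟨hab i₀, le_refl _⟩
      refine ⟨{b i₀}, by simp, fun i => ⟨b i₀, Finset.mem_singleton_self _, ?_⟩⟩
      rename_i i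
      by_contra hbi
      have hne : i ≠ i₀ := fun h => hbi (h ▸ hb0)
      obtain ⟨Q, hQsub, hQcard, x, hx⟩ := hp2 {i, i₀} (Finset.card_pair hne)
      have hQ : Q = {i, i₀} := Finset.eq_of_subset_of_card_le hQsub
        (by rw [hQcard, Finset.card_pair hne])
      subst hQ
      simp only [Set.mem_iInter, Finset.mem_insert, Finset.mem_singleton] at hx
      have hxi := hx i (Or.inl rfl)
      have hxi0 := hx i₀ (Or.inr rfl)
      rw [hF] at hxi hxi0
      -- b i₀ ∉ F i and b i₀ ≤ b i ⇒ a i > b i₀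
      have hai : b i₀ < a i := by
        by_contra h
        exact hbi (by rw [hF]; exact ⟨le_of_not_gt h, hmin i (Finset.mem_univ i)⟩)
      exact absurd (hxi0.2.trans_lt (hai.trans_le hxi.1)) (lt_irrefl x)
    · exact ⟨∅, by simp, fun i => (hι ⟨i⟩).elim⟩
  | succ p ih =>
    intro ι _ F hint hp2
    classical
    by_cases hι : Nonempty ι
    · choose a b hab hF using hint
      obtain ⟨i₀, -, hmin⟩ := Finset.exists_min_image Finset.univ b
        ⟨Classical.arbitrary ι, Finset.mem_univ _⟩
      have hb0 : b i₀ ∈ F i₀ := by rw [hF]; exact ⟨hab i₀, le_refl _⟩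
      -- points of intervals not containing b i₀ are > b i₀
      have hgt : ∀ i, b i₀ ∉ F i → ∀ x ∈ F i, b i₀ < x := by
        intro i hi x hx
        have hai : b i₀ < a i := by
          by_contra h
          exact hi (by rw [hF]; exact ⟨le_of_not_gt h, hmin i (Finset.mem_univ i)⟩)
        rw [hF] at hx
        exact hai.trans_le hx.1
      set ι' := {i : ι // b i₀ ∉ F i}
      have hp2' : ∀ P' : Finset ι', P'.card = p + 2 →
          ∃ Q' ⊆ P', Q'.card = 2 ∧ (⋂ i ∈ Q', F i.1).Nonempty := by
        intro P' hP'
        have hi0 : i₀ ∉ P'.image Subtype.val := by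
          simp only [Finset.mem_image]
          rintro ⟨⟨j, hj⟩, -, hval⟩
          exact hj (hval ▸ hb0)
        have hcard : (insert i₀ (P'.image Subtype.val)).card = p + 1 + 2 := by
          rw [Finset.card_insert_of_notMem hi0,
            Finset.card_image_of_injective _ Subtype.val_injective, hP']
        obtain ⟨Q, hQsub, hQcard, x, hx⟩ := hp2 _ hcard
        obtain ⟨u, v, huv, rfl⟩ := Finset.card_eq_two.1 hQcard
        simp only [Set.mem_iInter, Finset.mem_insert, Finset.mem_singleton] at hx
        have hxu := hx u (Or.inl rfl)
        have hxv := hx v (Or.inr rfl)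
        -- i₀ is not in Q
        have hmem : ∀ w ∈ ({u, v} : Finset ι), w ≠ i₀ → ∃ w' ∈ P', w'.1 = w := by
          intro w hw hwne
          have := hQsub hw
          rcases Finset.mem_insert.1 this with h | h
          · exact absurd h hwne
          · obtain ⟨w', hw', hval⟩ := Finset.mem_image.1 h; exact ⟨w', hw', hval⟩
        have hni0 : u ≠ i₀ ∧ v ≠ i₀ := by
          constructor
          · rintro rfl
            obtain ⟨v', hv', rfl⟩ := hmem v (by simp) (fun h => huv h.symm)
            have := hgt v'.1 v'.2 x hxv
            rw [hF] at hxu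
            exact absurd (hxu.2.trans_lt this) (lt_irrefl x)
          · rintro rfl
            obtain ⟨u', hu', rfl⟩ := hmem u (by simp) huv
            have := hgt u'.1 u'.2 x hxu
            rw [hF] at hxv
            exact absurd (hxv.2.trans_lt this) (lt_irrefl x)
        obtain ⟨u', hu', hu'val⟩ := hmem u (by simp) hni0.1
        obtain ⟨v', hv', hv'val⟩ := hmem v (by simp) hni0.2
        refine ⟨{u', v'}, ?_, ?_, ⟨x, ?_⟩⟩
        · intro w hw
          rcases Finset.mem_insert.1 hw with h | h
          · exact h ▸ hu'
          · exact (Finset.mem_singleton.1 h) ▸ hv'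
        · exact Finset.card_pair (by rintro rfl; exact huv (hu'val.symm.trans hv'val))
        · simp only [Set.mem_iInter, Finset.mem_insert, Finset.mem_singleton]
          rintro j (rfl | rfl)
          · rw [hu'val]; exact hxu
          · rw [hv'val]; exact hxv
      obtain ⟨C', hC'card, hC'⟩ := ih (fun i : ι' => F i.1)
        (fun i => ⟨a i.1, b i.1, hab i.1, hF i.1⟩) hp2'
      refine ⟨insert (b i₀) C', ?_, ?_⟩
      · calc (insert (b i₀) C').card ≤ C'.card + 1 := Finset.card_insert_le _ _
          _ ≤ p + 1 + 1 := by omega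
      · intro i
        by_cases hi : b i₀ ∈ F i
        · exact ⟨b i₀, Finset.mem_insert_self _ _, hi⟩
        · obtain ⟨x, hxC, hxF⟩ := hC' ⟨i, hi⟩
          exact ⟨x, Finset.mem_insert_of_mem hxC, hxF⟩
    · exact ⟨∅, by simp, fun i => (hι ⟨i⟩).elim⟩

/-- Gallai's theorem: a finite family of nonempty closed bounded intervals in `ℝ` with
the `(p,2)`-property can be pierced by at most `p - 1` points. -/
theorem gallai_intervals {p : ℕ} (hp : 2 ≤ p) {ι : Type*} [Fintype ι]
    (F : ι → Set ℝ) (hint : ∀ i, ∃ a b : ℝ, a ≤ b ∧ F i = Set.Icc a b)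
    (hp2 : ∀ P : Finset ι, P.card = p →
      ∃ Q ⊆ P, Q.card = 2 ∧ (⋂ i ∈ Q, F i).Nonempty) :
    ∃ C : Finset ℝ, C.card ≤ p - 1 ∧ ∀ i, ∃ x ∈ C, x ∈ F i := by
  obtain ⟨C, hC, hpc⟩ := gallai_aux (p - 2) F hint
    (fun P hP => hp2 P (by omega))
  exact ⟨C, by omega, hpc⟩
end

section
/- Let d ≥ 1 and p ≥ q ≥ 2 be integers, and let F be a finite family of d-intervals in ℝ satisfying the (p,q)-property: among every p members of F there exist q with a common point. Then F has a piercing set of cardinality at most max{ (2(e·p)^(q/(q-1))/q) · d^(q/(q-1)) + d , 2p²d }, where e is Euler's number. -/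
open Finset
open scoped Classical

section ZerbibAux


theorem interval_pierce {ι : Type*} [DecidableEq ι] (α β : ι → ℝ) (hαβ : ∀ i, α i ≤ β i) :
    ∀ (s : Finset ι), ∃ (P : Finset ℝ) (T : Finset ι), T ⊆ s ∧ P.card ≤ T.card ∧
      (∀ i ∈ s, ∃ x ∈ P, x ∈ Set.Icc (α i) (β i)) ∧
      ((T : Set ι).Pairwise fun i j => Disjoint (Set.Icc (α i) (β i)) (Set.Icc (α j) (β j))) := by
  intro s
  induction s using Finset.strongInduction with
  | _ s ih =>
    rcases s.eq_empty_or_nonempty with rfl | hs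
    · exact ⟨∅, ∅, by simp, le_rfl, by simp, by simp⟩
    obtain ⟨i₀, hi₀, hmin⟩ := s.exists_min_image β hs
    set s' := s.filter (fun j => β i₀ < α j) with hs'
    have hss : s' ⊂ s := by
      refine Finset.ssubset_iff_of_subset (Finset.filter_subset _ _) |>.mpr ?_
      refine ⟨i₀, hi₀, by simp [hs', hi₀, not_lt.mpr (hαβ i₀)]⟩
    obtain ⟨P, T, hTs, hcard, hpierce, hdisj⟩ := ih s' hss
    have hi₀T : i₀ ∉ T := by
      intro h
      have := hTs h
      rw [hs', Finset.mem_filter] at this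
      exact absurd (this.2.trans_le (hαβ i₀)) (lt_irrefl _)
    refine ⟨insert (β i₀) P, insert i₀ T, ?_, ?_, ?_, ?_⟩
    · exact Finset.insert_subset hi₀ (hTs.trans (Finset.filter_subset _ _))
    · calc (insert (β i₀) P).card ≤ P.card + 1 := Finset.card_insert_le _ _
        _ ≤ T.card + 1 := by omega
        _ = (insert i₀ T).card := (Finset.card_insert_of_notMem hi₀T).symm
    · intro i hi
      by_cases hi' : i ∈ s'
      · obtain ⟨x, hxP, hx⟩ := hpierce i hi'
        exact ⟨x, Finset.mem_insert_of_mem hxP, hx⟩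
      · refine ⟨β i₀, Finset.mem_insert_self _ _, ?_⟩
        rw [hs', Finset.mem_filter] at hi'
        have : ¬ β i₀ < α i := fun h => hi' ⟨hi, h⟩
        exact ⟨not_lt.mp this, hmin i hi⟩
    · have key : ∀ j ∈ T, Disjoint (Set.Icc (α i₀) (β i₀)) (Set.Icc (α j) (β j)) := by
        intro j hj
        have hj' := hTs hj
        rw [hs', Finset.mem_filter] at hj'
        refine Set.disjoint_left.mpr (fun x hx hx2 => ?_)
        exact absurd (hx.2.trans_lt (hj'.2.trans_le hx2.1)) (lt_irrefl _)
      rw [Finset.coe_insert]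
      refine Set.Pairwise.insert hdisj (fun j hj _ => ⟨key j hj, (key j hj).symm⟩)


theorem lp_alternative {X ι : Type*} [Fintype X] [Fintype ι] [Nonempty ι]
    (g : X → ι → ℝ) (c : ℝ) :
    (∃ y : X → ℝ, (∀ x, 0 ≤ y x) ∧ ∑ x, y x = 1 ∧ ∀ i, c ≤ ∑ x, y x * g x i) ∨
    (∃ z : ι → ℝ, (∀ i, 0 ≤ z i) ∧ ∑ i, z i = 1 ∧ ∀ x, ∑ i, g x i * z i < c) := by
  classical
  by_cases hsec : ∃ z ∈ stdSimplex ℝ ι, ∀ x, ∑ i, g x i * z i < c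
  · obtain ⟨z, hz, hlt⟩ := hsec
    exact Or.inr ⟨z, hz.1, hz.2, hlt⟩
  left
  -- the linear map sending z to its "load vector"
  let L : (ι → ℝ) →ₗ[ℝ] (X → ℝ) :=
    { toFun := fun z x => ∑ i, g x i * z i
      map_add' := by
        intro z w; funext x; simp [mul_add, Finset.sum_add_distrib]
      map_smul' := by
        intro r z; funext x; simp [Finset.mul_sum]; congr 1; funext i; ring }
  set O : Set (X → ℝ) := {u | ∀ x, u x < c} with hO
  set K : Set (X → ℝ) := L '' (stdSimplex ℝ ι) with hK
  have hOopen : IsOpen O := by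
    have : O = Set.pi Set.univ (fun _ : X => Set.Iio c) := by
      ext u; simp [hO, Set.mem_pi]
    rw [this]
    exact isOpen_set_pi Set.finite_univ (fun _ _ => isOpen_Iio)
  have hOconv : Convex ℝ O := by
    have : O = Set.pi Set.univ (fun _ : X => Set.Iio c) := by
      ext u; simp [hO, Set.mem_pi]
    rw [this]
    exact convex_pi (fun _ _ => convex_Iio c)
  have hKconv : Convex ℝ K := (convex_stdSimplex ℝ ι).linear_image L
  have hdisj : Disjoint O K := by
    rw [Set.disjoint_right]
    rintro v ⟨z, hz, rfl⟩ hvO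
    exact hsec ⟨z, hz, fun x => hvO x⟩
  obtain ⟨f, u, hfO, hfK⟩ := geometric_hahn_banach_open hOconv hOopen hKconv hdisj
  set y : X → ℝ := fun x => f (fun j => if x = j then 1 else 0) with hy
  have hrep : ∀ v : X → ℝ, f v = ∑ x, v x * y x := by
    intro v
    conv_lhs => rw [pi_eq_sum_univ v]
    rw [map_sum]
    congr 1; funext x
    rw [map_smul]; simp [hy]
  have hconstO : ∀ t : ℝ, 0 < t → ((fun _ => c - t) : X → ℝ) ∈ O := by
    intro t ht x; simpa using by linarith
  have hnn : ∀ x, 0 ≤ y x := by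
    intro x₀
    by_contra hneg
    push_neg at hneg
    set e : X → ℝ := fun j => if x₀ = j then 1 else 0 with he
    have hye : f e = y x₀ := by simp [hy, he]
    have key : ∀ t : ℝ, 0 ≤ t → f ((fun _ => c - 1) : X → ℝ) - t * y x₀ < u := by
      intro t ht
      have hmem : ((fun _ => c - 1) - t • e : X → ℝ) ∈ O := by
        intro x
        simp only [Pi.sub_apply, Pi.smul_apply, smul_eq_mul, he]
        by_cases hx : x₀ = x <;> simp [hx] <;> nlinarith
      have := hfO _ hmem
      rwa [map_sub, map_smul, smul_eq_mul, hye] at this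
    have h0 := key 0 le_rfl
    simp only [zero_mul, sub_zero] at h0
    have hden : 0 < -y x₀ := by linarith
    have hnum : 0 ≤ u - f ((fun _ => c - 1) : X → ℝ) + 1 := by linarith
    have hmain := key _ (div_nonneg hnum hden.le)
    have h2 : (u - f ((fun _ => c - 1) : X → ℝ) + 1) / (-y x₀) * y x₀
        = -(u - f ((fun _ => c - 1) : X → ℝ) + 1) := by
      rw [div_mul_eq_mul_div, div_neg, mul_div_assoc, div_self (ne_of_lt (by linarith : y x₀ < 0))]; ring
    rw [h2] at hmain
    linarith
  have hS : ∀ t : ℝ, 0 < t → (c - t) * (∑ x, y x) < u := by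
    intro t ht
    have := hfO _ (hconstO t ht)
    rw [hrep] at this
    rw [Finset.mul_sum]
    calc ∑ x, (c - t) * y x = ∑ x, ((fun _ => c - t) : X → ℝ) x * y x := by simp
      _ < u := this
  set S : ℝ := ∑ x, y x with hSdef
  have hcol : ∀ i : ι, (fun x => g x i) ∈ K := by
    intro i
    refine ⟨Pi.single i 1, single_mem_stdSimplex ℝ i, ?_⟩
    funext x
    simp only [L, LinearMap.coe_mk, AddHom.coe_mk]
    rw [Finset.sum_eq_single i]
    · simp
    · intro b _ hb; simp [Pi.single_apply, hb]
    · simp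
  have hcolval : ∀ i : ι, u ≤ ∑ x, g x i * y x := by
    intro i
    have := hfK _ (hcol i)
    rwa [hrep] at this
  have hSnonneg : 0 ≤ S := Finset.sum_nonneg (fun x _ => hnn x)
  have hSpos : 0 < S := by
    rcases lt_or_eq_of_le hSnonneg with h | h
    · exact h
    have hy0 : ∀ x, y x = 0 := by
      intro x
      have := (Finset.sum_eq_zero_iff_of_nonneg (fun x _ => hnn x)).mp h.symm
      exact this x (Finset.mem_univ x)
    have h1 := hcolval (Classical.arbitrary ι)
    simp [hy0] at h1
    have h2 := hS 1 one_pos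
    simp [← hSdef, ← h] at h2
    linarith
  have hcS : c * S ≤ u := by
    by_contra hlt
    push_neg at hlt
    have := hS ((c * S - u) / (2 * S)) (div_pos (by linarith) (by positivity))
    rw [sub_mul, div_mul_eq_mul_div, mul_comm (c * S - u) S, ← div_mul_eq_mul_div,
      mul_comm 2 S, ← div_div, div_self (ne_of_gt hSpos)] at this
    linarith
  refine ⟨fun x => y x / S, fun x => div_nonneg (hnn x) hSnonneg, ?_, ?_⟩
  · rw [← Finset.sum_div, div_self (ne_of_gt hSpos)]
  · intro i
    have h1 : u / S ≥ c := by
      rw [ge_iff_le, le_div_iff₀ hSpos]; linarith [hcS]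
    calc c ≤ u / S := h1
      _ ≤ (∑ x, g x i * y x) / S := by
          exact div_le_div_of_nonneg_right (hcolval i) (le_of_lt hSpos) |>.trans_eq rfl
      _ = ∑ x, y x / S * g x i := by
          rw [Finset.sum_div]; congr 1; funext x; ring



/-- Union bound for nonnegative weights. -/
theorem union_bound {β A : Type*} [Fintype β] [DecidableEq A]
    (t : Finset A) (P : A → β → Prop) [∀ a f, Decidable (P a f)]
    (w : β → ℝ) (hw : ∀ f, 0 ≤ w f) :
    ∑ f ∈ univ.filter (fun f => ∃ a ∈ t, P a f), w f
      ≤ ∑ a ∈ t, ∑ f ∈ univ.filter (fun f => P a f), w f := by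
  classical
  induction t using Finset.induction_on with
  | empty => simp
  | @insert a t ha ih =>
    have hsub : univ.filter (fun f => ∃ b ∈ insert a t, P b f)
        ⊆ univ.filter (fun f => P a f) ∪ univ.filter (fun f => ∃ b ∈ t, P b f) := by
      intro f hf
      simp only [mem_filter, mem_univ, true_and, mem_insert] at hf
      obtain ⟨b, hb | hb, hPb⟩ := hf
      · exact Finset.mem_union_left _ (by simp [hb ▸ hPb])
      · exact Finset.mem_union_right _ (by simp; exact ⟨b, hb, hPb⟩)
    calc ∑ f ∈ univ.filter (fun f => ∃ b ∈ insert a t, P b f), w f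
        ≤ ∑ f ∈ (univ.filter (fun f => P a f) ∪ univ.filter (fun f => ∃ b ∈ t, P b f)), w f :=
          Finset.sum_le_sum_of_subset_of_nonneg hsub (fun f _ _ => hw f)
      _ ≤ ∑ f ∈ univ.filter (fun f => P a f), w f
            + ∑ f ∈ univ.filter (fun f => ∃ b ∈ t, P b f), w f := by
          have := Finset.sum_union_inter (s₁ := univ.filter (fun f => P a f))
            (s₂ := univ.filter (fun f => ∃ b ∈ t, P b f)) (f := w)
          have hnn : 0 ≤ ∑ f ∈ (univ.filter (fun f => P a f) ∩
              univ.filter (fun f => ∃ b ∈ t, P b f)), w f :=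
            Finset.sum_nonneg (fun f _ => hw f)
          linarith
      _ ≤ _ := by rw [Finset.sum_insert ha]; linarith [ih]

/-- Factorization of a sum of products over function spaces. -/
theorem sum_prod_fun {p : ℕ} {ι : Type*} [Fintype ι] (g : Fin p → ι → ℝ) :
    ∑ f : Fin p → ι, ∏ j, g j (f j) = ∏ j, ∑ i, g j i := (Fintype.prod_sum g).symm

set_option maxHeartbeats 1000000 in
theorem sampling {d p q : ℕ} (hd : 1 ≤ d) (hq : 2 ≤ q) (hqp : q ≤ p)
    {ι : Type*} [Fintype ι] [DecidableEq ι]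
    (F : ι → Set ℝ)
    (hpq : ∀ P : Finset ι, P.card = p → ∃ Q ⊆ P, Q.card = q ∧ (⋂ i ∈ Q, F i).Nonempty)
    (LE : ι → Finset ℝ) (hLEcard : ∀ i, (LE i).card ≤ d)
    (hpivot : ∀ s : Finset ι, s.Nonempty → (⋂ i ∈ s, F i).Nonempty →
      ∃ i₀ ∈ s, ∃ e ∈ LE i₀, ∀ i ∈ s, e ∈ F i)
    (z : ι → ℝ) (hz : ∀ i, 0 ≤ z i) (hzle : ∀ i, z i ≤ 1)
    (hload : ∀ i, ∀ e ∈ LE i, ∑ i' ∈ univ.filter (fun i' => e ∈ F i'), z i' ≤ 1) :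
    ∑ i, z i ≤ max (2 * (Real.exp 1 * p) ^ ((q:ℝ)/((q:ℝ)-1)) * (d:ℝ) ^ (1/((q:ℝ)-1)) / q)
      (2 * (p:ℝ)^2) := by
  classical
  by_contra hcon
  push_neg at hcon
  rw [max_lt_iff] at hcon
  obtain ⟨hmA, hmp⟩ := hcon
  set m := ∑ i, z i with hm
  have hp2 : 2 ≤ p := hq.trans hqp
  have hq1 : 1 ≤ q := by omega
  have hm0 : (0:ℝ) < m := lt_of_le_of_lt (by positivity) hmp
  set W : (Fin p → ι) → ℝ := fun f => ∏ j, z (f j) with hW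
  have hWnn : ∀ f, 0 ≤ W f := fun f => Finset.prod_nonneg (fun j _ => hz _)
  have htot : ∑ f : Fin p → ι, W f = m ^ p := by
    have h := sum_prod_fun (fun _ : Fin p => z)
    simpa [hW, hm] using h
  -- ### Bad1 bound
  have key1 : ∀ j₀ j₁ : Fin p, j₀ ≠ j₁ →
      ∑ f ∈ univ.filter (fun f : Fin p → ι => f j₀ = f j₁), W f ≤ m ^ (p-1) := by
    intro j₀ j₁ hne
    have perI : ∀ i : ι,
        ∑ f ∈ univ.filter (fun f : Fin p → ι => f j₀ = i ∧ f j₁ = i), W f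
          ≤ z i * m ^ (p-2) := by
      intro i
      set g : Fin p → ι → ℝ := fun j i' =>
        if j = j₀ ∨ j = j₁ then (if i' = i then z i' else 0) else z i' with hg
      have hgnn : ∀ j i', 0 ≤ g j i' := by
        intro j i'; dsimp [g]
        split
        · split
          · exact hz i'
          · exact le_refl 0
        · exact hz i'
      have step : ∑ f ∈ univ.filter (fun f : Fin p → ι => f j₀ = i ∧ f j₁ = i), W f
          ≤ ∑ f : Fin p → ι, ∏ j, g j (f j) := by
        have heq : ∀ f ∈ univ.filter (fun f : Fin p → ι => f j₀ = i ∧ f j₁ = i),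
            W f = ∏ j, g j (f j) := by
          intro f hf
          simp only [Finset.mem_filter] at hf
          refine Finset.prod_congr rfl (fun j _ => ?_)
          dsimp [g]
          split
          · rename_i hj
            have hfj : f j = i := by rcases hj with rfl | rfl; exacts [hf.2.1, hf.2.2]
            simp [hfj]
          · rfl
        rw [Finset.sum_congr rfl heq]
        exact Finset.sum_le_sum_of_subset_of_nonneg (Finset.filter_subset _ _)
          (fun f _ _ => Finset.prod_nonneg (fun j _ => hgnn j (f j)))
      have heval : ∑ f : Fin p → ι, ∏ j, g j (f j) = z i ^ 2 * m ^ (p-2) := by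
        rw [sum_prod_fun]
        have hcoord : ∀ j : Fin p, ∑ i', g j i' = if j = j₀ ∨ j = j₁ then z i else m := by
          intro j; dsimp [g]
          split
          · rw [Finset.sum_ite_eq' univ i z]; simp
          · rfl
        rw [Finset.prod_congr rfl (fun j _ => hcoord j)]
        rw [Finset.prod_ite (fun _ => z i) (fun _ => m), Finset.prod_const, Finset.prod_const]
        have h1 : univ.filter (fun j : Fin p => j = j₀ ∨ j = j₁) = {j₀, j₁} := by
          ext j; simp [Finset.mem_insert]
        have h2 : (univ.filter (fun j : Fin p => ¬(j = j₀ ∨ j = j₁))).card = p - 2 := by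
          rw [Finset.filter_not, Finset.card_sdiff_of_subset (by intro j hj; exact Finset.mem_univ j)]
          rw [h1, Finset.card_univ, Fintype.card_fin, Finset.card_insert_of_notMem (by simp [hne]),
            Finset.card_singleton]
        rw [h1, h2]
        congr 1
        rw [Finset.card_insert_of_notMem (by simp [hne]), Finset.card_singleton]
      calc ∑ f ∈ univ.filter (fun f : Fin p → ι => f j₀ = i ∧ f j₁ = i), W f
          ≤ z i ^ 2 * m ^ (p-2) := step.trans_eq heval
        _ ≤ z i * m ^ (p-2) := by
            have : z i ^ 2 ≤ z i := by nlinarith [hz i, hzle i]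
            exact mul_le_mul_of_nonneg_right this (by positivity)
    have cover : univ.filter (fun f : Fin p → ι => f j₀ = f j₁)
        ⊆ univ.filter (fun f : Fin p → ι => ∃ i ∈ (univ : Finset ι), f j₀ = i ∧ f j₁ = i) := by
      intro f hf
      simp only [Finset.mem_filter, Finset.mem_univ, true_and] at hf ⊢
      exact ⟨f j₁, hf, rfl⟩
    calc ∑ f ∈ univ.filter (fun f : Fin p → ι => f j₀ = f j₁), W f
        ≤ ∑ f ∈ univ.filter (fun f : Fin p → ι => ∃ i ∈ (univ : Finset ι), f j₀ = i ∧ f j₁ = i), W f :=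
          Finset.sum_le_sum_of_subset_of_nonneg cover (fun f _ _ => hWnn f)
      _ ≤ ∑ i : ι, ∑ f ∈ univ.filter (fun f : Fin p → ι => f j₀ = i ∧ f j₁ = i), W f :=
          union_bound univ _ W hWnn
      _ ≤ ∑ i : ι, z i * m ^ (p-2) := Finset.sum_le_sum (fun i _ => perI i)
      _ = m * m ^ (p-2) := by rw [← Finset.sum_mul]
      _ = m ^ (p-1) := by
          rw [← pow_succ']
          congr 1
          omega
  have hbad1 : ∑ f ∈ univ.filter (fun f : Fin p → ι => ¬ Function.Injective f), W f
      ≤ (p:ℝ)^2 * m ^ (p-1) := by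
    have cover : univ.filter (fun f : Fin p → ι => ¬ Function.Injective f)
        ⊆ univ.filter (fun f : Fin p → ι =>
            ∃ a ∈ (univ : Finset (Fin p)).offDiag, f a.1 = f a.2) := by
      intro f hf
      simp only [Finset.mem_filter, Finset.mem_univ, true_and] at hf ⊢
      rw [Function.not_injective_iff] at hf
      obtain ⟨j₀, j₁, hfe, hne⟩ := hf
      exact ⟨(j₀, j₁), Finset.mem_offDiag.mpr ⟨Finset.mem_univ _, Finset.mem_univ _, hne⟩, hfe⟩
    calc ∑ f ∈ univ.filter (fun f : Fin p → ι => ¬ Function.Injective f), W f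
        ≤ ∑ f ∈ univ.filter (fun f : Fin p → ι =>
            ∃ a ∈ (univ : Finset (Fin p)).offDiag, f a.1 = f a.2), W f :=
          Finset.sum_le_sum_of_subset_of_nonneg cover (fun f _ _ => hWnn f)
      _ ≤ ∑ a ∈ (univ : Finset (Fin p)).offDiag,
            ∑ f ∈ univ.filter (fun f : Fin p → ι => f a.1 = f a.2), W f :=
          union_bound _ _ W hWnn
      _ ≤ ∑ a ∈ (univ : Finset (Fin p)).offDiag, m ^ (p-1) := by
          refine Finset.sum_le_sum (fun a ha => ?_)
          exact key1 a.1 a.2 (Finset.mem_offDiag.mp ha).2.2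
      _ = ((univ : Finset (Fin p)).offDiag.card : ℝ) * m ^ (p-1) := by
          rw [Finset.sum_const, nsmul_eq_mul]
      _ ≤ (p:ℝ)^2 * m ^ (p-1) := by
          refine mul_le_mul_of_nonneg_right ?_ (by positivity)
          rw [Finset.offDiag_card, Finset.card_univ, Fintype.card_fin]
          calc (((p*p - p : ℕ)):ℝ) ≤ ((p*p : ℕ) : ℝ) := Nat.cast_le.mpr (Nat.sub_le _ _)
            _ = (p:ℝ)^2 := by push_cast; ring
  -- ### Bad2 bound
  set L : ℝ → ℝ := fun e => ∑ i' ∈ univ.filter (fun i' => e ∈ F i'), z i' with hLdef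
  have key2 : ∀ (J : Finset (Fin p)) (j₀ : Fin p), J.card = q → j₀ ∈ J →
      ∑ f ∈ univ.filter (fun f : Fin p → ι =>
          ∃ e ∈ LE (f j₀), ∀ j ∈ J.erase j₀, e ∈ F (f j)), W f
        ≤ (d:ℝ) * m ^ (p - q + 1) := by
    intro J j₀ hJq hj₀
    have perA : ∀ (i : ι) (e : ℝ), e ∈ LE i →
        ∑ f ∈ univ.filter (fun f : Fin p → ι =>
            f j₀ = i ∧ ∀ j ∈ J.erase j₀, e ∈ F (f j)), W f
          ≤ z i * m ^ (p - q) := by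
      intro i e heLE
      set g : Fin p → ι → ℝ := fun j i' =>
        if j = j₀ then (if i' = i then z i' else 0)
        else if j ∈ J.erase j₀ then (if e ∈ F i' then z i' else 0) else z i' with hg
      have hgnn : ∀ j i', 0 ≤ g j i' := by
        intro j i'; dsimp [g]
        split
        · split
          · exact hz i'
          · exact le_refl 0
        · split
          · split
            · exact hz i'
            · exact le_refl 0
          · exact hz i'
      have step : ∑ f ∈ univ.filter (fun f : Fin p → ι =>
            f j₀ = i ∧ ∀ j ∈ J.erase j₀, e ∈ F (f j)), W f
          ≤ ∑ f : Fin p → ι, ∏ j, g j (f j) := by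
        have heq : ∀ f ∈ univ.filter (fun f : Fin p → ι =>
            f j₀ = i ∧ ∀ j ∈ J.erase j₀, e ∈ F (f j)), W f = ∏ j, g j (f j) := by
          intro f hf
          simp only [Finset.mem_filter] at hf
          refine Finset.prod_congr rfl (fun j _ => ?_)
          dsimp [g]
          split
          · rename_i hj
            subst hj
            simp [hf.2.1]
          · split
            · rename_i hj hj'
              simp [hf.2.2 j hj']
            · rfl
        rw [Finset.sum_congr rfl heq]
        exact Finset.sum_le_sum_of_subset_of_nonneg (Finset.filter_subset _ _)
          (fun f _ _ => Finset.prod_nonneg (fun j _ => hgnn j (f j)))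
      have heval : ∑ f : Fin p → ι, ∏ j, g j (f j) = z i * (L e) ^ (q-1) * m ^ (p-q) := by
        rw [sum_prod_fun]
        have hcoord : ∀ j : Fin p, ∑ i', g j i'
            = if j = j₀ then z i else if j ∈ J.erase j₀ then L e else m := by
          intro j; dsimp [g]
          split
          · rw [Finset.sum_ite_eq' univ i z]; simp
          · split
            · rw [show L e = ∑ i' ∈ univ.filter (fun i' => e ∈ F i'), z i' from rfl,
                Finset.sum_filter]
            · rfl
        rw [Finset.prod_congr rfl (fun j _ => hcoord j)]
        have hcong : ∀ j ∈ univ.erase j₀,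
            (if j = j₀ then z i else if j ∈ J.erase j₀ then L e else m)
              = if j ∈ J.erase j₀ then L e else m := by
          intro j hj
          rw [if_neg (Finset.mem_erase.mp hj).1]
        have hsub : (univ.erase j₀).filter (fun j => j ∈ J.erase j₀) = J.erase j₀ := by
          ext j
          simp only [Finset.mem_filter, Finset.mem_erase, Finset.mem_univ, true_and]
          tauto
        have hc1 : ((univ.erase j₀).filter (fun j => j ∈ J.erase j₀)).card = q - 1 := by
          rw [hsub, Finset.card_erase_of_mem hj₀, hJq]
        have hc2 : ((univ.erase j₀).filter (fun j => ¬ j ∈ J.erase j₀)).card = p - q := by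
          have htot2 : ((univ.erase j₀).filter (fun j => j ∈ J.erase j₀)).card
              + ((univ.erase j₀).filter (fun j => ¬ j ∈ J.erase j₀)).card
              = (univ.erase j₀).card := Finset.card_filter_add_card_filter_not _
          rw [hc1] at htot2
          rw [Finset.card_erase_of_mem (Finset.mem_univ j₀), Finset.card_univ,
            Fintype.card_fin] at htot2
          omega
        have hsplit := Finset.mul_prod_erase univ
          (fun j => if j = j₀ then z i else if j ∈ J.erase j₀ then L e else m)
          (Finset.mem_univ j₀)
        rw [← hsplit]
        simp only [if_pos rfl]
        rw [Finset.prod_congr rfl hcong,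
          Finset.prod_ite (fun _ => L e) (fun _ => m), Finset.prod_const, Finset.prod_const,
          hc1, hc2]
        rw [if_pos trivial]
        ring
      have hL0 : 0 ≤ L e := Finset.sum_nonneg (fun i' _ => hz i')
      have hL1 : L e ≤ 1 := hload i e heLE
      calc ∑ f ∈ univ.filter (fun f : Fin p → ι =>
            f j₀ = i ∧ ∀ j ∈ J.erase j₀, e ∈ F (f j)), W f
          ≤ z i * (L e) ^ (q-1) * m ^ (p-q) := step.trans_eq heval
        _ ≤ z i * 1 * m ^ (p-q) := by
            refine mul_le_mul_of_nonneg_right (mul_le_mul_of_nonneg_left ?_ (hz i)) (by positivity)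
            exact pow_le_one₀ hL0 hL1
        _ = z i * m ^ (p-q) := by ring
    have cover : univ.filter (fun f : Fin p → ι =>
          ∃ e ∈ LE (f j₀), ∀ j ∈ J.erase j₀, e ∈ F (f j))
        ⊆ univ.filter (fun f : Fin p → ι =>
            ∃ a ∈ (univ : Finset ι).sigma (fun i => LE i),
              f j₀ = a.1 ∧ ∀ j ∈ J.erase j₀, a.2 ∈ F (f j)) := by
      intro f hf
      simp only [Finset.mem_filter, Finset.mem_univ, true_and] at hf ⊢
      obtain ⟨e, he, hein⟩ := hf
      exact ⟨⟨f j₀, e⟩, Finset.mem_sigma.mpr ⟨Finset.mem_univ _, he⟩, rfl, hein⟩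
    calc ∑ f ∈ univ.filter (fun f : Fin p → ι =>
          ∃ e ∈ LE (f j₀), ∀ j ∈ J.erase j₀, e ∈ F (f j)), W f
        ≤ ∑ f ∈ univ.filter (fun f : Fin p → ι =>
            ∃ a ∈ (univ : Finset ι).sigma (fun i => LE i),
              f j₀ = a.1 ∧ ∀ j ∈ J.erase j₀, a.2 ∈ F (f j)), W f :=
          Finset.sum_le_sum_of_subset_of_nonneg cover (fun f _ _ => hWnn f)
      _ ≤ ∑ a ∈ (univ : Finset ι).sigma (fun i => LE i),
            ∑ f ∈ univ.filter (fun f : Fin p → ι =>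
              f j₀ = a.1 ∧ ∀ j ∈ J.erase j₀, a.2 ∈ F (f j)), W f :=
          union_bound _ _ W hWnn
      _ ≤ ∑ a ∈ (univ : Finset ι).sigma (fun i => LE i), z a.1 * m ^ (p - q) := by
          refine Finset.sum_le_sum (fun a ha => ?_)
          exact perA a.1 a.2 (Finset.mem_sigma.mp ha).2
      _ = ∑ i : ι, ∑ e ∈ LE i, z i * m ^ (p-q) := by rw [Finset.sum_sigma]
      _ ≤ ∑ i : ι, (d:ℝ) * (z i * m ^ (p-q)) := by
          refine Finset.sum_le_sum (fun i _ => ?_)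
          rw [Finset.sum_const, nsmul_eq_mul]
          refine mul_le_mul_of_nonneg_right ?_ (mul_nonneg (hz i) (by positivity))
          exact_mod_cast hLEcard i
      _ = (d:ℝ) * m ^ (p - q + 1) := by
          rw [← Finset.mul_sum, ← Finset.sum_mul, ← hm, pow_succ]
          ring
  set B2 : (Fin p → ι) → Prop := fun f => ∃ J : Finset (Fin p), J.card = q ∧
      ∃ j₀ ∈ J, ∃ e ∈ LE (f j₀), ∀ j ∈ J.erase j₀, e ∈ F (f j) with hB2
  set T : Finset (Σ _ : Finset (Fin p), Fin p) :=
    (univ.powersetCard q).sigma (fun J => J) with hT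
  have hbad2 : ∑ f ∈ univ.filter B2, W f
      ≤ (p.choose q : ℝ) * q * ((d:ℝ) * m ^ (p - q + 1)) := by
    have cover : univ.filter B2 ⊆ univ.filter (fun f : Fin p → ι =>
        ∃ a ∈ T, ∃ e ∈ LE (f a.2), ∀ j ∈ a.1.erase a.2, e ∈ F (f j)) := by
      intro f hf
      simp only [Finset.mem_filter, Finset.mem_univ, true_and, hB2] at hf ⊢
      obtain ⟨J, hJq, j₀, hj₀, he⟩ := hf
      refine ⟨⟨J, j₀⟩, ?_, he⟩
      rw [hT, Finset.mem_sigma, Finset.mem_powersetCard]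
      exact ⟨⟨Finset.subset_univ _, hJq⟩, hj₀⟩
    have hTcard : T.card = p.choose q * q := by
      rw [hT, Finset.card_sigma]
      rw [Finset.sum_congr rfl (fun J hJ => (Finset.mem_powersetCard.mp hJ).2)]
      rw [Finset.sum_const, smul_eq_mul, Finset.card_powersetCard, Finset.card_univ,
        Fintype.card_fin]
    calc ∑ f ∈ univ.filter B2, W f
        ≤ ∑ f ∈ univ.filter (fun f : Fin p → ι =>
            ∃ a ∈ T, ∃ e ∈ LE (f a.2), ∀ j ∈ a.1.erase a.2, e ∈ F (f j)), W f :=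
          Finset.sum_le_sum_of_subset_of_nonneg cover (fun f _ _ => hWnn f)
      _ ≤ ∑ a ∈ T, ∑ f ∈ univ.filter (fun f : Fin p → ι =>
            ∃ e ∈ LE (f a.2), ∀ j ∈ a.1.erase a.2, e ∈ F (f j)), W f :=
          union_bound _ _ W hWnn
      _ ≤ ∑ a ∈ T, (d:ℝ) * m ^ (p - q + 1) := by
          refine Finset.sum_le_sum (fun a ha => ?_)
          rw [hT, Finset.mem_sigma, Finset.mem_powersetCard] at ha
          exact key2 a.1 a.2 ha.1.2 ha.2
      _ = (T.card : ℝ) * ((d:ℝ) * m ^ (p - q + 1)) := by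
          rw [Finset.sum_const, nsmul_eq_mul]
      _ = (p.choose q : ℝ) * q * ((d:ℝ) * m ^ (p - q + 1)) := by
          rw [hTcard]; push_cast; ring
  -- ### a good tuple exists
  have hgood : ∃ f : Fin p → ι, Function.Injective f ∧ ¬ B2 f := by
    by_contra hbad
    push_neg at hbad
    have hcover : (univ : Finset (Fin p → ι))
        = univ.filter (fun f : Fin p → ι => ¬ Function.Injective f) ∪ univ.filter B2 := by
      refine (Finset.eq_univ_iff_forall.mpr ?_).symm
      intro f
      by_cases hinj : Function.Injective f
      · exact Finset.mem_union_right _ (Finset.mem_filter.mpr ⟨Finset.mem_univ f, hbad f hinj⟩)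
      · exact Finset.mem_union_left _ (Finset.mem_filter.mpr ⟨Finset.mem_univ f, hinj⟩)
    have hsplit2 : m ^ p ≤ (p:ℝ)^2 * m ^ (p-1) + (p.choose q : ℝ) * q * ((d:ℝ) * m ^ (p-q+1)) := by
      have h1 : m ^ p = ∑ f ∈ (univ : Finset (Fin p → ι)), W f := htot.symm
      have h2 : ∑ f ∈ (univ : Finset (Fin p → ι)), W f
          ≤ ∑ f ∈ univ.filter (fun f : Fin p → ι => ¬ Function.Injective f), W f
            + ∑ f ∈ univ.filter B2, W f := by
        have he : ∑ f ∈ (univ : Finset (Fin p → ι)), W f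
            = ∑ f ∈ (univ.filter (fun f : Fin p → ι => ¬Function.Injective f)
                ∪ univ.filter B2), W f :=
          Finset.sum_congr hcover (fun _ _ => rfl)
        rw [he]
        have := Finset.sum_union_inter
          (s₁ := univ.filter (fun f : Fin p → ι => ¬ Function.Injective f))
          (s₂ := univ.filter B2) (f := W)
        have hnn : 0 ≤ ∑ f ∈ (univ.filter (fun f : Fin p → ι => ¬ Function.Injective f)
            ∩ univ.filter B2), W f := Finset.sum_nonneg (fun f _ => hWnn f)
        linarith
      linarith [hbad1, hbad2]
    -- ### numeric contradiction
    have hnum1 : (p:ℝ)^2 * m ^ (p-1) < m ^ p / 2 := by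
      have hmm : m ^ p = m * m ^ (p-1) := by
        rw [← pow_succ']; congr 1; omega
      have hpow : (0:ℝ) < m ^ (p-1) := by positivity
      rw [hmm]
      nlinarith [hpow, hmp]
    have hnum2 : (p.choose q : ℝ) * q * ((d:ℝ) * m ^ (p-q+1)) < m ^ p / 2 := by
      have hq0 : (0:ℝ) < q := by exact_mod_cast Nat.lt_of_lt_of_le Nat.zero_lt_two hq
      set X : ℝ := Real.exp 1 * p with hX
      have hX0 : 0 ≤ X := by positivity
      set A : ℝ := 2 * X ^ ((q:ℝ)/((q:ℝ)-1)) * (d:ℝ) ^ (1/((q:ℝ)-1)) / q with hA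
      have hA0 : 0 ≤ A := by
        rw [hA]
        have : (0:ℝ) ≤ X ^ ((q:ℝ)/((q:ℝ)-1)) := Real.rpow_nonneg hX0 _
        positivity
      have hγ : ((q - 1 : ℕ) : ℝ) = (q:ℝ) - 1 := by
        push_cast [Nat.cast_sub hq1]
        ring
      have hγ0 : ((q:ℝ) - 1) ≠ 0 := by
        have : (2:ℝ) ≤ q := by exact_mod_cast hq
        intro h; linarith
      have h1 : (X ^ ((q:ℝ)/((q:ℝ)-1))) ^ (q-1) = X ^ q := by
        rw [← Real.rpow_natCast (X ^ ((q:ℝ)/((q:ℝ)-1))) (q-1), ← Real.rpow_mul hX0, hγ,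
          div_mul_cancel₀ _ hγ0, Real.rpow_natCast]
      have h2 : ((d:ℝ) ^ (1/((q:ℝ)-1))) ^ (q-1) = (d:ℝ) := by
        rw [← Real.rpow_natCast ((d:ℝ) ^ (1/((q:ℝ)-1))) (q-1), ← Real.rpow_mul (by positivity),
          hγ, one_div, inv_mul_cancel₀ hγ0, Real.rpow_one]
      have hApow : A ^ (q-1) = 2^(q-1) * (X ^ q * (d:ℝ)) / (q:ℝ)^(q-1) := by
        rw [hA, div_pow, mul_pow, mul_pow, h1, h2]; ring
      have hCq : (p.choose q : ℝ) * (q:ℝ)^q ≤ X ^ q := by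
        have hdesc : (p.choose q : ℝ) * (q.factorial : ℝ) = (p.descFactorial q : ℝ) := by
          rw [Nat.descFactorial_eq_factorial_mul_choose]; push_cast; ring
        have hdesc2 : (p.descFactorial q : ℝ) ≤ (p:ℝ)^q := by
          exact_mod_cast Nat.descFactorial_le_pow p q
        have hqq : ((q:ℝ))^q ≤ Real.exp 1 ^ q * (q.factorial : ℝ) := by
          have hh := Real.pow_div_factorial_le_exp (x := (q:ℝ)) (by positivity) q
          rw [div_le_iff₀ (by positivity)] at hh
          calc ((q:ℝ))^q ≤ Real.exp q * (q.factorial : ℝ) := hh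
            _ = Real.exp 1 ^ q * (q.factorial : ℝ) := by rw [← Real.exp_one_pow]
        calc (p.choose q : ℝ) * (q:ℝ)^q
            ≤ (p.choose q : ℝ) * (Real.exp 1 ^ q * (q.factorial : ℝ)) :=
              mul_le_mul_of_nonneg_left hqq (by positivity)
          _ = Real.exp 1 ^ q * ((p.choose q : ℝ) * (q.factorial : ℝ)) := by ring
          _ ≤ Real.exp 1 ^ q * (p:ℝ)^q := by
              refine mul_le_mul_of_nonneg_left ?_ (by positivity)
              rw [hdesc]; exact hdesc2
          _ = X ^ q := by rw [hX, mul_pow]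
      have hmain : 2 * (p.choose q : ℝ) * q * d ≤ A ^ (q-1) := by
        rw [hApow, le_div_iff₀ (by positivity)]
        have h2q : (2:ℝ) ≤ 2^(q-1) := by
          calc (2:ℝ) = 2^1 := (pow_one 2).symm
            _ ≤ 2^(q-1) := pow_le_pow_right₀ (by norm_num) (by omega)
        have hqpow : (q:ℝ) * (q:ℝ)^(q-1) = (q:ℝ)^q := by
          rw [← pow_succ']; congr 1; omega
        calc 2 * (p.choose q : ℝ) * q * d * (q:ℝ)^(q-1)
            = 2 * ((p.choose q : ℝ) * (q:ℝ)^q) * d := by rw [← hqpow]; ring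
          _ ≤ 2 * (X ^ q) * d := by
              refine mul_le_mul_of_nonneg_right (mul_le_mul_of_nonneg_left hCq (by norm_num))
                (by positivity)
          _ ≤ 2^(q-1) * (X ^ q * (d:ℝ)) := by
              have hXq : (0:ℝ) ≤ X ^ q * d := by positivity
              nlinarith [hXq, h2q]
      have hAm : A < m := hmA
      have hpowlt : A^(q-1) < m^(q-1) := by
        refine pow_lt_pow_left₀ hAm hA0 (by omega)
      have hfinal : 2 * (p.choose q:ℝ) * q * d < m^(q-1) := lt_of_le_of_lt hmain hpowlt
      have hmexp : m^(q-1) * m^(p-q+1) = m^p := by rw [← pow_add]; congr 1; omega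
      have hmul : 2 * (p.choose q:ℝ) * q * d * m^(p-q+1) < m^(q-1) * m^(p-q+1) :=
        mul_lt_mul_of_pos_right hfinal (by positivity)
      rw [hmexp] at hmul
      ring_nf at hmul ⊢
      linarith [hmul]
    linarith [hsplit2, hnum1, hnum2]
  -- ### derive the contradiction with the (p,q) property
  obtain ⟨f, hinj, hnB2⟩ := hgood
  obtain ⟨Q, hQP, hQq, hQne⟩ := hpq (univ.image f)
    (by rw [Finset.card_image_of_injective _ hinj, Finset.card_univ, Fintype.card_fin])
  have hQnonempty : Q.Nonempty := Finset.card_pos.mp (by omega)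
  obtain ⟨i₀, hi₀Q, e, heLE, hein⟩ := hpivot Q hQnonempty hQne
  obtain ⟨j₀, _, hj₀⟩ := Finset.mem_image.mp (hQP hi₀Q)
  set J : Finset (Fin p) := univ.filter (fun j => f j ∈ Q) with hJ
  have hJim : J.image f = Q := by
    ext i
    simp only [hJ, Finset.mem_image, Finset.mem_filter, Finset.mem_univ, true_and]
    constructor
    · rintro ⟨j, hj, rfl⟩; exact hj
    · intro hi
      obtain ⟨j, _, rfl⟩ := Finset.mem_image.mp (hQP hi)
      exact ⟨j, hi, rfl⟩
  have hJcard : J.card = q := by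
    rw [← hQq, ← hJim, Finset.card_image_of_injective _ hinj]
  refine hnB2 ⟨J, hJcard, j₀, ?_, e, ?_, ?_⟩
  · simp [hJ, hj₀, hi₀Q]
  · rw [hj₀]; exact heLE
  · intro j hj
    have : f j ∈ Q := by
      have := Finset.mem_of_mem_erase hj
      rw [hJ, Finset.mem_filter] at this
      exact this.2
    exact hein _ this
end ZerbibAux

/-- `S` is a `d`-interval: a nonempty union of at most `d` pairwise disjoint nonempty
closed bounded intervals in `ℝ`. -/
def IsDInterval (d : ℕ) (S : Set ℝ) : Prop :=
  S.Nonempty ∧ ∃ (k : ℕ) (a b : Fin k → ℝ), k ≤ d ∧ (∀ i, a i ≤ b i) ∧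
    (Pairwise fun i j => Disjoint (Set.Icc (a i) (b i)) (Set.Icc (a j) (b j))) ∧
    S = ⋃ i, Set.Icc (a i) (b i)

/-- Zerbib: a finite family of `d`-intervals with the `(p,q)`-property can be pierced
by at most `max{(2(ep)^(q/(q-1))/q) d^(q/(q-1)) + d, 2p²d}` points. -/
theorem zerbib_pq {d p q : ℕ} (hd : 1 ≤ d) (hq : 2 ≤ q) (hqp : q ≤ p)
    {ι : Type*} [Fintype ι]
    (F : ι → Set ℝ) (hF : ∀ i, IsDInterval d (F i))
    (hpq : ∀ P : Finset ι, P.card = p →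
      ∃ Q ⊆ P, Q.card = q ∧ (⋂ i ∈ Q, F i).Nonempty) :
    ∃ C : Finset ℝ,
      (C.card : ℝ) ≤ max
        (2 * (Real.exp 1 * (p : ℝ)) ^ ((q : ℝ) / ((q : ℝ) - 1)) / (q : ℝ) *
          (d : ℝ) ^ ((q : ℝ) / ((q : ℝ) - 1)) + (d : ℝ))
        (2 * (p : ℝ) ^ 2 * (d : ℝ)) ∧
      ∀ i, ∃ x ∈ C, x ∈ F i := by
  classical
  rcases isEmpty_or_nonempty ι with hι | hι
  · refine ⟨∅, ?_, fun i => (hι.false i).elim⟩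
    simp only [Finset.card_empty, Nat.cast_zero]
    exact le_max_of_le_right (by positivity)
  choose hFne k a b hkd hab hcdisj hFeq using hF
  have hk1 : ∀ i, 1 ≤ k i := by
    intro i
    by_contra hk
    have : k i = 0 := by omega
    obtain ⟨x, hx⟩ := hFne i
    rw [hFeq i] at hx
    obtain ⟨j, -⟩ := Set.mem_iUnion.mp hx
    rw [this] at j
    exact j.elim0
  set LE : ι → Finset ℝ := fun i => (univ : Finset (Fin (k i))).image (a i) with hLE
  have hLEcard : ∀ i, (LE i).card ≤ d := by
    intro i
    calc (LE i).card ≤ (univ : Finset (Fin (k i))).card := Finset.card_image_le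
      _ = k i := by rw [Finset.card_univ, Fintype.card_fin]
      _ ≤ d := hkd i
  set E : Finset ℝ := univ.biUnion LE with hE
  have hLEE : ∀ i, LE i ⊆ E := fun i => Finset.subset_biUnion_of_mem LE (Finset.mem_univ i)
  -- membership of left endpoints
  have hmemF : ∀ i (j : Fin (k i)), a i j ∈ F i := by
    intro i j
    rw [hFeq i]
    exact Set.mem_iUnion.mpr ⟨j, Set.mem_Icc.mpr ⟨le_rfl, hab i j⟩⟩
  have hIccF : ∀ i (j : Fin (k i)) x, x ∈ Set.Icc (a i j) (b i j) → x ∈ F i := by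
    intro i j x hx
    rw [hFeq i]
    exact Set.mem_iUnion.mpr ⟨j, hx⟩
  -- pivot property
  have hpivot : ∀ s : Finset ι, s.Nonempty → (⋂ i ∈ s, F i).Nonempty →
      ∃ i₀ ∈ s, ∃ e ∈ LE i₀, ∀ i ∈ s, e ∈ F i := by
    rintro s hs ⟨x, hx⟩
    have hx' : ∀ i ∈ s, x ∈ F i := by
      intro i hi
      exact Set.mem_iInter₂.mp hx i hi
    have hex : ∀ i : {i // i ∈ s}, ∃ j : Fin (k i.1), x ∈ Set.Icc (a i.1 j) (b i.1 j) := by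
      rintro ⟨i, hi⟩
      have h := hx' i hi
      rw [hFeq i] at h
      exact Set.mem_iUnion.mp h
    choose cc hcc using hex
    obtain ⟨i₀, -, hmax⟩ := Finset.exists_max_image s.attach (fun i => a i.1 (cc i))
      (Finset.attach_nonempty_iff.mpr hs)
    refine ⟨i₀.1, i₀.2, a i₀.1 (cc i₀), Finset.mem_image_of_mem _ (Finset.mem_univ _), ?_⟩
    intro i hi
    refine hIccF i (cc ⟨i, hi⟩) _ ⟨hmax ⟨i, hi⟩ (Finset.mem_attach _ _), ?_⟩
    exact (hcc i₀).1.trans (hcc ⟨i, hi⟩).2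
  -- the LP setup
  set X := {x // x ∈ E} with hX
  set g : X → ι → ℝ := fun x i => if (x:ℝ) ∈ F i then 1 else 0 with hg
  set M₀ : ℝ := max (2 * (Real.exp 1 * p) ^ ((q:ℝ)/((q:ℝ)-1)) * (d:ℝ) ^ (1/((q:ℝ)-1)) / q)
    (2 * (p:ℝ)^2) with hM₀
  have hM₀0 : 0 ≤ M₀ := le_max_of_le_right (by positivity)
  set m' : ℝ := M₀ + 1/(2*d) with hm'
  have hm'pos : 0 < m' := by
    rw [hm']
    have h2 : (0:ℝ) < 1/(2*(d:ℝ)) := by positivity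
    linarith [hM₀0, h2]
  rcases lp_alternative (X := X) g (1/m') with ⟨y, hy0, hy1, hycov⟩ | ⟨z, hz0, hz1, hzlt⟩
  swap
  · -- the fractional matching case: contradiction with `sampling`
    exfalso
    set w : ι → ℝ := fun i => m' * z i with hw
    have hw0 : ∀ i, 0 ≤ w i := fun i => mul_nonneg hm'pos.le (hz0 i)
    have hload : ∀ i, ∀ e ∈ LE i, ∑ i' ∈ univ.filter (fun i' => e ∈ F i'), w i' ≤ 1 := by
      intro i e he
      have heE : e ∈ E := hLEE i he
      have h1 := hzlt ⟨e, heE⟩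
      have h2 : ∑ i' ∈ univ.filter (fun i' => e ∈ F i'), z i' = ∑ i', g ⟨e, heE⟩ i' * z i' := by
        rw [Finset.sum_filter]
        refine Finset.sum_congr rfl (fun i' _ => ?_)
        by_cases hmem : e ∈ F i' <;> simp [hg, hmem]
      calc ∑ i' ∈ univ.filter (fun i' => e ∈ F i'), w i'
          = m' * ∑ i' ∈ univ.filter (fun i' => e ∈ F i'), z i' := by
            rw [Finset.mul_sum]
        _ ≤ m' * (1/m') := by
            refine mul_le_mul_of_nonneg_left ?_ hm'pos.le
            rw [h2]; exact h1.le
        _ = 1 := by field_simp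
    have hwle : ∀ i, w i ≤ 1 := by
      intro i
      have hj0 : (⟨0, hk1 i⟩ : Fin (k i)) = ⟨0, hk1 i⟩ := rfl
      set e := a i ⟨0, hk1 i⟩ with he
      have heLE : e ∈ LE i := Finset.mem_image_of_mem _ (Finset.mem_univ _)
      have hiF : i ∈ univ.filter (fun i' => e ∈ F i') := by
        rw [Finset.mem_filter]
        exact ⟨Finset.mem_univ i, hmemF i ⟨0, hk1 i⟩⟩
      calc w i ≤ ∑ i' ∈ univ.filter (fun i' => e ∈ F i'), w i' :=
            Finset.single_le_sum (fun i' _ => hw0 i') hiF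
        _ ≤ 1 := hload i e heLE
    have hsum := sampling hd hq hqp F hpq LE hLEcard hpivot w hw0 hwle hload
    have hsum2 : ∑ i, w i = m' := by
      rw [hw]
      simp only []
      rw [← Finset.mul_sum, hz1, mul_one]
    rw [hsum2, ← hM₀, hm'] at hsum
    have h2 : (0:ℝ) < 1/(2*(d:ℝ)) := by positivity
    linarith [hsum, h2]
  · -- the fractional cover case: round to a piercing set
    set w : X → ℝ := fun x => m' * y x with hw
    have hw0 : ∀ x, 0 ≤ w x := fun x => mul_nonneg hm'pos.le (hy0 x)
    have hwtot : ∑ x : X, w x = m' := by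
      rw [hw]; simp only []; rw [← Finset.mul_sum, hy1, mul_one]
    have hcov : ∀ i, 1 ≤ ∑ x : X, w x * g x i := by
      intro i
      calc (1:ℝ) = m' * (1/m') := by field_simp
        _ ≤ m' * ∑ x : X, y x * g x i := mul_le_mul_of_nonneg_left (hycov i) hm'pos.le
        _ = ∑ x : X, w x * g x i := by
            rw [Finset.mul_sum]
            exact Finset.sum_congr rfl (fun x _ => by rw [hw]; ring)
    have heavy : ∀ i, ∃ j : Fin (k i),
        (1:ℝ)/d ≤ ∑ x ∈ univ.filter (fun x : X => (x:ℝ) ∈ Set.Icc (a i j) (b i j)), w x := by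
      intro i
      by_contra hno
      push_neg at hno
      have hne : (univ : Finset (Fin (k i))).Nonempty := by
        refine ⟨⟨0, hk1 i⟩, Finset.mem_univ _⟩
      have hup : ∑ j : Fin (k i),
          ∑ x ∈ univ.filter (fun x : X => (x:ℝ) ∈ Set.Icc (a i j) (b i j)), w x
          < ∑ j : Fin (k i), (1:ℝ)/d :=
        Finset.sum_lt_sum_of_nonempty hne (fun j _ => hno j)
      have hup2 : ∑ j : Fin (k i), (1:ℝ)/d ≤ 1 := by
        rw [Finset.sum_const, Finset.card_univ, Fintype.card_fin, nsmul_eq_mul]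
        rw [mul_one_div, div_le_one (by positivity)]
        exact_mod_cast hkd i
      have hlow : ∑ x : X, w x * g x i ≤ ∑ j : Fin (k i),
          ∑ x ∈ univ.filter (fun x : X => (x:ℝ) ∈ Set.Icc (a i j) (b i j)), w x := by
        have hrw : ∀ j : Fin (k i),
            ∑ x ∈ univ.filter (fun x : X => (x:ℝ) ∈ Set.Icc (a i j) (b i j)), w x
            = ∑ x : X, (if (x:ℝ) ∈ Set.Icc (a i j) (b i j) then w x else 0) :=
          fun j => Finset.sum_filter _ _
        rw [Finset.sum_congr rfl (fun j _ => hrw j), Finset.sum_comm]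
        refine Finset.sum_le_sum (fun x _ => ?_)
        by_cases hmem : (x:ℝ) ∈ F i
        · have hx2 := hmem
          rw [hFeq i] at hx2
          obtain ⟨j₀, hj₀⟩ := Set.mem_iUnion.mp hx2
          calc w x * g x i = w x := by rw [hg]; simp [hmem]
            _ ≤ ∑ j : Fin (k i), (if (x:ℝ) ∈ Set.Icc (a i j) (b i j) then w x else 0) := by
                refine Finset.single_le_sum (f := fun j : Fin (k i) =>
                  (if (x:ℝ) ∈ Set.Icc (a i j) (b i j) then w x else 0)) ?_ (Finset.mem_univ j₀)
                  |>.trans_eq' ?_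
                · intro j _
                  by_cases hmm : (x:ℝ) ∈ Set.Icc (a i j) (b i j) <;> simp [hmm, hw0 x]
                · rw [if_pos hj₀]
        · calc w x * g x i = 0 := by rw [hg]; simp [hmem]
            _ ≤ _ := Finset.sum_nonneg (fun j _ => by split <;> [exact hw0 x; exact le_rfl])
      linarith [hcov i]
    choose jj hjj using heavy
    obtain ⟨P, T, -, hPT, hpierce, hTdisj⟩ := interval_pierce
      (fun i => a i (jj i)) (fun i => b i (jj i)) (fun i => hab i (jj i)) univ
    have hTsize : (T.card : ℝ) * ((1:ℝ)/d) ≤ m' := by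
      have hdisjf : (T : Set ι).PairwiseDisjoint
          (fun i => univ.filter (fun x : X => (x:ℝ) ∈ Set.Icc (a i (jj i)) (b i (jj i)))) := by
        intro i hi i' hi' hne
        refine Finset.disjoint_left.mpr (fun x hx hx' => ?_)
        rw [Finset.mem_filter] at hx hx'
        exact Set.disjoint_left.mp (hTdisj hi hi' hne) hx.2 hx'.2
      calc (T.card : ℝ) * ((1:ℝ)/d) = ∑ _i ∈ T, (1:ℝ)/d := by
            rw [Finset.sum_const, nsmul_eq_mul]
        _ ≤ ∑ i ∈ T, ∑ x ∈ univ.filter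
              (fun x : X => (x:ℝ) ∈ Set.Icc (a i (jj i)) (b i (jj i))), w x :=
            Finset.sum_le_sum (fun i _ => hjj i)
        _ = ∑ x ∈ T.biUnion (fun i => univ.filter
              (fun x : X => (x:ℝ) ∈ Set.Icc (a i (jj i)) (b i (jj i)))), w x :=
            (Finset.sum_biUnion hdisjf).symm
        _ ≤ ∑ x : X, w x :=
            Finset.sum_le_sum_of_subset_of_nonneg (Finset.subset_univ _) (fun x _ _ => hw0 x)
        _ = m' := hwtot
    have hcard : (P.card : ℝ) ≤ (d:ℝ) * m' := by
      have h1 : (P.card : ℝ) ≤ (T.card : ℝ) := by exact_mod_cast hPT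
      have h2 : (T.card : ℝ) ≤ (d:ℝ) * m' := by
        have hd0 : (0:ℝ) < d := by positivity
        rw [mul_one_div, div_le_iff₀ hd0] at hTsize
        linarith [hTsize]
      linarith
    refine ⟨P, ?_, fun i => ?_⟩
    · -- the size computation
      have hdm' : (d:ℝ) * m' = (d:ℝ) * M₀ + 1/2 := by
        rw [hm', mul_add]
        congr 1
        rw [mul_one_div]
        rw [div_eq_div_iff (by positivity) (by norm_num)]
        ring
      rw [hdm'] at hcard
      by_cases hcase : 2 * (Real.exp 1 * (p:ℝ)) ^ ((q:ℝ)/((q:ℝ)-1)) * (d:ℝ) ^ (1/((q:ℝ)-1)) / q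
          ≤ 2 * (p:ℝ)^2
      · -- second branch
        have hM : M₀ = 2 * (p:ℝ)^2 := max_eq_right hcase
        refine le_max_of_le_right ?_
        have hcard2 : (P.card : ℝ) ≤ 2 * (p:ℝ)^2 * d + 1/2 := by
          rw [hM] at hcard; linarith [hcard]
        have hnat : (P.card : ℝ) ≤ ((2 * p^2 * d : ℕ) : ℝ) := by
          have : (P.card : ℝ) < ((2 * p^2 * d : ℕ) : ℝ) + 1 := by
            push_cast
            push_cast at hcard2
            linarith
          have h3 : P.card < 2 * p^2 * d + 1 := by exact_mod_cast this
          have h4 : P.card ≤ 2 * p^2 * d := by omega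
          exact_mod_cast h4
        calc (P.card : ℝ) ≤ ((2 * p^2 * d : ℕ) : ℝ) := hnat
          _ = 2 * (p:ℝ)^2 * d := by push_cast; ring
      · -- first branch
        have hM : M₀ = 2 * (Real.exp 1 * (p:ℝ)) ^ ((q:ℝ)/((q:ℝ)-1)) * (d:ℝ) ^ (1/((q:ℝ)-1)) / q :=
          max_eq_left (le_of_not_ge hcase)
        refine le_max_of_le_left ?_
        have hdpow : (d:ℝ) * (d:ℝ) ^ (1/((q:ℝ)-1)) = (d:ℝ) ^ ((q:ℝ)/((q:ℝ)-1)) := by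
          have hd0 : (0:ℝ) < d := by positivity
          have hγ0 : ((q:ℝ) - 1) ≠ 0 := by
            have : (2:ℝ) ≤ q := by exact_mod_cast hq
            intro h; linarith
          calc (d:ℝ) * (d:ℝ) ^ (1/((q:ℝ)-1))
              = (d:ℝ) ^ (1:ℝ) * (d:ℝ) ^ (1/((q:ℝ)-1)) := by rw [Real.rpow_one]
            _ = (d:ℝ) ^ ((1:ℝ) + 1/((q:ℝ)-1)) := (Real.rpow_add hd0 _ _).symm
            _ = (d:ℝ) ^ ((q:ℝ)/((q:ℝ)-1)) := by
                congr 1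
                field_simp; ring
        have : (d:ℝ) * M₀ = 2 * (Real.exp 1 * (p:ℝ)) ^ ((q:ℝ)/((q:ℝ)-1)) / q
            * (d:ℝ) ^ ((q:ℝ)/((q:ℝ)-1)) := by
          rw [hM, ← hdpow]; ring
        rw [this] at hcard
        have hd1 : (1:ℝ)/2 ≤ d := by
          have : (1:ℝ) ≤ d := by exact_mod_cast hd
          linarith
        linarith [hcard]
    · -- piercing property
      obtain ⟨x, hxP, hx⟩ := hpierce i (Finset.mem_univ i)
      exact ⟨x, hxP, hIccF i (jj i) x hx⟩
end

section
/- Let d ≥ 1 and let F be a finite family of convex sets in ℝ^d such that every subfamily of F with at most 2^d members has a common point belonging to the integer lattice ℤ^d. Then all the sets of F have a common point belonging to ℤ^d. -/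
open Set

lemma lat_inter_finite {d : ℕ} {s : Set (Fin d → ℝ)} (hb : Bornology.IsBounded s) :
    (s ∩ {p : Fin d → ℝ | ∀ j, ∃ m : ℤ, p j = (m : ℝ)}).Finite := by
  obtain ⟨R, hR⟩ := isBounded_iff_forall_norm_le.mp hb
  have hfin : (Set.pi univ (fun _ : Fin d => (Set.Icc (-⌈R⌉) ⌈R⌉ : Set ℤ))).Finite :=
    Set.Finite.pi (fun _ => Set.finite_Icc _ _)
  apply Set.Finite.subset ((hfin.image (fun m : Fin d → ℤ => fun j => (m j : ℝ))))
  rintro p ⟨hps, hpl⟩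
  choose m hm using hpl
  refine ⟨m, ?_, by funext j; exact (hm j).symm⟩
  intro j _
  have h1 : |p j| ≤ R := (show ‖p j‖ ≤ ‖p‖ from norm_le_pi_norm p j).trans (hR p hps)
  rw [hm j] at h1
  rw [abs_le] at h1
  constructor
  · have : (-⌈R⌉ : ℝ) ≤ (m j : ℝ) := by
      calc (-⌈R⌉ : ℝ) ≤ -R := by simpa using Int.le_ceil R
      _ ≤ m j := h1.1
    exact_mod_cast this
  · have : ((m j : ℝ)) ≤ (⌈R⌉ : ℝ) := h1.2.trans (Int.le_ceil R)
    exact_mod_cast this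

lemma combo_mem {d : ℕ} {s : Set (Fin d → ℝ)} (hs : Convex ℝ s) {u v w p : Fin d → ℝ}
    (hu : u ∈ s) (hv : v ∈ s) (hw : w ∈ s) {a b c T : ℝ}
    (ha : 0 ≤ a) (hb : 0 ≤ b) (hc : 0 ≤ c) (hT : a + b + c = T) (hTpos : 0 < T)
    (hp : ∀ j, T * p j = a * u j + b * v j + c * w j) : p ∈ s := by
  have key : ∑ t : Fin 3, (![a/T, b/T, c/T] t) • (![u, v, w] t) ∈ s := by
    apply hs.sum_mem
    · intro t _
      fin_cases t <;> · simp; positivity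
    · rw [Fin.sum_univ_three]
      simp only [Matrix.cons_val_zero, Matrix.cons_val_one, Matrix.head_cons, Matrix.cons_val_two,
        Matrix.tail_cons]
      field_simp
      linarith
    · intro t _
      fin_cases t <;> simpa
  rw [Fin.sum_univ_three] at key
  convert key using 1
  funext j
  have := hp j
  simp only [Pi.add_apply, Pi.smul_apply, smul_eq_mul, Matrix.cons_val_zero,
    Matrix.cons_val_one, Matrix.head_cons, Matrix.cons_val_two, Matrix.tail_cons]
  field_simp
  linarith

lemma range_update {α β : Type*} [DecidableEq α] (x : α → β) (k : α) (y : β) :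
    Set.range (Function.update x k y) = insert y (x '' {l | l ≠ k}) := by
  ext p
  constructor
  · rintro ⟨l, rfl⟩
    by_cases h : l = k
    · subst h; rw [Function.update_self]; exact mem_insert _ _
    · rw [Function.update_of_ne h]; exact mem_insert_of_mem _ ⟨l, h, rfl⟩
  · rintro (rfl | ⟨l, hl, rfl⟩)
    · exact ⟨k, Function.update_self _ _ _⟩
    · exact ⟨l, Function.update_of_ne hl _ _⟩

theorem doignon_core {d : ℕ} (hd : 1 ≤ d) {ι : Type*} [Fintype ι]
    (hcard : 2 ^ d < Fintype.card ι) (N : ℕ) :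
    ∀ (C : ι → Set (Fin d → ℝ)) (x : ι → Fin d → ℝ),
      (∀ i, Convex ℝ (C i)) →
      (∀ l j, ∃ m : ℤ, x l j = (m : ℝ)) →
      (∀ l j, l ≠ j → x l ∈ C j) →
      (convexHull ℝ (Set.range x) ∩ {p : Fin d → ℝ | ∀ j, ∃ m : ℤ, p j = (m : ℝ)}).ncard ≤ N →
      ∃ p : Fin d → ℝ, (∀ j, ∃ m : ℤ, p j = (m : ℝ)) ∧ ∀ i, p ∈ C i := by
  induction N with
  | zero =>
    intro C x hC hlat hx hN
    exfalso
    have hne : Nonempty ι :=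
      Fintype.card_pos_iff.mp (lt_of_le_of_lt (Nat.zero_le _) hcard)
    obtain ⟨i0⟩ := hne
    have hfin : (convexHull ℝ (Set.range x) ∩
        {p : Fin d → ℝ | ∀ j, ∃ m : ℤ, p j = (m : ℝ)}).Finite :=
      lat_inter_finite ((Set.finite_range x).isCompact_convexHull ℝ).isBounded
    have hmem : x i0 ∈ convexHull ℝ (Set.range x) ∩
        {p : Fin d → ℝ | ∀ j, ∃ m : ℤ, p j = (m : ℝ)} :=
      ⟨subset_convexHull ℝ _ ⟨i0, rfl⟩, fun j => hlat i0 j⟩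
    have hz : (convexHull ℝ (Set.range x) ∩
        {p : Fin d → ℝ | ∀ j, ∃ m : ℤ, p j = (m : ℝ)}).ncard = 0 := le_antisymm hN (Nat.zero_le _)
    rw [Set.ncard_eq_zero hfin] at hz
    rw [hz] at hmem
    exact hmem
  | succ N ih =>
    intro C x hC hlat hx hN
    classical
    -- If some `x l` lies in its own set, it is a common point.
    by_cases hgood : ∃ l, x l ∈ C l
    · obtain ⟨l, hl⟩ := hgood
      refine ⟨x l, fun j => hlat l j, fun j => ?_⟩
      by_cases h : l = j
      · exact h ▸ hl
      · exact hx l j h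
    push_neg at hgood
    -- Pigeonhole modulo 2.
    choose m hm using hlat
    have hcard2 : Fintype.card (Fin d → ZMod 2) < Fintype.card ι := by
      rwa [Fintype.card_fun, ZMod.card, Fintype.card_fin]
    obtain ⟨i, k, hik, hg⟩ :=
      Fintype.exists_ne_map_eq_of_card_lt (fun l (j : Fin d) => ((m l j : ZMod 2))) hcard2
    -- The midpoint `y` of `x i` and `x k` is a lattice point.
    set y : Fin d → ℝ := fun j => (x i j + x k j) / 2 with hy
    have hylat : ∀ j, ∃ q : ℤ, y j = (q : ℝ) := by
      intro j
      have h2 : (m i j : ZMod 2) = (m k j : ZMod 2) := congrFun hg j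
      rw [ZMod.intCast_eq_intCast_iff'] at h2
      have hdvd2 : (2 : ℤ) ∣ m k j - m i j := Int.ModEq.dvd (by exact_mod_cast h2)
      have hdvd : 2 ∣ m i j + m k j := by
        obtain ⟨t, ht⟩ := hdvd2
        exact ⟨m i j + t, by linarith⟩
      obtain ⟨q, hq⟩ := hdvd
      refine ⟨q, ?_⟩
      have hcast : (m i j : ℝ) + (m k j : ℝ) = 2 * (q : ℝ) := by
        exact_mod_cast congrArg (fun t : ℤ => (t : ℝ)) hq
      rw [hy]
      simp only
      rw [hm i j, hm k j]
      linarith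
    have hymid : y = (1 / 2 : ℝ) • x i + (1 / 2 : ℝ) • x k := by
      funext j
      simp only [hy, Pi.add_apply, Pi.smul_apply, smul_eq_mul]
      ring
    have hyC : ∀ j, j ≠ i → j ≠ k → y ∈ C j := by
      intro j hji hjk
      rw [hymid]
      exact hC j (hx i j hji.symm) (hx k j hjk.symm) (by norm_num) (by norm_num) (by norm_num)
    have hyj : ∀ j, y j = (x i j + x k j) / 2 := fun j => rfl
    set L : Set (Fin d → ℝ) := {p : Fin d → ℝ | ∀ j, ∃ q : ℤ, p j = (q : ℝ)} with hLdef
    set hull := convexHull ℝ (Set.range x) with hhull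
    have hullfin : (hull ∩ L).Finite :=
      lat_inter_finite ((Set.finite_range x).isCompact_convexHull ℝ).isBounded
    have hyhull : y ∈ hull := by
      rw [hymid]
      exact (convex_convexHull ℝ (Set.range x)) (subset_convexHull ℝ (Set.range x) (Set.mem_range_self i))
        (subset_convexHull ℝ (Set.range x) (Set.mem_range_self k)) (by norm_num) (by norm_num) (by norm_num)
    -- The updated tuple `x'` and its hull `Q`.
    set x' := Function.update x k y with hx'def
    set Q := convexHull ℝ (Set.range x') with hQdef
    have hrange' : Set.range x' = insert y (x '' {l | l ≠ k}) := range_update x k y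
    have himage_sub : ∀ jj, x '' {l | l ≠ jj} ⊆ C jj := by
      rintro jj p ⟨l, hl, rfl⟩
      exact hx l jj hl
    have hQsub : Q ⊆ hull := by
      apply convexHull_min ?_ (convex_convexHull ℝ _)
      rw [hrange']
      rintro p (rfl | ⟨l, _, rfl⟩)
      · exact hyhull
      · exact subset_convexHull ℝ _ (Set.mem_range_self l)
    have hne_k : (x '' {l | l ≠ k}).Nonempty := ⟨x i, i, hik, rfl⟩
    have hxkQ : x k ∉ Q := by
      intro hmem
      rw [hQdef, hrange', convexHull_insert hne_k, mem_convexJoin] at hmem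
      obtain ⟨y₀, hy₀, w, hw, hseg⟩ := hmem
      rw [mem_singleton_iff] at hy₀
      subst hy₀
      have hwCk : w ∈ C k := convexHull_min (himage_sub k) (hC k) hw
      obtain ⟨a, b, ha, hb, hab, hcomb⟩ := hseg
      refine hgood k (combo_mem (hC k) (hx i k hik) hwCk hwCk
        (a := a / 2) (b := b) (c := 0) (T := 1 - a / 2)
        (by linarith) hb le_rfl (by linarith) (by linarith) ?_)
      intro j
      have e2 := congrFun hcomb j
      simp only [Pi.add_apply, Pi.smul_apply, smul_eq_mul] at e2
      have e3 := hyj j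
      rw [e3] at e2
      linear_combination (-1 : ℝ) * e2
    have hxkL : x k ∈ hull ∩ L :=
      ⟨subset_convexHull ℝ (Set.range x) (Set.mem_range_self k), fun j => ⟨m k j, hm k j⟩⟩
    have hssub : (Q ∩ L) ⊂ (hull ∩ L) := by
      rw [Set.ssubset_def]
      constructor
      · exact inter_subset_inter_left _ hQsub
      · intro hsup
        exact hxkQ (hsup hxkL).1
    have hNQ : (Q ∩ L).ncard ≤ N := by
      have h1 := Set.ncard_lt_ncard hssub hullfin
      have h2 : (hull ∩ L).ncard ≤ N + 1 := hN
      exact Nat.lt_succ_iff.mp (lt_of_lt_of_le h1 h2)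
    -- The enlarged family `C'`.
    set C' := Function.update C i (convexHull ℝ (insert y (C i ∩ Q))) with hC'def
    have hC'conv : ∀ j, Convex ℝ (C' j) := by
      intro j
      by_cases h : j = i
      · subst h
        rw [hC'def, Function.update_self]
        exact convex_convexHull ℝ _
      · rw [hC'def, Function.update_of_ne h]
        exact hC j
    have hx'lat : ∀ l j, ∃ q : ℤ, x' l j = (q : ℝ) := by
      intro l j
      by_cases h : l = k
      · subst h
        rw [hx'def, Function.update_self]
        exact hylat j
      · rw [hx'def, Function.update_of_ne h]
        exact ⟨m l j, hm l j⟩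
    have hx'valid : ∀ l j, l ≠ j → x' l ∈ C' j := by
      intro l j hlj
      by_cases hji : j = i
      · rw [hC'def, hji, Function.update_self]
        by_cases hlk : l = k
        · rw [hx'def, hlk, Function.update_self]
          exact subset_convexHull ℝ _ (mem_insert _ _)
        · rw [hx'def, Function.update_of_ne hlk]
          have hmem : x l ∈ Set.range x' := ⟨l, Function.update_of_ne hlk _ _⟩
          have : x l ∈ insert y (C i ∩ Q) :=
            mem_insert_of_mem _ ⟨hx l i (hji ▸ hlj), subset_convexHull ℝ (Set.range x') hmem⟩
          exact subset_convexHull ℝ _ this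
      · rw [hC'def, Function.update_of_ne hji]
        by_cases hlk : l = k
        · rw [hx'def, hlk, Function.update_self]
          exact hyC j hji (fun h => hlj (hlk.trans h.symm))
        · rw [hx'def, Function.update_of_ne hlk]
          exact hx l j hlj
    obtain ⟨z, hzlat, hz⟩ := ih C' x' hC'conv hx'lat hx'valid hNQ
    by_cases hzi : z ∈ C i
    · refine ⟨z, hzlat, fun j => ?_⟩
      by_cases h : j = i
      · exact h ▸ hzi
      · have := hz j
        rwa [hC'def, Function.update_of_ne h] at this
    · -- Decompose `z` as a point of the segment from `y` to `C i ∩ Q`.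
      have hl0 : ∃ l0, l0 ≠ i ∧ l0 ≠ k := by
        by_contra h
        push_neg at h
        have hsub : (Finset.univ : Finset ι) ⊆ {i, k} := by
          intro l _
          by_cases hli : l = i
          · simp [hli]
          · simp [h l hli]
        have h1 : Fintype.card ι ≤ 2 := by
          calc Fintype.card ι = (Finset.univ : Finset ι).card := rfl
            _ ≤ ({i, k} : Finset ι).card := Finset.card_le_card hsub
            _ ≤ 2 := Finset.card_insert_le _ _ |>.trans (by simp)
        have h2 : 2 ≤ 2 ^ d := by
          calc 2 = 2 ^ 1 := (pow_one 2).symm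
            _ ≤ 2 ^ d := Nat.pow_le_pow_right (by norm_num) hd
        exact absurd (lt_of_le_of_lt h2 hcard) (not_lt.mpr h1)
      obtain ⟨l0, hl0i, hl0k⟩ := hl0
      have hl0mem : x l0 ∈ Set.range x' := ⟨l0, Function.update_of_ne hl0k _ _⟩
      have hCQne : (C i ∩ Q).Nonempty :=
        ⟨x l0, hx l0 i hl0i, subset_convexHull ℝ (Set.range x') hl0mem⟩
      have hzC' : z ∈ convexHull ℝ (insert y (C i ∩ Q)) := by
        have := hz i
        rwa [hC'def, Function.update_self] at this
      rw [convexHull_insert hCQne, mem_convexJoin] at hzC'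
      obtain ⟨y₀, hy₀, w, hw, hseg⟩ := hzC'
      rw [mem_singleton_iff] at hy₀
      subst hy₀
      have hwCQ : w ∈ C i ∩ Q := by
        rwa [((hC i).inter (convex_convexHull ℝ _)).convexHull_eq] at hw
      obtain ⟨μ, ν, hμ, hν, hμν, hcombz⟩ := hseg
      have hyQ : y ∈ Q := subset_convexHull ℝ _ (by rw [hrange']; exact mem_insert _ _)
      have hzQ : z ∈ Q := by
        rw [← hcombz]
        exact (convex_convexHull ℝ _) hyQ hwCQ.2 hμ hν hμν
      -- The rebuilt tuple `x''`.
      set x'' := Function.update x i z with hx''def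
      have hrange'' : Set.range x'' = insert z (x '' {l | l ≠ i}) := range_update x i z
      have hx''lat : ∀ l j, ∃ q : ℤ, x'' l j = (q : ℝ) := by
        intro l j
        by_cases h : l = i
        · subst h
          rw [hx''def, Function.update_self]
          exact hzlat j
        · rw [hx''def, Function.update_of_ne h]
          exact ⟨m l j, hm l j⟩
      have hx''valid : ∀ l j, l ≠ j → x'' l ∈ C j := by
        intro l j hlj
        by_cases hli : l = i
        · subst hli
          rw [hx''def, Function.update_self]
          have := hz j
          rwa [hC'def, Function.update_of_ne (fun h => hlj h.symm)] at this
        · rw [hx''def, Function.update_of_ne hli]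
          exact hx l j hlj
      have hQ''sub : convexHull ℝ (Set.range x'') ⊆ hull := by
        apply convexHull_min ?_ (convex_convexHull ℝ _)
        rw [hrange'']
        rintro p (rfl | ⟨l, _, rfl⟩)
        · exact hQsub hzQ
        · exact subset_convexHull ℝ _ (Set.mem_range_self l)
      have hne_i : (x '' {l | l ≠ i}).Nonempty := ⟨x k, k, hik.symm, rfl⟩
      have hxiQ'' : x i ∉ convexHull ℝ (Set.range x'') := by
        intro hmem
        rw [hrange'', convexHull_insert hne_i, mem_convexJoin] at hmem
        obtain ⟨z₀, hz₀, w₂, hw₂, hseg₂⟩ := hmem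
        rw [mem_singleton_iff] at hz₀
        subst hz₀
        have hw₂Ci : w₂ ∈ C i := convexHull_min (himage_sub i) (hC i) hw₂
        obtain ⟨a, b, ha, hb, hab, hcomb₂⟩ := hseg₂
        refine hgood i (combo_mem (hC i) (hx k i hik.symm) hwCQ.1 hw₂Ci
          (a := a * μ / 2) (b := a * ν) (c := b) (T := 1 - a * μ / 2)
          (div_nonneg (mul_nonneg ha hμ) (by norm_num)) (mul_nonneg ha hν) hb
          (by linear_combination a * hμν + hab)
          (by nlinarith [mul_nonneg (show (0:ℝ) ≤ 1 - a by linarith) hμ]) ?_)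
        intro j
        have e1 := congrFun hcombz j
        have e2 := congrFun hcomb₂ j
        simp only [Pi.add_apply, Pi.smul_apply, smul_eq_mul] at e1 e2
        have e3 := hyj j
        rw [e3] at e1
        linear_combination (-1 : ℝ) * e2 - a * e1
      have hxiL : x i ∈ hull ∩ L :=
        ⟨subset_convexHull ℝ (Set.range x) (Set.mem_range_self i), fun j => ⟨m i j, hm i j⟩⟩
      have hssub'' : (convexHull ℝ (Set.range x'') ∩ L) ⊂ (hull ∩ L) := by
        rw [Set.ssubset_def]
        constructor
        · exact inter_subset_inter_left _ hQ''sub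
        · intro hsup
          exact hxiQ'' (hsup hxiL).1
      have hN'' : (convexHull ℝ (Set.range x'') ∩ L).ncard ≤ N := by
        have h1 := Set.ncard_lt_ncard hssub'' hullfin
        have h2 : (hull ∩ L).ncard ≤ N + 1 := hN
        exact Nat.lt_succ_iff.mp (lt_of_lt_of_le h1 h2)
      exact ih C x'' hC hx''lat hx''valid hN''

/-- Doignon's theorem: if every subfamily of at most `2^d` members of a finite family
of convex sets in `ℝ^d` has a common point in the integer lattice `ℤ^d`, then the whole
family has a common point in `ℤ^d`. -/
theorem doignon {d : ℕ} (hd : 1 ≤ d) {ι : Type*} [Fintype ι]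
    (F : ι → Set (Fin d → ℝ)) (hconv : ∀ i, Convex ℝ (F i))
    (hhelly : ∀ P : Finset ι, P.card ≤ 2 ^ d →
      ∃ x : Fin d → ℝ, (∀ j, ∃ m : ℤ, x j = (m : ℝ)) ∧ ∀ i ∈ P, x ∈ F i) :
    ∃ x : Fin d → ℝ, (∀ j, ∃ m : ℤ, x j = (m : ℝ)) ∧ ∀ i, x ∈ F i := by
  classical
  have key : ∀ P : Finset ι,
      ∃ x : Fin d → ℝ, (∀ j, ∃ m : ℤ, x j = (m : ℝ)) ∧ ∀ i ∈ P, x ∈ F i := by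
    intro P
    induction P using Finset.strongInduction with
    | H P ihP =>
      by_cases hsmall : P.card ≤ 2 ^ d
      · exact hhelly P hsmall
      · push_neg at hsmall
        -- for each i ∈ P, a lattice point in the intersection of the others
        have hpts : ∀ i : ↥P, ∃ x : Fin d → ℝ,
            (∀ j, ∃ m : ℤ, x j = (m : ℝ)) ∧ ∀ l ∈ P.erase i.1, x ∈ F l := by
          intro i
          exact ihP (P.erase i.1) (Finset.erase_ssubset i.2)
        choose xp hxplat hxpmem using hpts
        have hcard : 2 ^ d < Fintype.card ↥P := by
          rwa [Fintype.card_coe]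
        have hvalid : ∀ l j : ↥P, l ≠ j → xp l ∈ F j.1 := by
          intro l j hlj
          exact hxpmem l j.1 (Finset.mem_erase.mpr ⟨fun h => hlj (Subtype.ext (h ▸ rfl))
            |>.elim, j.2⟩)
        obtain ⟨p, hplat, hp⟩ := doignon_core hd hcard
          ((convexHull ℝ (Set.range xp) ∩
            {q : Fin d → ℝ | ∀ j, ∃ m : ℤ, q j = (m : ℝ)}).ncard)
          (fun i : ↥P => F i.1) xp (fun i => hconv i.1) (fun l j => hxplat l j)
          hvalid le_rfl
        exact ⟨p, hplat, fun i hi => hp ⟨i, hi⟩⟩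
  obtain ⟨x, hlat, hx⟩ := key Finset.univ
  exact ⟨x, hlat, fun i => hx i (Finset.mem_univ i)⟩
end
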